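/- arXiv:0707.1095 — 3 statements merged into one kernel-verified Lean document; each statement's English description precedes it below -/
import Mathlib

section
/- Let D be an oriented graph of order n in which every vertex has in-degree exactly 2 and which has an out-branching. If D has no out-tree with k leaves, then n ≤ 4k³. -/
open Relation

/-- `T` is an out-branching (spanning out-tree) of the digraph `A` rooted at `r`. -/
def IsOutBranching {V : Type*} (A : V → V → Prop) (r : V) (T : V → V → Prop) : Prop :=
  (∀ u v, T u v → A u v) ∧
  (∀ u, ¬ T u r) ∧
  (∀ v, v ≠ r → ∃! u, T u v) ∧
  (∀ v, Relation.ReflTransGen T r v)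

/-- Number of leaves (out-degree zero vertices) of a spanning tree relation `T`. -/
noncomputable def leavesCount {V : Type*} (T : V → V → Prop) : ℕ :=
  {v : V | ∀ u, ¬ T v u}.ncard

/-- `T` is an out-tree of digraph `A` on vertex set `S`, rooted at `r`. -/
def IsOutTree {V : Type*} (A : V → V → Prop) (S : Set V) (r : V) (T : V → V → Prop) : Prop :=
  r ∈ S ∧
  (∀ u v, T u v → A u v ∧ u ∈ S ∧ v ∈ S) ∧
  (∀ u, ¬ T u r) ∧
  (∀ v ∈ S, v ≠ r → ∃! u, T u v) ∧
  (∀ v ∈ S, Relation.ReflTransGen T r v)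

/-- Number of leaves of an out-tree with vertex set `S` and arc relation `T`. -/
noncomputable def treeLeaves {V : Type*} (S : Set V) (T : V → V → Prop) : ℕ :=
  {v : V | v ∈ S ∧ ∀ u, ¬ T v u}.ncard

/-- A rooted (directed) tree on the whole vertex type. -/
def IsRootedTree {V : Type*} (T : V → V → Prop) (r : V) : Prop :=
  (∀ u, ¬ T u r) ∧
  (∀ v, v ≠ r → ∃! u, T u v) ∧
  (∀ v, Relation.ReflTransGen T r v)

/-- Out-degree of a vertex in a digraph/tree relation. -/
noncomputable def outDeg {V : Type*} (T : V → V → Prop) (v : V) : ℕ :=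
  {u : V | T v u}.ncard

/-- The underlying undirected simple graph of a digraph. -/
def UN {V : Type*} (A : V → V → Prop) : SimpleGraph V where
  Adj u v := u ≠ v ∧ (A u v ∨ A v u)
  symm := ⟨fun u v h => ⟨Ne.symm h.1, h.2.symm⟩⟩
  loopless := ⟨fun v h => h.1 rfl⟩

/-- The pathwidth of `G` is at most `w`: there is a path decomposition of width `≤ w`. -/
def pwLE {V : Type*} (G : SimpleGraph V) (w : ℕ) : Prop :=
  ∃ (s : ℕ) (X : Fin s → Finset V),
    (∀ v, ∃ i, v ∈ X i) ∧
    (∀ u v, G.Adj u v → ∃ i, u ∈ X i ∧ v ∈ X i) ∧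
    (∀ i j k : Fin s, i ≤ j → j ≤ k → ∀ v, v ∈ X i → v ∈ X k → v ∈ X j) ∧
    (∀ i, (X i).card ≤ w + 1)

/-- The strong component of the vertex `v` in digraph `A`. -/
def strongComp {V : Type*} (A : V → V → Prop) (v : V) : Set V :=
  {u : V | Relation.ReflTransGen A u v ∧ Relation.ReflTransGen A v u}

/-- Maximum number of leaves over all out-trees of `A` (ℓ(D)). -/
noncomputable def maxLeafOT {V : Type*} (A : V → V → Prop) : ℕ :=
  sSup {l : ℕ | ∃ (S : Set V) (r : V) (T : V → V → Prop), IsOutTree A S r T ∧ treeLeaves S T = l}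

/-- Maximum number of leaves over all out-branchings of `A` (ℓ_s(D)), `0` if none exists. -/
noncomputable def maxLeafOB {V : Type*} (A : V → V → Prop) : ℕ :=
  sSup {l : ℕ | ∃ (r : V) (T : V → V → Prop), IsOutBranching A r T ∧ leavesCount T = l}

/-- `T` is a 1-arc-exchange optimal out-branching of `A` rooted at `r`. -/
def OneAEOptimal {V : Type*} (A : V → V → Prop) (r : V) (T : V → V → Prop) : Prop :=
  IsOutBranching A r T ∧
  ∀ f x : V × V, T f.1 f.2 → A x.1 x.2 → ¬ T x.1 x.2 →
    IsOutBranching A r (fun a b => (T a b ∧ (a, b) ≠ f) ∨ (a, b) = x) →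
    leavesCount (fun a b => (T a b ∧ (a, b) ≠ f) ∨ (a, b) = x) ≤ leavesCount T

/-- Vertex separation of `G` is at most `k`, witnessed by some linear ordering. -/
def vsLE {V : Type*} [Fintype V] (G : SimpleGraph V) (k : ℕ) : Prop :=
  ∃ σ : Fin (Fintype.card V) ≃ V,
    ∀ j : Fin (Fintype.card V),
      {i : Fin (Fintype.card V) | i ≤ j ∧ ∃ i', j < i' ∧ G.Adj (σ i) (σ i')}.ncard ≤ k

set_option maxHeartbeats 1000000

namespace Stmt5Aux

attribute [local instance] Classical.propDecidable

variable {V : Type*} [Fintype V] (A : V → V → Prop) (r : V) (T : V → V → Prop) (k : ℕ)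

/-- Generic construction: a "parent system" on a finite set `S` rooted at `x`,
with a measure `μ` decreasing towards... (parents have smaller `μ`), yields an
out-tree; hence any witness set `W` of childless vertices has `< k` elements. -/
theorem parentSys
    (hno : ∀ (S : Set V) (r : V) (T : V → V → Prop), IsOutTree A S r T → treeLeaves S T < k)
    (S : Set V) (x : V) (p : V → V) (μ : V → ℕ)
    (hx : x ∈ S)
    (hp : ∀ v ∈ S, v ≠ x → p v ∈ S ∧ A (p v) v ∧ μ (p v) < μ v)
    (W : Set V) (hWS : W ⊆ S)
    (hW : ∀ w ∈ W, ∀ b ∈ S, b ≠ x → p b ≠ w) :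
    W.ncard < k := by
  set Tp : V → V → Prop := fun a b => b ∈ S ∧ b ≠ x ∧ a = p b with hTp
  have hreach : ∀ n, ∀ v ∈ S, μ v ≤ n → Relation.ReflTransGen Tp x v := by
    intro n
    induction n with
    | zero =>
      intro v hv hμ
      by_cases hvx : v = x
      · subst hvx; exact Relation.ReflTransGen.refl
      · exact absurd hμ (by have := (hp v hv hvx).2.2; omega)
    | succ n ih =>
      intro v hv hμ
      by_cases hvx : v = x
      · subst hvx; exact Relation.ReflTransGen.refl
      · obtain ⟨hpS, _, hμlt⟩ := hp v hv hvx
        exact (ih (p v) hpS (by omega)).tail ⟨hv, hvx, rfl⟩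
  have htree : IsOutTree A S x Tp := by
    refine ⟨hx, ?_, ?_, ?_, ?_⟩
    · rintro u v ⟨hv, hvx, rfl⟩
      exact ⟨(hp v hv hvx).2.1, (hp v hv hvx).1, hv⟩
    · rintro u ⟨_, hxx, _⟩; exact hxx rfl
    · intro v hv hvx
      exact ⟨p v, ⟨hv, hvx, rfl⟩, fun u hu => hu.2.2⟩
    · intro v hv
      exact hreach (μ v) v hv le_rfl
  have hle : W.ncard ≤ treeLeaves S Tp := by
    apply Set.ncard_le_ncard _ (Set.toFinite _)
    intro w hw
    refine ⟨hWS hw, ?_⟩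
    rintro u ⟨huS, hux, hupar⟩
    exact hW w hw u huS hux hupar.symm
  exact lt_of_le_of_lt hle (hno S x Tp htree)

/-- `k ≥ 2` as soon as there exists any vertex. -/
theorem k_ge_two
    (hno : ∀ (S : Set V) (r : V) (T : V → V → Prop), IsOutTree A S r T → treeLeaves S T < k)
    (v : V) : 2 ≤ k := by
  have h1 : ({v} : Set V).ncard < k := by
    refine parentSys A k hno {v} v id (fun _ => 0) rfl ?_ {v} subset_rfl ?_
    · intro u hu hne; exact absurd hu hne
    · intro w _ b hb hbne; exact absurd hb hbne
  simp [Set.ncard_singleton] at h1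
  omega

/-- Every out-degree is `< k` (star out-tree). -/
theorem outdeg_lt
    (hor : ∀ u v : V, A u v → ¬ A v u)
    (hno : ∀ (S : Set V) (r : V) (T : V → V → Prop), IsOutTree A S r T → treeLeaves S T < k)
    (x : V) : {y | A x y}.ncard < k := by
  have hxx : x ∉ {y | A x y} := fun h => hor x x h h
  refine parentSys A k hno (insert x {y | A x y}) x (fun _ => x)
    (fun v => if v = x then 0 else 1) (Set.mem_insert _ _) ?_ {y | A x y}
    (Set.subset_insert _ _) ?_
  · intro v hv hvx
    rcases hv with h | h
    · exact absurd h hvx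
    · exact ⟨Set.mem_insert _ _, h, by simp [hvx]⟩
  · intro w hw b _ _ h
    rw [← h] at hw; exact hxx hw

/-! ### Parent and depth in the fixed out-branching `T` -/

noncomputable def par (v : V) : V := if h : ∃ u, T u v then h.choose else v

theorem par_spec (hT : IsOutBranching A r T) {v : V} (hv : v ≠ r) : T (par T v) v := by
  have h : ∃ u, T u v := (hT.2.2.1 v hv).exists
  rw [par, dif_pos h]
  exact h.choose_spec

theorem par_eq (hT : IsOutBranching A r T) {u v : V} (h : T u v) : u = par T v := by
  have hv : v ≠ r := fun e => hT.2.1 u (e ▸ h)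
  exact (hT.2.2.1 v hv).unique h (par_spec A r T hT hv)

noncomputable def dep (v : V) : ℕ :=
  if h : ∃ m, (par T)^[m] v = r then Nat.find h else 0

theorem dep_ex (hT : IsOutBranching A r T) (v : V) : ∃ m, (par T)^[m] v = r := by
  have key : ∀ w, Relation.ReflTransGen T r w → ∃ m, (par T)^[m] w = r := by
    intro w hw
    induction hw with
    | refl => exact ⟨0, rfl⟩
    | @tail b c hb harc ih =>
      obtain ⟨m, hm⟩ := ih
      refine ⟨m + 1, ?_⟩
      rw [Function.iterate_succ_apply, ← par_eq A r T hT harc]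
      exact hm
  exact key v (hT.2.2.2 v)

theorem dep_iter (hT : IsOutBranching A r T) (v : V) : (par T)^[dep r T v] v = r := by
  rw [dep, dif_pos (dep_ex A r T hT v)]
  exact Nat.find_spec (dep_ex A r T hT v)

theorem dep_min (hT : IsOutBranching A r T) (v : V) {m : ℕ} (hm : (par T)^[m] v = r) :
    dep r T v ≤ m := by
  rw [dep, dif_pos (dep_ex A r T hT v)]
  exact Nat.find_min' _ hm

theorem dep_r (hT : IsOutBranching A r T) : dep r T r = 0 :=
  Nat.le_zero.mp (dep_min A r T hT r (m := 0) rfl)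

theorem dep_pos (hT : IsOutBranching A r T) {v : V} (hv : v ≠ r) : 0 < dep r T v := by
  rcases Nat.eq_zero_or_pos (dep r T v) with h | h
  · have := dep_iter A r T hT v
    rw [h] at this
    exact absurd this hv
  · exact h

theorem ne_r_of_dep_pos (hT : IsOutBranching A r T) {v : V} (hv : 0 < dep r T v) : v ≠ r := by
  intro e; rw [e, dep_r A r T hT] at hv; omega

theorem dep_par (hT : IsOutBranching A r T) {v : V} (hv : v ≠ r) :
    dep r T v = dep r T (par T v) + 1 := by
  have h1 : dep r T v ≤ dep r T (par T v) + 1 := by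
    apply dep_min A r T hT
    rw [Function.iterate_succ_apply]
    exact dep_iter A r T hT (par T v)
  have h0 : 0 < dep r T v := dep_pos A r T hT hv
  have h2 : dep r T (par T v) ≤ dep r T v - 1 := by
    apply dep_min A r T hT
    have := dep_iter A r T hT v
    rwa [show dep r T v = (dep r T v - 1) + 1 by omega, Function.iterate_succ_apply] at this
  omega

theorem dep_arc (hT : IsOutBranching A r T) {u v : V} (h : T u v) :
    dep r T v = dep r T u + 1 := by
  have hv : v ≠ r := fun e => hT.2.1 u (e ▸ h)
  rw [dep_par A r T hT hv, ← par_eq A r T hT h]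

theorem dep_le_of_rtg (hT : IsOutBranching A r T) {a b : V}
    (h : Relation.ReflTransGen T a b) : dep r T a ≤ dep r T b := by
  induction h with
  | refl => exact le_rfl
  | @tail c d hc harc ih =>
    have := dep_arc A r T hT harc
    omega

theorem dep_lt_of_rtg (hT : IsOutBranching A r T) {a b : V}
    (h : Relation.ReflTransGen T a b) (hne : a ≠ b) : dep r T a < dep r T b := by
  rcases h.cases_head with h | ⟨c, hac, hcb⟩
  · exact absurd h hne
  · have h1 := dep_arc A r T hT hac
    have h2 := dep_le_of_rtg A r T hT hcb
    omega

theorem rtg_antisymm (hT : IsOutBranching A r T) {a b : V}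
    (h1 : Relation.ReflTransGen T a b) (h2 : Relation.ReflTransGen T b a) : a = b := by
  by_contra hne
  have := dep_lt_of_rtg A r T hT h1 hne
  have := dep_lt_of_rtg A r T hT h2 (Ne.symm hne)
  omega

theorem dep_lt_card (hT : IsOutBranching A r T) (v : V) : dep r T v < Fintype.card V := by
  have key : ∀ i ≤ dep r T v, dep r T ((par T)^[i] v) = dep r T v - i := by
    intro i
    induction i with
    | zero => intro _; simp
    | succ i ih =>
      intro hi
      have h1 : dep r T ((par T)^[i] v) = dep r T v - i := ih (by omega)
      have hpos : 0 < dep r T ((par T)^[i] v) := by omega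
      have hne : (par T)^[i] v ≠ r := ne_r_of_dep_pos A r T hT hpos
      rw [Function.iterate_succ_apply']
      have := dep_par A r T hT hne
      omega
  have hinj : Set.InjOn (fun i => (par T)^[i] v) ↑(Finset.range (dep r T v + 1)) := by
    intro i hi j hj hij
    simp only [Finset.coe_range, Set.mem_Iio] at hi hj
    have h1 := key i (by omega)
    have h2 := key j (by omega)
    simp only [] at hij
    rw [hij] at h1
    omega
  have := Finset.card_le_card_of_injOn (fun i => (par T)^[i] v)
    (fun i _ => Finset.mem_univ _) hinj
  simpa using this

/-! ### The second in-neighbour -/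

noncomputable def sec (v : V) : V :=
  if h : ∃ y, A y v ∧ y ≠ par T v ∧ (∀ u, A u v → u = par T v ∨ u = y) then h.choose else v

theorem sec_ex (hT : IsOutBranching A r T) (hdeg : ∀ v : V, {u : V | A u v}.ncard = 2)
    {v : V} (hv : v ≠ r) :
    ∃ y, A y v ∧ y ≠ par T v ∧ (∀ u, A u v → u = par T v ∨ u = y) := by
  obtain ⟨a, b, hab, hs⟩ := Set.ncard_eq_two.mp (hdeg v)
  have hpar : par T v ∈ {u : V | A u v} := hT.1 _ _ (par_spec A r T hT hv)
  rw [hs] at hpar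
  have hmemset : ∀ u, A u v ↔ u ∈ ({a, b} : Set V) := by
    intro u; rw [← hs]; rfl
  rcases hpar with hpa | hpb
  · refine ⟨b, ?_, ?_, ?_⟩
    · rw [hmemset]; right; rfl
    · rw [← hpa] at hab; exact fun e => hab e.symm
    · intro u hu
      rcases (hmemset u).mp hu with h | h
      · left; rw [← hpa] at h; exact h
      · right; exact h
  · refine ⟨a, ?_, ?_, ?_⟩
    · rw [hmemset]; left; rfl
    · rw [← hpb] at hab; exact fun e => hab e
    · intro u hu
      rcases (hmemset u).mp hu with h | h
      · right; exact h
      · left; rw [← hpb] at h; exact h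

theorem sec_spec (hT : IsOutBranching A r T) (hdeg : ∀ v : V, {u : V | A u v}.ncard = 2)
    {v : V} (hv : v ≠ r) :
    A (sec A T v) v ∧ sec A T v ≠ par T v ∧
      (∀ u, A u v → u = par T v ∨ u = sec A T v) := by
  have h := sec_ex A r T hT hdeg hv
  rw [sec, dif_pos h]
  exact h.choose_spec

theorem sec_arc (hT : IsOutBranching A r T) (hdeg : ∀ v : V, {u : V | A u v}.ncard = 2)
    {v : V} (hv : v ≠ r) : A (sec A T v) v :=
  (sec_spec A r T hT hdeg hv).1

theorem sec_ne_self (hT : IsOutBranching A r T) (hor : ∀ u v : V, A u v → ¬ A v u)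
    (hdeg : ∀ v : V, {u : V | A u v}.ncard = 2)
    {v : V} (hv : v ≠ r) : sec A T v ≠ v := by
  intro e
  have h := sec_arc A r T hT hdeg hv
  rw [e] at h
  exact hor v v h h

theorem sec_not_T (hT : IsOutBranching A r T) (hdeg : ∀ v : V, {u : V | A u v}.ncard = 2)
    {v : V} (hv : v ≠ r) : ¬ T (sec A T v) v := by
  intro h
  exact (sec_spec A r T hT hdeg hv).2.1 (par_eq A r T hT h)

/-! ### The arc-exchange (swap) lemma -/

theorem second_is_leaf (hT : IsOutBranching A r T)
    (hmax : ∀ (r' : V) (T' : V → V → Prop), IsOutBranching A r' T' →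
      leavesCount T' ≤ leavesCount T)
    (hdeg : ∀ v : V, {u : V | A u v}.ncard = 2)
    {v : V} (hv : v ≠ r)
    (hod : outDeg T (par T v) = 1)
    (hnd : ¬ Relation.ReflTransGen T v (sec A T v)) :
    ∀ u, ¬ T (sec A T v) u := by
  by_contra hcon
  push_neg at hcon
  obtain ⟨w₀, hw₀⟩ := hcon
  set y := sec A T v with hy
  set p := par T v with hp
  have hyA : A y v := sec_arc A r T hT hdeg hv
  have hyp : y ≠ p := (sec_spec A r T hT hdeg hv).2.1
  have hyT : ¬ T y v := sec_not_T A r T hT hdeg hv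
  have hTpv : T p v := par_spec A r T hT hv
  have hchild : {u : V | T p u} = {v} := by
    obtain ⟨a, ha⟩ := Set.ncard_eq_one.mp hod
    have hva : v ∈ {u : V | T p u} := hTpv
    rw [ha] at hva ⊢
    rw [Set.mem_singleton_iff] at hva
    rw [hva]
  set T' : V → V → Prop := fun a b => (T a b ∧ (a, b) ≠ (p, v)) ∨ (a, b) = (y, v) with hT'
  have hbr' : IsOutBranching A r T' := by
    refine ⟨?_, ?_, ?_, ?_⟩
    · rintro a b (⟨h, _⟩ | h)
      · exact hT.1 a b h
      · rw [Prod.ext_iff] at h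
        obtain ⟨h1, h2⟩ := h
        simp only at h1 h2
        rw [h1, h2]; exact hyA
    · rintro u (⟨h, _⟩ | h)
      · exact hT.2.1 u h
      · rw [Prod.ext_iff] at h
        exact hv h.2.symm
    · intro b hb
      by_cases hbv : b = v
      · subst hbv
        refine ⟨y, Or.inr rfl, ?_⟩
        rintro u (⟨h, hne⟩ | h)
        · exfalso
          apply hne
          have hup : u = p := by rw [hp]; exact par_eq A r T hT h
          rw [hup]
        · rw [Prod.ext_iff] at h; exact h.1
      · refine ⟨par T b, Or.inl ⟨par_spec A r T hT hb, ?_⟩, ?_⟩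
        · intro e; rw [Prod.ext_iff] at e; exact hbv e.2
        · rintro u (⟨h, _⟩ | h)
          · exact (par_eq A r T hT h).symm ▸ rfl
          · rw [Prod.ext_iff] at h; exact absurd h.2 hbv
    · have reach1 : ∀ b, Relation.ReflTransGen T r b →
          ¬ Relation.ReflTransGen T v b → Relation.ReflTransGen T' r b := by
        intro b hb
        induction hb with
        | refl => intro _; exact Relation.ReflTransGen.refl
        | @tail c d hc harc ih =>
          intro hnb
          have hnc : ¬ Relation.ReflTransGen T v c := fun h => hnb (h.tail harc)
          have hdv : d ≠ v := fun e => hnb (e ▸ Relation.ReflTransGen.refl)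
          refine (ih hnc).tail (Or.inl ⟨harc, ?_⟩)
          intro e; rw [Prod.ext_iff] at e; exact hdv e.2
      have hry' : Relation.ReflTransGen T' r y := reach1 y (hT.2.2.2 y) hnd
      have hrv' : Relation.ReflTransGen T' r v := hry'.tail (Or.inr rfl)
      have reach2 : ∀ b, Relation.ReflTransGen T v b → Relation.ReflTransGen T' v b := by
        intro b hb
        induction hb with
        | refl => exact Relation.ReflTransGen.refl
        | @tail c d hc harc ih =>
          have hdv : d ≠ v := by
            intro e
            subst e
            have hcp : c = p := by rw [par_eq A r T hT harc, ← hp]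
            rw [hcp] at hc
            have h1 := dep_le_of_rtg A r T hT hc
            have h2 := dep_arc A r T hT hTpv
            omega
          refine ih.tail (Or.inl ⟨harc, ?_⟩)
          intro e; rw [Prod.ext_iff] at e; exact hdv e.2
      intro b
      by_cases hvb : Relation.ReflTransGen T v b
      · exact hrv'.trans (reach2 b hvb)
      · exact reach1 b (hT.2.2.2 b) hvb
  have hsub : insert p {w : V | ∀ u, ¬ T w u} ⊆ {w : V | ∀ u, ¬ T' w u} := by
    rintro w (rfl | hw)
    · rintro u (⟨h, hne⟩ | h)
      · have : u ∈ {u : V | T p u} := h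
        rw [hchild, Set.mem_singleton_iff] at this
        exact hne (by rw [this])
      · rw [Prod.ext_iff] at h
        exact hyp h.1.symm
    · rintro u (⟨h, _⟩ | h)
      · exact hw u h
      · rw [Prod.ext_iff] at h
        simp only at h
        exact hw w₀ (h.1 ▸ hw₀)
  have hpnot : p ∉ {w : V | ∀ u, ¬ T w u} := fun h => h v hTpv
  have h1 : leavesCount T + 1 ≤ leavesCount T' := by
    have e1 : (insert p {w : V | ∀ u, ¬ T w u}).ncard
        = {w : V | ∀ u, ¬ T w u}.ncard + 1 :=
      Set.ncard_insert_of_notMem hpnot (Set.toFinite _)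
    have e2 : (insert p {w : V | ∀ u, ¬ T w u}).ncard ≤ {w : V | ∀ u, ¬ T' w u}.ncard :=
      Set.ncard_le_ncard hsub (Set.toFinite _)
    unfold leavesCount
    omega
  have h2 := hmax r T' hbr'
  omega
/-! ### The descent step and its forest -/

def caseD (v : V) : Prop := v ≠ r ∧ Relation.ReflTransGen T v (sec A T v)

noncomputable def Fstep (v : V) : V := if caseD A r T v then sec A T v else v

noncomputable def rt (v : V) : V := (Fstep A r T)^[Fintype.card V] v

theorem dep_sec (hT : IsOutBranching A r T) (hor : ∀ u v : V, A u v → ¬ A v u)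
    (hdeg : ∀ v : V, {u : V | A u v}.ncard = 2)
    {v : V} (h : caseD A r T v) : dep r T v + 2 ≤ dep r T (sec A T v) := by
  obtain ⟨hv, hrtg⟩ := h
  have hne : v ≠ sec A T v := (sec_ne_self A r T hT hor hdeg hv).symm
  rcases hrtg.cases_head with h | ⟨c, hvc, hcy⟩
  · exact absurd h hne
  · have h1 := dep_arc A r T hT hvc
    have h2 := dep_le_of_rtg A r T hT hcy
    rcases eq_or_ne c (sec A T v) with hc | hc
    · subst hc
      exact absurd (sec_arc A r T hT hdeg hv) (hor _ _ (hT.1 _ _ hvc))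
    · have := dep_lt_of_rtg A r T hT hcy hc
      omega

theorem Fstep_ne_r (hT : IsOutBranching A r T) (hor : ∀ u v : V, A u v → ¬ A v u)
    (hdeg : ∀ v : V, {u : V | A u v}.ncard = 2)
    {v : V} (hv : v ≠ r) : Fstep A r T v ≠ r := by
  rw [Fstep]
  split
  · rename_i h
    have := dep_sec A r T hT hor hdeg h
    exact ne_r_of_dep_pos A r T hT (by omega)
  · exact hv

theorem iter_ne_r (hT : IsOutBranching A r T) (hor : ∀ u v : V, A u v → ¬ A v u)
    (hdeg : ∀ v : V, {u : V | A u v}.ncard = 2)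
    {v : V} (hv : v ≠ r) (n : ℕ) : (Fstep A r T)^[n] v ≠ r := by
  induction n with
  | zero => exact hv
  | succ n ih =>
    rw [Function.iterate_succ_apply']
    exact Fstep_ne_r A r T hT hor hdeg ih

theorem rt_ne_r (hT : IsOutBranching A r T) (hor : ∀ u v : V, A u v → ¬ A v u)
    (hdeg : ∀ v : V, {u : V | A u v}.ncard = 2)
    {v : V} (hv : v ≠ r) : rt A r T v ≠ r :=
  iter_ne_r A r T hT hor hdeg hv _

theorem Fstep_fix {v : V} (h : ¬ caseD A r T v) : Fstep A r T v = v := if_neg h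

theorem rt_of_fix {v : V} (h : Fstep A r T v = v) : rt A r T v = v :=
  Function.iterate_fixed h _

theorem stable_propagate {v : V} {i : ℕ} (h : (Fstep A r T)^[i + 1] v = (Fstep A r T)^[i] v) :
    ∀ j, i ≤ j → (Fstep A r T)^[j] v = (Fstep A r T)^[i] v := by
  intro j hj
  obtain ⟨m, rfl⟩ := Nat.exists_eq_add_of_le hj
  induction m with
  | zero => rfl
  | succ m ih =>
    have heq : i + (m + 1) = (i + m) + 1 := by omega
    rw [heq, Function.iterate_succ_apply', ih (by omega)]
    rw [Function.iterate_succ_apply'] at h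
    exact h

theorem rt_stable (hT : IsOutBranching A r T) (hor : ∀ u v : V, A u v → ¬ A v u)
    (hdeg : ∀ v : V, {u : V | A u v}.ncard = 2)
    (v : V) : Fstep A r T (rt A r T v) = rt A r T v := by
  set C := Fintype.card V with hC
  by_cases hstab : ∃ i, i < C ∧ (Fstep A r T)^[i + 1] v = (Fstep A r T)^[i] v
  · obtain ⟨i, hiC, hfix⟩ := hstab
    have h1 : (Fstep A r T)^[C] v = (Fstep A r T)^[i] v :=
      stable_propagate A r T hfix C (by omega)
    rw [rt, ← hC, h1]
    rw [Function.iterate_succ_apply'] at hfix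
    exact hfix
  · push_neg at hstab
    exfalso
    have grow : ∀ i, i ≤ C → 2 * i ≤ dep r T ((Fstep A r T)^[i] v) := by
      intro i
      induction i with
      | zero => omega
      | succ i ih =>
        intro hi
        have hne := hstab i (by omega)
        rw [Function.iterate_succ_apply'] at hne ⊢
        set u := (Fstep A r T)^[i] v with hu
        have hcd : caseD A r T u := by
          by_contra hcd
          exact hne (Fstep_fix A r T hcd)
        have : Fstep A r T u = sec A T u := if_pos hcd
        rw [this]
        have := dep_sec A r T hT hor hdeg hcd
        have := ih (by omega)
        omega
    have h1 := grow C le_rfl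
    have h2 := dep_lt_card A r T hT ((Fstep A r T)^[C] v)
    have h3 : 0 < C := Fintype.card_pos_iff.mpr ⟨v⟩
    omega

theorem rt_not_caseD (hT : IsOutBranching A r T) (hor : ∀ u v : V, A u v → ¬ A v u)
    (hdeg : ∀ v : V, {u : V | A u v}.ncard = 2)
    (v : V) : ¬ caseD A r T (rt A r T v) := by
  intro h
  have h1 := rt_stable A r T hT hor hdeg v
  rw [Fstep, if_pos h] at h1
  exact sec_ne_self A r T hT hor hdeg h.1 h1

theorem rt_Fstep (hT : IsOutBranching A r T) (hor : ∀ u v : V, A u v → ¬ A v u)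
    (hdeg : ∀ v : V, {u : V | A u v}.ncard = 2)
    (v : V) : rt A r T (Fstep A r T v) = rt A r T v := by
  have : rt A r T (Fstep A r T v) = (Fstep A r T)^[Fintype.card V + 1] v := by
    rw [rt, Function.iterate_succ_apply]
  rw [this, Function.iterate_succ_apply']
  exact rt_stable A r T hT hor hdeg v

theorem rt_sec (hT : IsOutBranching A r T) (hor : ∀ u v : V, A u v → ¬ A v u)
    (hdeg : ∀ v : V, {u : V | A u v}.ncard = 2)
    {v : V} (h : caseD A r T v) : rt A r T (sec A T v) = rt A r T v := by
  have := rt_Fstep A r T hT hor hdeg v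
  rwa [Fstep, if_pos h] at this

theorem caseD_of_rt_ne {v : V} (hv : v ≠ r) (h : rt A r T v ≠ v) : caseD A r T v := by
  by_contra hcd
  exact h (rt_of_fix A r T (Fstep_fix A r T hcd))

/-! ### The trees of the descent forest -/

def QQ (x : V) : Set V := {v | v ≠ r ∧ rt A r T v = x}

def RR : Set V := {x | x ≠ r ∧ ¬ caseD A r T x}

theorem mem_QQ_self {x : V} (hx : x ∈ RR A r T) : x ∈ QQ A r T x :=
  ⟨hx.1, rt_of_fix A r T (Fstep_fix A r T hx.2)⟩

theorem rt_mem_RR (hT : IsOutBranching A r T) (hor : ∀ u v : V, A u v → ¬ A v u)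
    (hdeg : ∀ v : V, {u : V | A u v}.ncard = 2)
    {v : V} (hv : v ≠ r) : rt A r T v ∈ RR A r T :=
  ⟨rt_ne_r A r T hT hor hdeg hv, rt_not_caseD A r T hT hor hdeg v⟩

theorem caseD_of_mem_QQ {x v : V} (hx : x ∈ RR A r T) (hv : v ∈ QQ A r T x) (hne : v ≠ x) :
    caseD A r T v := by
  refine caseD_of_rt_ne A r T hv.1 ?_
  rw [hv.2]
  exact fun e => hne e.symm

theorem sec_mem_QQ (hT : IsOutBranching A r T) (hor : ∀ u v : V, A u v → ¬ A v u)
    (hdeg : ∀ v : V, {u : V | A u v}.ncard = 2)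
    {x v : V} (hv : v ∈ QQ A r T x) (hcd : caseD A r T v) : sec A T v ∈ QQ A r T x := by
  constructor
  · have := dep_sec A r T hT hor hdeg hcd
    exact ne_r_of_dep_pos A r T hT (by omega)
  · rw [rt_sec A r T hT hor hdeg hcd]
    exact hv.2

def isQleaf (u : V) : Prop := ¬ ∃ b, caseD A r T b ∧ sec A T b = u

def Qleaves (x : V) : Set V := {u | u ∈ QQ A r T x ∧ isQleaf A r T u}

/-! ### Finding a leaf below a vertex -/

noncomputable def lbF : ℕ → V → V
  | 0, u => u
  | n+1, u => if h : ∃ b, caseD A r T b ∧ sec A T b = u then lbF n h.choose else u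

theorem lbF_leaf (hT : IsOutBranching A r T) (hor : ∀ u v : V, A u v → ¬ A v u)
    (hdeg : ∀ v : V, {u : V | A u v}.ncard = 2) :
    ∀ n u, dep r T u ≤ 2 * n → isQleaf A r T (lbF A r T n u) := by
  intro n
  induction n with
  | zero =>
    intro u hu
    rw [lbF]
    rintro ⟨b, hb, hsec⟩
    have := dep_sec A r T hT hor hdeg hb
    rw [hsec] at this
    omega
  | succ n ih =>
    intro u hu
    by_cases h : ∃ b, caseD A r T b ∧ sec A T b = u
    · rw [lbF, dif_pos h]
      obtain ⟨hb, hsec⟩ := h.choose_spec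
      apply ih
      have := dep_sec A r T hT hor hdeg hb
      rw [hsec] at this
      omega
    · rw [lbF, dif_neg h]
      exact h

theorem lbF_rt (hT : IsOutBranching A r T) (hor : ∀ u v : V, A u v → ¬ A v u)
    (hdeg : ∀ v : V, {u : V | A u v}.ncard = 2) :
    ∀ n u, rt A r T (lbF A r T n u) = rt A r T u := by
  intro n
  induction n with
  | zero => intro u; rfl
  | succ n ih =>
    intro u
    by_cases h : ∃ b, caseD A r T b ∧ sec A T b = u
    · rw [lbF, dif_pos h]
      obtain ⟨hb, hsec⟩ := h.choose_spec
      rw [ih, ← rt_sec A r T hT hor hdeg hb, hsec]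
    · rw [lbF, dif_neg h]

theorem lbF_ne_r : ∀ n (u : V), u ≠ r → lbF A r T n u ≠ r := by
  intro n
  induction n with
  | zero => intro u hu; exact hu
  | succ n ih =>
    intro u hu
    by_cases h : ∃ b, caseD A r T b ∧ sec A T b = u
    · rw [lbF, dif_pos h]
      exact ih _ h.choose_spec.1.1
    · rw [lbF, dif_neg h]; exact hu

theorem lbF_reach : ∀ n (u : V), ∃ t, (Fstep A r T)^[t] (lbF A r T n u) = u := by
  intro n
  induction n with
  | zero => intro u; exact ⟨0, rfl⟩
  | succ n ih =>
    intro u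
    by_cases h : ∃ b, caseD A r T b ∧ sec A T b = u
    · rw [lbF, dif_pos h]
      obtain ⟨hb, hsec⟩ := h.choose_spec
      obtain ⟨t, ht⟩ := ih h.choose
      refine ⟨t + 1, ?_⟩
      rw [Function.iterate_succ_apply', ht, Fstep, if_pos hb, hsec]
    · rw [lbF, dif_neg h]; exact ⟨0, rfl⟩

noncomputable def lb (u : V) : V := lbF A r T (Fintype.card V) u

theorem lb_leaf (hT : IsOutBranching A r T) (hor : ∀ u v : V, A u v → ¬ A v u)
    (hdeg : ∀ v : V, {u : V | A u v}.ncard = 2) (u : V) : isQleaf A r T (lb A r T u) := by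
  apply lbF_leaf A r T hT hor hdeg
  have := dep_lt_card A r T hT u
  omega

theorem lb_mem_Qleaves (hT : IsOutBranching A r T) (hor : ∀ u v : V, A u v → ¬ A v u)
    (hdeg : ∀ v : V, {u : V | A u v}.ncard = 2) {x u : V}
    (hu : u ∈ QQ A r T x) : lb A r T u ∈ Qleaves A r T x := by
  refine ⟨⟨lbF_ne_r A r T _ u hu.1, ?_⟩, lb_leaf A r T hT hor hdeg u⟩
  rw [lb, lbF_rt A r T hT hor hdeg]
  exact hu.2
/-! ### The spine-with-pendants out-tree: descent chains are short -/

theorem spine_bound (hT : IsOutBranching A r T) (hor : ∀ u v : V, A u v → ¬ A v u)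
    (hdeg : ∀ v : V, {u : V | A u v}.ncard = 2)
    (hno : ∀ (S : Set V) (r : V) (T : V → V → Prop), IsOutTree A S r T → treeLeaves S T < k)
    {v₀ : V} {t : ℕ}
    (hgen : ∀ i ≤ t, caseD A r T ((Fstep A r T)^[i] v₀)) : t + 1 < k := by
  set u : ℕ → V := fun i => (Fstep A r T)^[i] v₀ with hu
  have hner : ∀ i ≤ t, u i ≠ r := fun i hi => (hgen i hi).1
  have hsucc : ∀ i ≤ t, u (i + 1) = sec A T (u i) := by
    intro i hi
    show (Fstep A r T)^[i+1] v₀ = _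
    rw [Function.iterate_succ_apply']
    exact if_pos (hgen i hi)
  have hstep : ∀ i ≤ t, dep r T (u i) + 2 ≤ dep r T (u (i + 1)) := by
    intro i hi
    rw [hsucc i hi]
    exact dep_sec A r T hT hor hdeg (hgen i hi)
  have hmono : ∀ d i, i + d ≤ t + 1 → dep r T (u i) + 2 * d ≤ dep r T (u (i + d)) := by
    intro d
    induction d with
    | zero => intro i _; simp
    | succ d ih =>
      intro i hi
      have h1 := ih (i + 1) (by omega)
      have h2 := hstep i (by omega)
      have : i + 1 + d = i + (d + 1) := by omega
      rw [this] at h1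
      omega
  have hdlt : ∀ i j, i < j → j ≤ t + 1 → dep r T (u i) + 2 ≤ dep r T (u j) := by
    intro i j hij hj
    have := hmono (j - i) i (by omega)
    have heq : i + (j - i) = j := by omega
    rw [heq] at this
    omega
  have uinj : ∀ i j, i ≤ t + 1 → j ≤ t + 1 → u i = u j → i = j := by
    intro i j hi hj he
    by_contra hne
    rcases Nat.lt_or_ge i j with h | h
    · have := hdlt i j h hj; rw [he] at this; omega
    · have hji : j < i := by omega
      have := hdlt j i hji hi; rw [he] at this; omega
  -- pendant children
  have hcex : ∀ i, ∃ c, i ≤ t → (T (u i) c ∧ dep r T c = dep r T (u i) + 1) := by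
    intro i
    by_cases hi : i ≤ t
    · have hcd := hgen i hi
      have hne : u i ≠ sec A T (u i) := (sec_ne_self A r T hT hor hdeg (hner i hi)).symm
      rcases hcd.2.cases_head with h | ⟨c, harc, _⟩
      · exact absurd h hne
      · exact ⟨c, fun _ => ⟨harc, dep_arc A r T hT harc⟩⟩
    · exact ⟨v₀, fun h => absurd h hi⟩
  choose c hc using hcex
  have hcdep : ∀ i ≤ t, dep r T (c i) = dep r T (u i) + 1 := fun i hi => (hc i hi).2
  have hcu : ∀ i j, i ≤ t → j ≤ t + 1 → c i ≠ u j := by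
    intro i j hi hj he
    have h1 := hcdep i hi
    rcases Nat.lt_or_ge i j with h | h
    · have := hdlt i j h hj; rw [← he] at this; omega
    · rcases Nat.eq_or_lt_of_le h with h' | h'
      · subst h'; rw [he] at h1; omega
      · have := hdlt j i h' (by omega); rw [← he] at this; omega
  have hcinj : ∀ i j, i ≤ t → j ≤ t → c i = c j → i = j := by
    intro i j hi hj he
    by_contra hne
    have h1 := hcdep i hi
    have h2 := hcdep j hj
    rcases Nat.lt_or_ge i j with h | h
    · have := hdlt i j h (by omega); rw [he] at h1; omega
    · have hji : j < i := by omega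
      have := hdlt j i hji (by omega); rw [he] at h1; omega
  -- the tree
  set S : Set V := {w | ∃ i, i ≤ t + 1 ∧ w = u i} ∪ {w | ∃ i, i ≤ t ∧ w = c i} with hS
  set x : V := u (t + 1) with hx
  set p : V → V := fun w =>
    if h : ∃ i, i ≤ t ∧ w = c i then u h.choose
    else if h' : ∃ i, i ≤ t ∧ w = u i then u (h'.choose + 1) else w with hpdef
  have hpc : ∀ i ≤ t, p (c i) = u i := by
    intro i hi
    have h : ∃ j, j ≤ t ∧ c i = c j := ⟨i, hi, rfl⟩
    rw [hpdef]
    simp only []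
    rw [dif_pos h]
    have hspec := h.choose_spec
    have : h.choose = i := (hcinj _ _ hspec.1 hi hspec.2.symm)
    rw [this]
  have hpu : ∀ i ≤ t, p (u i) = u (i + 1) := by
    intro i hi
    have hnc : ¬ ∃ j, j ≤ t ∧ u i = c j := by
      rintro ⟨j, hj, he⟩
      exact hcu j i hj (by omega) he.symm
    have h' : ∃ j, j ≤ t ∧ u i = u j := ⟨i, hi, rfl⟩
    rw [hpdef]
    simp only []
    rw [dif_neg hnc, dif_pos h']
    have hspec := h'.choose_spec
    have : h'.choose = i := (uinj _ _ (by omega) (by omega) hspec.2.symm)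
    rw [this]
  set μ : V → ℕ := fun w =>
    if h : ∃ i, i ≤ t ∧ w = c i then 2 * (t + 1 - h.choose) + 1
    else if h' : ∃ i, i ≤ t + 1 ∧ w = u i then 2 * (t + 1 - h'.choose) else 0 with hμdef
  have hμc : ∀ i ≤ t, μ (c i) = 2 * (t + 1 - i) + 1 := by
    intro i hi
    have h : ∃ j, j ≤ t ∧ c i = c j := ⟨i, hi, rfl⟩
    rw [hμdef]
    simp only []
    rw [dif_pos h]
    have hspec := h.choose_spec
    rw [hcinj _ _ hspec.1 hi hspec.2.symm]
  have hμu : ∀ i ≤ t + 1, μ (u i) = 2 * (t + 1 - i) := by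
    intro i hi
    have hnc : ¬ ∃ j, j ≤ t ∧ u i = c j := by
      rintro ⟨j, hj, he⟩
      exact hcu j i hj hi he.symm
    have h' : ∃ j, j ≤ t + 1 ∧ u i = u j := ⟨i, hi, rfl⟩
    rw [hμdef]
    simp only []
    rw [dif_neg hnc, dif_pos h']
    have hspec := h'.choose_spec
    rw [uinj _ _ hspec.1 hi hspec.2.symm]
  have hW : ({w | ∃ i, i ≤ t ∧ w = c i} : Set V).ncard < k := by
    refine parentSys A k hno S x p μ (Or.inl ⟨t + 1, le_rfl, rfl⟩) ?_ _
      (fun w hw => Or.inr hw) ?_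
    · rintro v (⟨i, hi, rfl⟩ | ⟨i, hi, rfl⟩)
      · -- spine vertex
        intro hvx
        have hit : i ≤ t := by
          rcases Nat.eq_or_lt_of_le hi with h | h
          · exact absurd rfl (h ▸ hvx)
          · omega
        refine ⟨Or.inl ⟨i + 1, by omega, hpu i hit⟩, ?_, ?_⟩
        · rw [hpu i hit, hsucc i hit]
          exact sec_arc A r T hT hdeg (hner i hit)
        · rw [hpu i hit, hμu i (by omega), hμu (i + 1) (by omega)]
          omega
      · -- pendant vertex
        intro _
        refine ⟨Or.inl ⟨i, by omega, hpc i hi⟩, ?_, ?_⟩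
        · rw [hpc i hi]
          exact hT.1 _ _ (hc i hi).1
        · rw [hpc i hi, hμu i (by omega), hμc i hi]
          omega
    · rintro w ⟨i, hi, rfl⟩ b hb hbx
      rcases hb with ⟨j, hj, rfl⟩ | ⟨j, hj, rfl⟩
      · have hjt : j ≤ t := by
          rcases Nat.eq_or_lt_of_le hj with h | h
          · exact absurd rfl (h ▸ hbx)
          · omega
        rw [hpu j hjt]
        exact fun he => hcu i (j + 1) hi (by omega) he.symm
      · rw [hpc j hj]
        exact fun he => hcu i j hi (by omega) he.symm
  have hWcard : ({w | ∃ i, i ≤ t ∧ w = c i} : Set V).ncard = t + 1 := by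
    have himg : {w | ∃ i, i ≤ t ∧ w = c i} = c '' ↑(Finset.range (t + 1)) := by
      ext w
      simp only [Set.mem_setOf_eq, Set.mem_image, Finset.coe_range, Set.mem_Iio]
      constructor
      · rintro ⟨i, hi, rfl⟩; exact ⟨i, by omega, rfl⟩
      · rintro ⟨i, hi, rfl⟩; exact ⟨i, by omega, rfl⟩
    rw [himg, Set.ncard_image_of_injOn, Set.ncard_coe_finset, Finset.card_range]
    intro i hi j hj he
    simp only [Finset.coe_range, Set.mem_Iio] at hi hj
    exact hcinj i j (by omega) (by omega) he
  omega

/-! ### Bounds on the trees of the forest -/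

theorem qleaves_lt (hT : IsOutBranching A r T) (hor : ∀ u v : V, A u v → ¬ A v u)
    (hdeg : ∀ v : V, {u : V | A u v}.ncard = 2)
    (hno : ∀ (S : Set V) (r : V) (T : V → V → Prop), IsOutTree A S r T → treeLeaves S T < k)
    {x : V} (hx : x ∈ RR A r T) : (Qleaves A r T x).ncard < k := by
  refine parentSys A k hno (QQ A r T x) x (sec A T)
    (fun v => Fintype.card V - dep r T v) (mem_QQ_self A r T hx) ?_
    (Qleaves A r T x) (fun v hv => hv.1) ?_
  · intro v hv hvx
    have hcd := caseD_of_mem_QQ A r T hx hv hvx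
    refine ⟨sec_mem_QQ A r T hT hor hdeg hv hcd, sec_arc A r T hT hdeg hv.1, ?_⟩
    have h1 := dep_sec A r T hT hor hdeg hcd
    have h2 := dep_lt_card A r T hT (sec A T v)
    show Fintype.card V - dep r T (sec A T v) < Fintype.card V - dep r T v
    omega
  · rintro w hw b hb hbx he
    exact hw.2 ⟨b, caseD_of_mem_QQ A r T hx hb hbx, he⟩

theorem QQ_ncard (hT : IsOutBranching A r T) (hor : ∀ u v : V, A u v → ¬ A v u)
    (hdeg : ∀ v : V, {u : V | A u v}.ncard = 2)
    (hno : ∀ (S : Set V) (r : V) (T : V → V → Prop), IsOutTree A S r T → treeLeaves S T < k)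
    {x : V} (hx : x ∈ RR A r T) :
    (QQ A r T x).ncard ≤ 1 + (k - 1) * (Qleaves A r T x).ncard := by
  have hreach : ∀ v : V, ∃ n, (Fstep A r T)^[n] (lb A r T v) = v := fun v => lbF_reach A r T _ v
  set φ : V → V × ℕ := fun v => (lb A r T v, Nat.find (hreach v)) with hφ
  have hbound : ∀ v ∈ QQ A r T x \ {x}, Nat.find (hreach v) + 1 < k := by
    rintro v ⟨hvQ, hvx⟩
    rw [Set.mem_singleton_iff] at hvx
    set n := Nat.find (hreach v) with hn
    have hspec : (Fstep A r T)^[n] (lb A r T v) = v := Nat.find_spec (hreach v)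
    have hcdv : caseD A r T v := caseD_of_mem_QQ A r T hx hvQ hvx
    have hgen : ∀ i ≤ n, caseD A r T ((Fstep A r T)^[i] (lb A r T v)) := by
      intro i hi
      by_contra hcd
      have hfix1 : (Fstep A r T)^[i+1] (lb A r T v) = (Fstep A r T)^[i] (lb A r T v) := by
        rw [Function.iterate_succ_apply']
        exact Fstep_fix A r T hcd
      have := stable_propagate A r T hfix1 n (by omega)
      rw [hspec] at this
      exact hcd (this ▸ hcdv)
    exact spine_bound A r T k hT hor hdeg hno hgen
  set Tgt : Finset (V × ℕ) :=
    (Set.toFinite (Qleaves A r T x)).toFinset ×ˢ Finset.range (k - 1) with hTgt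
  have hmaps : ∀ v ∈ QQ A r T x \ {x}, φ v ∈ (↑Tgt : Set (V × ℕ)) := by
    rintro v ⟨hvQ, hvx⟩
    rw [hTgt]
    push_cast [Finset.coe_product]
    constructor
    · simp only [Set.Finite.coe_toFinset]
      exact lb_mem_Qleaves A r T hT hor hdeg hvQ
    · have := hbound v ⟨hvQ, hvx⟩
      simp only [Finset.coe_range, Set.mem_Iio]
      show Nat.find (hreach v) < k - 1
      omega
  have hinj : Set.InjOn φ (QQ A r T x \ {x}) := by
    intro a _ b _ he
    have h1 : (Fstep A r T)^[(φ a).2] (φ a).1 = a := Nat.find_spec (hreach a)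
    have h2 : (Fstep A r T)^[(φ b).2] (φ b).1 = b := Nat.find_spec (hreach b)
    calc a = (Fstep A r T)^[(φ a).2] (φ a).1 := h1.symm
      _ = (Fstep A r T)^[(φ b).2] (φ b).1 := by rw [he]
      _ = b := h2
  have hsub : (QQ A r T x \ {x}).ncard ≤ (k - 1) * (Qleaves A r T x).ncard := by
    have := Set.ncard_le_ncard_of_injOn φ hmaps hinj (Set.toFinite _)
    rw [Set.ncard_coe_finset, hTgt, Finset.card_product, Finset.card_range,
      ← Set.ncard_eq_toFinset_card (Qleaves A r T x) (Set.toFinite _)] at this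
    rw [Nat.mul_comm] at this
    exact this
  have hins : (QQ A r T x).ncard ≤ 1 + (QQ A r T x \ {x}).ncard := by
    have hsubset : QQ A r T x ⊆ insert x (QQ A r T x \ {x}) := by
      intro v hv
      by_cases hvx : v = x
      · exact hvx ▸ Set.mem_insert _ _
      · exact Set.mem_insert_of_mem _ ⟨hv, hvx⟩
    calc (QQ A r T x).ncard ≤ (insert x (QQ A r T x \ {x})).ncard :=
          Set.ncard_le_ncard hsubset (Set.toFinite _)
      _ ≤ (QQ A r T x \ {x}).ncard + 1 := Set.ncard_insert_le _ _
      _ = 1 + (QQ A r T x \ {x}).ncard := by omega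
  omega
/-! ### Grouping the trees of the forest under a common leaf -/

theorem sum_qleaves_group (hT : IsOutBranching A r T) (hor : ∀ u v : V, A u v → ¬ A v u)
    (hdeg : ∀ v : V, {u : V | A u v}.ncard = 2)
    (hno : ∀ (S : Set V) (r : V) (T : V → V → Prop), IsOutTree A S r T → treeLeaves S T < k)
    {w : V} (G : Finset V) (hG : ∀ x ∈ G, x ∈ RR A r T ∧ sec A T x = w) :
    ∑ x ∈ G, (Qleaves A r T x).ncard ≤ k := by
  classical
  set C := Fintype.card V with hC
  have hwG : w ∉ G := by
    intro h
    have h1 := (hG w h).1.1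
    have h2 := (hG w h).2
    exact sec_ne_self A r T hT hor hdeg h1 h2
  -- the union of the leaf sets
  have hUsum : ∀ G' : Finset V,
      (⋃ x ∈ G', Qleaves A r T x).ncard = ∑ x ∈ G', (Qleaves A r T x).ncard := by
    intro G'
    induction G' using Finset.induction_on with
    | empty => simp
    | @insert a s ha ih =>
      rw [Finset.sum_insert ha]
      have hbu : (⋃ x ∈ insert a s, Qleaves A r T x)
          = Qleaves A r T a ∪ ⋃ x ∈ s, Qleaves A r T x := by
        simp [Set.biUnion_insert]
      rw [hbu, Set.ncard_union_eq ?_ (Set.toFinite _) (Set.toFinite _), ih]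
      rw [Set.disjoint_left]
      rintro v hva hvs
      simp only [Set.mem_iUnion] at hvs
      obtain ⟨x, hxs, hvx⟩ := hvs
      have h1 : rt A r T v = a := hva.1.2
      have h2 : rt A r T v = x := hvx.1.2
      rw [h1] at h2
      exact ha (h2 ▸ hxs)
  set U : Set V := ⋃ x ∈ G, Qleaves A r T x with hU
  set W : Set V := U \ {w} with hWdef
  have hWlt : W.ncard < k := by
    by_cases hcase : w ≠ r ∧ rt A r T w ∈ G
    · -- the root of the group tree is rt w
      obtain ⟨hwr, hrtG⟩ := hcase
      set x₀ := rt A r T w with hx₀def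
      have hx₀RR : x₀ ∈ RR A r T := rt_mem_RR A r T hT hor hdeg hwr
      have hwQ : w ∈ QQ A r T x₀ := ⟨hwr, rfl⟩
      set S : Set V := ⋃ x ∈ G, QQ A r T x with hS
      set p : V → V := fun v => if v ∈ G then w else sec A T v with hp
      set μ : V → ℕ := fun v =>
        if v ∈ QQ A r T x₀ then C - dep r T v
        else if v ∈ G then C + 1 else C + 2 + (C - dep r T v) with hμ
      refine parentSys A k hno S x₀ p μ ?_ ?_ W ?_ ?_
      · simp only [hS, Set.mem_iUnion]
        exact ⟨x₀, hrtG, mem_QQ_self A r T hx₀RR⟩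
      · intro v hv hvx₀
        simp only [hS, Set.mem_iUnion] at hv
        obtain ⟨x, hxG, hvQx⟩ := hv
        by_cases hvG : v ∈ G
        · have hvRR := (hG v hvG).1
          have hsecv := (hG v hvG).2
          have hvv : v ∈ QQ A r T v := mem_QQ_self A r T hvRR
          have hpv : p v = w := if_pos hvG
          refine ⟨?_, ?_, ?_⟩
          · rw [hpv]
            simp only [hS, Set.mem_iUnion]
            exact ⟨x₀, hrtG, hwQ⟩
          · rw [hpv, ← hsecv]
            exact sec_arc A r T hT hdeg hvRR.1
          · rw [hpv]
            have hμw : μ w = C - dep r T w := by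
              simp only [hμ]; beta_reduce; rw [if_pos hwQ]
            have hvnot : v ∉ QQ A r T x₀ := by
              intro hmem
              have : rt A r T v = x₀ := hmem.2
              rw [hvv.2] at this
              exact hvx₀ this
            have hμv : μ v = C + 1 := by
              simp only [hμ]; beta_reduce; rw [if_neg hvnot, if_pos hvG]
            rw [hμw, hμv]
            omega
        · have hvx : v ≠ x := by rintro rfl; exact hvG hxG
          have hcd := caseD_of_mem_QQ A r T (hG x hxG).1 hvQx hvx
          have hsQ := sec_mem_QQ A r T hT hor hdeg hvQx hcd
          have hpv : p v = sec A T v := if_neg hvG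
          have hdd := dep_sec A r T hT hor hdeg hcd
          have hdc1 := dep_lt_card A r T hT v
          have hdc2 := dep_lt_card A r T hT (sec A T v)
          refine ⟨?_, ?_, ?_⟩
          · rw [hpv]
            simp only [hS, Set.mem_iUnion]
            exact ⟨x, hxG, hsQ⟩
          · rw [hpv]
            exact sec_arc A r T hT hdeg hvQx.1
          · rw [hpv]
            by_cases hx0 : x = x₀
            · subst hx0
              have hμv : μ v = C - dep r T v := by
                simp only [hμ]; beta_reduce; rw [if_pos hvQx]
              have hμs : μ (sec A T v) = C - dep r T (sec A T v) := by
                simp only [hμ]; beta_reduce; rw [if_pos hsQ]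
              rw [hμv, hμs]; omega
            · have hvnot : v ∉ QQ A r T x₀ := by
                intro hmem; exact hx0 (hvQx.2 ▸ hmem.2 ▸ rfl)
              have hsnot : sec A T v ∉ QQ A r T x₀ := by
                intro hmem; exact hx0 (hsQ.2 ▸ hmem.2 ▸ rfl)
              have hμv : μ v = C + 2 + (C - dep r T v) := by
                simp only [hμ]; beta_reduce; rw [if_neg hvnot, if_neg hvG]
              by_cases hsG : sec A T v ∈ G
              · have hμs : μ (sec A T v) = C + 1 := by
                  simp only [hμ]; beta_reduce; rw [if_neg hsnot, if_pos hsG]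
                rw [hμv, hμs]; omega
              · have hμs : μ (sec A T v) = C + 2 + (C - dep r T (sec A T v)) := by
                  simp only [hμ]; beta_reduce; rw [if_neg hsnot, if_neg hsG]
                rw [hμv, hμs]; omega
      · -- W ⊆ S
        rintro v ⟨hvU, _⟩
        simp only [hU, Set.mem_iUnion] at hvU
        obtain ⟨x, hxG, hvx⟩ := hvU
        simp only [hS, Set.mem_iUnion]
        exact ⟨x, hxG, hvx.1⟩
      · -- leaf property
        rintro w' ⟨hw'U, hw'ne⟩ b hb hbx₀
        simp only [Set.mem_singleton_iff] at hw'ne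
        simp only [hU, Set.mem_iUnion] at hw'U
        obtain ⟨y, hyG, hw'y⟩ := hw'U
        simp only [hS, Set.mem_iUnion] at hb
        obtain ⟨x, hxG, hbQx⟩ := hb
        by_cases hbG : b ∈ G
        · rw [show p b = w from if_pos hbG]
          exact fun e => hw'ne e.symm
        · have hbx : b ≠ x := by rintro rfl; exact hbG hxG
          have hcd := caseD_of_mem_QQ A r T (hG x hxG).1 hbQx hbx
          rw [show p b = sec A T b from if_neg hbG]
          intro he
          exact hw'y.2 ⟨b, hcd, he⟩
    · -- the root of the group tree is w itself
      set S : Set V := insert w (⋃ x ∈ G, QQ A r T x) with hS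
      set p : V → V := fun v => if v ∈ G then w else sec A T v with hp
      set μ : V → ℕ := fun v =>
        if v = w then 0 else if v ∈ G then 1 else 2 + (C - dep r T v) with hμ
      refine parentSys A k hno S w p μ (Set.mem_insert _ _) ?_ W ?_ ?_
      · intro v hv hvw
        rcases hv with hv | hv
        · exact absurd hv hvw
        simp only [Set.mem_iUnion] at hv
        obtain ⟨x, hxG, hvQx⟩ := hv
        by_cases hvG : v ∈ G
        · have hvRR := (hG v hvG).1
          have hsecv := (hG v hvG).2
          have hpv : p v = w := if_pos hvG
          refine ⟨hpv ▸ Set.mem_insert _ _, ?_, ?_⟩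
          · rw [hpv, ← hsecv]
            exact sec_arc A r T hT hdeg hvRR.1
          · rw [hpv]
            have hμw : μ w = 0 := by simp [hμ]
            have hμv : μ v = 1 := by simp only [hμ]; beta_reduce; rw [if_neg hvw, if_pos hvG]
            omega
        · have hvx : v ≠ x := by rintro rfl; exact hvG hxG
          have hcd := caseD_of_mem_QQ A r T (hG x hxG).1 hvQx hvx
          have hsQ := sec_mem_QQ A r T hT hor hdeg hvQx hcd
          have hpv : p v = sec A T v := if_neg hvG
          have hdd := dep_sec A r T hT hor hdeg hcd
          have hdc2 := dep_lt_card A r T hT (sec A T v)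
          have hsw : sec A T v ≠ w := by
            intro e
            apply hcase
            have hwQx : w ∈ QQ A r T x := e ▸ hsQ
            exact ⟨hwQx.1, hwQx.2 ▸ hxG⟩
          refine ⟨?_, ?_, ?_⟩
          · rw [hpv]
            refine Set.mem_insert_of_mem _ ?_
            simp only [Set.mem_iUnion]
            exact ⟨x, hxG, hsQ⟩
          · rw [hpv]
            exact sec_arc A r T hT hdeg hvQx.1
          · rw [hpv]
            have hμv : μ v = 2 + (C - dep r T v) := by
              simp only [hμ]; beta_reduce; rw [if_neg hvw, if_neg hvG]
            by_cases hsG : sec A T v ∈ G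
            · have hμs : μ (sec A T v) = 1 := by
                simp only [hμ]; beta_reduce; rw [if_neg hsw, if_pos hsG]
              rw [hμv, hμs]; omega
            · have hμs : μ (sec A T v) = 2 + (C - dep r T (sec A T v)) := by
                simp only [hμ]; beta_reduce; rw [if_neg hsw, if_neg hsG]
              rw [hμv, hμs]; omega
      · rintro v ⟨hvU, _⟩
        simp only [hU, Set.mem_iUnion] at hvU
        obtain ⟨x, hxG, hvx⟩ := hvU
        refine Set.mem_insert_of_mem _ ?_
        simp only [Set.mem_iUnion]
        exact ⟨x, hxG, hvx.1⟩
      · rintro w' ⟨hw'U, hw'ne⟩ b hb hbw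
        simp only [Set.mem_singleton_iff] at hw'ne
        simp only [hU, Set.mem_iUnion] at hw'U
        obtain ⟨y, hyG, hw'y⟩ := hw'U
        rcases hb with hb | hb
        · exact absurd hb hbw
        simp only [Set.mem_iUnion] at hb
        obtain ⟨x, hxG, hbQx⟩ := hb
        by_cases hbG : b ∈ G
        · rw [show p b = w from if_pos hbG]
          exact fun e => hw'ne e.symm
        · have hbx : b ≠ x := by rintro rfl; exact hbG hxG
          have hcd := caseD_of_mem_QQ A r T (hG x hxG).1 hbQx hbx
          rw [show p b = sec A T b from if_neg hbG]
          intro he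
          exact hw'y.2 ⟨b, hcd, he⟩
  -- conclude
  have hUW : U.ncard ≤ W.ncard + 1 := by
    have hsub : U ⊆ insert w W := by
      intro v hv
      by_cases hvw : v = w
      · exact hvw ▸ Set.mem_insert _ _
      · exact Set.mem_insert_of_mem _ ⟨hv, hvw⟩
    calc U.ncard ≤ (insert w W).ncard := Set.ncard_le_ncard hsub (Set.toFinite _)
      _ ≤ W.ncard + 1 := Set.ncard_insert_le _ _
  have := hUsum G
  rw [← hU] at this
  omega
/-! ### Counting branching vertices of `T` -/

theorem sroots_bound (hT : IsOutBranching A r T) :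
    1 ≤ leavesCount T ∧
    (Finset.univ.filter (fun v : V => v ≠ r ∧ outDeg T (par T v) ≠ 1)).card
      ≤ 2 * (leavesCount T - 1) := by
  classical
  set chl : V → Finset V := fun v => Finset.univ.filter (fun u => T v u) with hchl
  have hodeq : ∀ v, outDeg T v = (chl v).card := by
    intro v
    rw [outDeg, show {u : V | T v u} = ↑(chl v) from by ext u; simp [hchl],
      Set.ncard_coe_finset]
  set AF : Finset (V × V) := Finset.univ.filter (fun q : V × V => T q.1 q.2) with hAF
  have hfib : AF.card = ∑ v : V, (chl v).card := by
    rw [Finset.card_eq_sum_card_fiberwise (f := fun q : V × V => q.1)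
      (t := (Finset.univ : Finset V)) (fun _ _ => Finset.mem_univ _)]
    refine Finset.sum_congr rfl fun v _ => ?_
    refine Finset.card_bij (fun q _ => q.2) ?_ ?_ ?_
    · intro q hq
      simp only [hAF, Finset.mem_filter, Finset.mem_univ, true_and] at hq
      simp only [hchl, Finset.mem_filter, Finset.mem_univ, true_and]
      rw [← hq.2]; exact hq.1
    · intro q1 h1 q2 h2 he
      simp only [Finset.mem_filter] at h1 h2
      exact Prod.ext (h1.2.trans h2.2.symm) he
    · intro u hu
      simp only [hchl, Finset.mem_filter, Finset.mem_univ, true_and] at hu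
      refine ⟨(v, u), ?_, rfl⟩
      simp [hAF, hu]
  have hAFr : AF.card = (Finset.univ.filter (fun v : V => v ≠ r)).card := by
    refine Finset.card_bij (fun q _ => q.2) ?_ ?_ ?_
    · intro q hq
      simp only [hAF, Finset.mem_filter, Finset.mem_univ, true_and] at hq
      simp only [Finset.mem_filter, Finset.mem_univ, true_and]
      exact fun e => hT.2.1 q.1 (e ▸ hq)
    · intro q1 h1 q2 h2 he
      simp only [hAF, Finset.mem_filter, Finset.mem_univ, true_and] at h1 h2
      have e1 : q1.1 = par T q1.2 := par_eq A r T hT h1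
      have e2 : q2.1 = par T q2.2 := par_eq A r T hT h2
      refine Prod.ext ?_ he
      rw [e1, e2, he]
    · intro v hv
      simp only [Finset.mem_filter, Finset.mem_univ, true_and] at hv
      refine ⟨(par T v, v), ?_, rfl⟩
      simp only [hAF, Finset.mem_filter, Finset.mem_univ, true_and]
      exact par_spec A r T hT hv
  set LF := Finset.univ.filter (fun v : V => (chl v).card = 0) with hLF
  have hLFleaves : leavesCount T = LF.card := by
    rw [leavesCount, show {v : V | ∀ u, ¬ T v u} = ↑LF from ?_, Set.ncard_coe_finset]
    ext v
    simp only [Set.mem_setOf_eq, hLF, Finset.coe_filter, Finset.mem_univ, true_and,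
      Finset.card_eq_zero, Finset.eq_empty_iff_forall_notMem, hchl, Finset.mem_filter,
      not_and]
  set n := Fintype.card V with hn
  have hcardsplit : (Finset.univ.filter (fun v : V => v ≠ r)).card + 1 = n := by
    have h := Finset.card_filter_add_card_filter_not
      (s := (Finset.univ : Finset V)) (p := fun v : V => v ≠ r)
    have h1 : (Finset.univ.filter (fun v : V => ¬ v ≠ r)) = {r} := by
      ext v
      simp
    rw [h1, Finset.card_singleton, Finset.card_univ] at h
    exact h
  have hsum : ∑ v : V, (chl v).card + 1 = n := by
    rw [← hfib, hAFr]; exact hcardsplit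
  have hl1 : 1 ≤ LF.card := by
    by_contra hcon
    have hz : LF = ∅ := by
      rcases Finset.eq_empty_or_nonempty LF with h | h
      · exact h
      · exact absurd (Finset.card_pos.mpr h) (by omega)
    have hall : ∀ v : V, 1 ≤ (chl v).card := by
      intro v
      by_contra hc
      have hc0 : (chl v).card = 0 := by omega
      have hvLF : v ∈ LF := by
        simp only [hLF, Finset.mem_filter, Finset.mem_univ, true_and]
        omega
      rw [hz] at hvLF
      exact absurd hvLF (Finset.notMem_empty v)
    have hge : n ≤ ∑ v : V, (chl v).card := by
      calc n = ∑ _v : V, 1 := by simp [hn]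
        _ ≤ ∑ v : V, (chl v).card := Finset.sum_le_sum fun v _ => hall v
    omega
  set BF := Finset.univ.filter (fun v : V => 2 ≤ (chl v).card) with hBF
  set OF := Finset.univ.filter (fun v : V => (chl v).card = 1) with hOF
  have hsplit2 : ∑ v ∈ BF, (chl v).card
      + ∑ v ∈ Finset.univ.filter (fun v : V => ¬ 2 ≤ (chl v).card), (chl v).card
      = ∑ v : V, (chl v).card := by
    rw [hBF]
    exact Finset.sum_filter_add_sum_filter_not _ _ _
  have hsmall : ∑ v ∈ Finset.univ.filter (fun v : V => ¬ 2 ≤ (chl v).card), (chl v).card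
      = OF.card := by
    set s := Finset.univ.filter (fun v : V => ¬ 2 ≤ (chl v).card) with hs
    have hsplit := Finset.sum_filter_add_sum_filter_not s (fun v => (chl v).card = 1)
      (fun v => (chl v).card)
    have e1 : ∑ v ∈ s.filter (fun v => (chl v).card = 1), (chl v).card
        = (s.filter (fun v => (chl v).card = 1)).card := by
      rw [Finset.card_eq_sum_ones]
      refine Finset.sum_congr rfl fun v hv => ?_
      simp only [Finset.mem_filter] at hv
      exact hv.2
    have e2 : ∑ v ∈ s.filter (fun v => ¬ (chl v).card = 1), (chl v).card = 0 := by
      refine Finset.sum_eq_zero fun v hv => ?_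
      simp only [hs, Finset.mem_filter, Finset.mem_univ, true_and] at hv
      omega
    have e3 : s.filter (fun v => (chl v).card = 1) = OF := by
      rw [hs, Finset.filter_filter, hOF]
      apply Finset.filter_congr
      intro v _
      constructor
      · intro h; exact h.2
      · intro h; exact ⟨by omega, h⟩
    rw [e1, e2, e3] at hsplit
    omega
  have hpart3 : BF.card + OF.card + LF.card = n := by
    have h1 := Finset.card_filter_add_card_filter_not
      (s := (Finset.univ : Finset V)) (p := fun v : V => 2 ≤ (chl v).card)
    have h2 := Finset.card_filter_add_card_filter_not
      (s := Finset.univ.filter (fun v : V => ¬ 2 ≤ (chl v).card))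
      (p := fun v : V => (chl v).card = 1)
    have e1 : (Finset.univ.filter (fun v : V => ¬ 2 ≤ (chl v).card)).filter
        (fun v : V => (chl v).card = 1) = OF := by
      rw [Finset.filter_filter, hOF]
      apply Finset.filter_congr
      intro v _
      constructor
      · intro h; exact h.2
      · intro h; exact ⟨by omega, h⟩
    have e2 : (Finset.univ.filter (fun v : V => ¬ 2 ≤ (chl v).card)).filter
        (fun v : V => ¬ (chl v).card = 1) = LF := by
      rw [Finset.filter_filter, hLF]
      apply Finset.filter_congr
      intro v _
      constructor
      · intro h; omega
      · intro h; constructor <;> omega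
    rw [e1, e2] at h2
    rw [Finset.card_univ] at h1
    rw [← hBF] at h1
    omega
  have hBFle : 2 * BF.card ≤ ∑ v ∈ BF, (chl v).card := by
    calc 2 * BF.card = ∑ _v ∈ BF, 2 := by
          rw [Finset.sum_const, smul_eq_mul, mul_comm]
      _ ≤ ∑ v ∈ BF, (chl v).card := by
          refine Finset.sum_le_sum fun v hv => ?_
          simp only [hBF, Finset.mem_filter, Finset.mem_univ, true_and] at hv
          exact hv
  have hsub : (Finset.univ.filter (fun v : V => v ≠ r ∧ outDeg T (par T v) ≠ 1))
      ⊆ BF.biUnion chl := by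
    intro v hv
    simp only [Finset.mem_filter, Finset.mem_univ, true_and] at hv
    obtain ⟨hvr, hod⟩ := hv
    have hmem : v ∈ chl (par T v) := by
      simp only [hchl, Finset.mem_filter, Finset.mem_univ, true_and]
      exact par_spec A r T hT hvr
    have hge1 : 0 < (chl (par T v)).card := Finset.card_pos.mpr ⟨v, hmem⟩
    rw [hodeq] at hod
    have h2 : 2 ≤ (chl (par T v)).card := by omega
    refine Finset.mem_biUnion.mpr ⟨par T v, ?_, hmem⟩
    simp only [hBF, Finset.mem_filter, Finset.mem_univ, true_and]
    exact h2
  have hfinal := Finset.card_le_card hsub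
  have hbile := Finset.card_biUnion_le (s := BF) (t := chl)
  refine ⟨by rw [hLFleaves]; exact hl1, ?_⟩
  rw [hLFleaves]
  omega
end Stmt5Aux

/-- If an oriented graph of order `n` with all in-degrees 2 has an out-branching but
no out-tree with `k` leaves, then `n ≤ 4k³`. -/
theorem stmt_5 {V : Type*} [Fintype V] (A : V → V → Prop) (k : ℕ) (hk : 0 < k)
    (horient : ∀ u v : V, A u v → ¬ A v u)
    (hindeg : ∀ v : V, {u : V | A u v}.ncard = 2)
    (hbr : ∃ (r : V) (T : V → V → Prop), IsOutBranching A r T)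
    (hno : ∀ (S : Set V) (r : V) (T : V → V → Prop),
      IsOutTree A S r T → treeLeaves S T < k) :
    Fintype.card V ≤ 4 * k ^ 3 := by
  classical
  obtain ⟨r0, T0, hT0⟩ := hbr
  -- choose an out-branching with the maximum number of leaves
  have hbddset : ∀ l ∈ {l : ℕ | ∃ (r1 : V) (T1 : V → V → Prop),
      IsOutBranching A r1 T1 ∧ leavesCount T1 = l}, l ≤ Fintype.card V := by
    rintro l ⟨r1, T1, h1, rfl⟩
    rw [leavesCount]
    calc {v : V | ∀ u, ¬ T1 v u}.ncard ≤ (Set.univ : Set V).ncard :=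
          Set.ncard_le_ncard (Set.subset_univ _) Set.finite_univ
      _ = Fintype.card V := by rw [Set.ncard_univ, Nat.card_eq_fintype_card]
  have hmem := Nat.sSup_mem (s := {l : ℕ | ∃ (r1 : V) (T1 : V → V → Prop),
      IsOutBranching A r1 T1 ∧ leavesCount T1 = l})
    ⟨leavesCount T0, r0, T0, hT0, rfl⟩ ⟨Fintype.card V, fun l hl => hbddset l hl⟩
  obtain ⟨r, T, hT, hval⟩ := hmem
  have hmax : ∀ (r1 : V) (T1 : V → V → Prop), IsOutBranching A r1 T1 →
      leavesCount T1 ≤ leavesCount T := by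
    intro r1 T1 h1
    rw [hval]
    exact le_csSup ⟨Fintype.card V, fun l hl => hbddset l hl⟩ ⟨r1, T1, h1, rfl⟩
  have hk2 : 2 ≤ k := Stmt5Aux.k_ge_two A k hno r
  have hlk : leavesCount T < k := by
    have htree : IsOutTree A Set.univ r T :=
      ⟨Set.mem_univ r, fun u v h => ⟨hT.1 u v h, Set.mem_univ u, Set.mem_univ v⟩, hT.2.1,
        fun v _ hv => hT.2.2.1 v hv, fun v _ => hT.2.2.2 v⟩
    have h := hno Set.univ r T htree
    have e : treeLeaves Set.univ T = leavesCount T := by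
      rw [treeLeaves, leavesCount]
      congr 1
      ext v; simp
    rwa [e] at h
  obtain ⟨hl1, hsrb⟩ := Stmt5Aux.sroots_bound A r T hT
  set Rfin : Finset V := Finset.univ.filter (fun x => x ∈ Stmt5Aux.RR A r T) with hRfin
  have hmemR : ∀ x ∈ Rfin, x ∈ Stmt5Aux.RR A r T := fun x hx => (Finset.mem_filter.mp hx).2
  -- partition of the non-root vertices into the trees of the forest
  have hpart : Finset.univ.filter (fun v : V => v ≠ r)
      = Rfin.biUnion (fun x => (Set.toFinite (Stmt5Aux.QQ A r T x)).toFinset) := by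
    ext v
    simp only [Finset.mem_filter, Finset.mem_univ, true_and, Finset.mem_biUnion,
      Set.Finite.mem_toFinset]
    constructor
    · intro hv
      refine ⟨Stmt5Aux.rt A r T v, ?_, hv, rfl⟩
      simp only [hRfin, Finset.mem_filter, Finset.mem_univ, true_and]
      exact Stmt5Aux.rt_mem_RR A r T hT horient hindeg hv
    · rintro ⟨x, _, hvQ⟩
      exact hvQ.1
  have hdisj : ∀ x ∈ Rfin, ∀ y ∈ Rfin, x ≠ y →
      Disjoint ((Set.toFinite (Stmt5Aux.QQ A r T x)).toFinset)
        ((Set.toFinite (Stmt5Aux.QQ A r T y)).toFinset) := by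
    intro x _ y _ hxy
    rw [Finset.disjoint_left]
    intro v hvx hvy
    rw [Set.Finite.mem_toFinset] at hvx hvy
    exact hxy (hvx.2 ▸ hvy.2 ▸ rfl)
  have hcard1 : (Finset.univ.filter (fun v : V => v ≠ r)).card
      = ∑ x ∈ Rfin, (Stmt5Aux.QQ A r T x).ncard := by
    rw [hpart, Finset.card_biUnion hdisj]
    refine Finset.sum_congr rfl fun x _ => ?_
    rw [← Set.ncard_eq_toFinset_card (Stmt5Aux.QQ A r T x) (Set.toFinite _)]
  have hnn : Fintype.card V = 1 + ∑ x ∈ Rfin, (Stmt5Aux.QQ A r T x).ncard := by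
    have h := Finset.card_filter_add_card_filter_not
      (s := (Finset.univ : Finset V)) (p := fun v : V => v ≠ r)
    have h1 : (Finset.univ.filter (fun v : V => ¬ v ≠ r)) = {r} := by ext v; simp
    rw [h1, Finset.card_singleton, Finset.card_univ, hcard1] at h
    omega
  have hQb : ∀ x ∈ Rfin, (Stmt5Aux.QQ A r T x).ncard
      ≤ 1 + (k - 1) * (Stmt5Aux.Qleaves A r T x).ncard :=
    fun x hx => Stmt5Aux.QQ_ncard A r T k hT horient hindeg hno (hmemR x hx)
  have hlam1 : ∀ x ∈ Rfin, 1 ≤ (Stmt5Aux.Qleaves A r T x).ncard := by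
    intro x hx
    have hxQ : x ∈ Stmt5Aux.QQ A r T x := Stmt5Aux.mem_QQ_self A r T (hmemR x hx)
    have hlb : Stmt5Aux.lb A r T x ∈ Stmt5Aux.Qleaves A r T x :=
      Stmt5Aux.lb_mem_Qleaves A r T hT horient hindeg hxQ
    have hpos : 0 < (Stmt5Aux.Qleaves A r T x).ncard :=
      (Set.ncard_pos (Set.toFinite _)).mpr ⟨_, hlb⟩
    omega
  have hRcard : Rfin.card ≤ ∑ x ∈ Rfin, (Stmt5Aux.Qleaves A r T x).ncard := by
    calc Rfin.card = ∑ _x ∈ Rfin, 1 := (Finset.card_eq_sum_ones _)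
      _ ≤ ∑ x ∈ Rfin, (Stmt5Aux.Qleaves A r T x).ncard := Finset.sum_le_sum hlam1
  have hsumQ : ∑ x ∈ Rfin, (Stmt5Aux.QQ A r T x).ncard
      ≤ Rfin.card + (k - 1) * ∑ x ∈ Rfin, (Stmt5Aux.Qleaves A r T x).ncard := by
    calc ∑ x ∈ Rfin, (Stmt5Aux.QQ A r T x).ncard
        ≤ ∑ x ∈ Rfin, (1 + (k - 1) * (Stmt5Aux.Qleaves A r T x).ncard) :=
          Finset.sum_le_sum hQb
      _ = Rfin.card + (k - 1) * ∑ x ∈ Rfin, (Stmt5Aux.Qleaves A r T x).ncard := by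
          rw [Finset.sum_add_distrib, ← Finset.card_eq_sum_ones, Finset.mul_sum]
  have hlamk : ∀ x ∈ Rfin, (Stmt5Aux.Qleaves A r T x).ncard ≤ k - 1 := by
    intro x hx
    have := Stmt5Aux.qleaves_lt A r T k hT horient hindeg hno (hmemR x hx)
    omega
  set Sfin := Rfin.filter (fun x => ¬ outDeg T (Stmt5Aux.par T x) = 1) with hSfin
  set Lfin := Rfin.filter (fun x => outDeg T (Stmt5Aux.par T x) = 1) with hLfin
  have hSsub : Sfin ⊆ Finset.univ.filter
      (fun v : V => v ≠ r ∧ outDeg T (Stmt5Aux.par T v) ≠ 1) := by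
    intro x hx
    simp only [hSfin, Finset.mem_filter] at hx
    simp only [Finset.mem_filter, Finset.mem_univ, true_and]
    exact ⟨(hmemR x hx.1).1, hx.2⟩
  have hScard : Sfin.card ≤ 2 * (leavesCount T - 1) :=
    le_trans (Finset.card_le_card hSsub) hsrb
  have hSsum : ∑ x ∈ Sfin, (Stmt5Aux.Qleaves A r T x).ncard
      ≤ 2 * (leavesCount T - 1) * (k - 1) := by
    calc ∑ x ∈ Sfin, (Stmt5Aux.Qleaves A r T x).ncard ≤ Sfin.card * (k - 1) := by
          have := Finset.sum_le_card_nsmul Sfin (fun x => (Stmt5Aux.Qleaves A r T x).ncard)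
            (k - 1) (fun x hx => hlamk x (Finset.mem_of_mem_filter x hx))
          simpa using this
      _ ≤ 2 * (leavesCount T - 1) * (k - 1) := Nat.mul_le_mul_right _ hScard
  set leafFin := Finset.univ.filter (fun w : V => ∀ u, ¬ T w u) with hleafFin
  have hleafcard : leafFin.card = leavesCount T := by
    rw [leavesCount, show {v : V | ∀ u, ¬ T v u} = ↑leafFin from by
      ext v; simp [hleafFin], Set.ncard_coe_finset]
  have hLsplit : ∑ x ∈ Lfin, (Stmt5Aux.Qleaves A r T x).ncard
      + ∑ x ∈ Sfin, (Stmt5Aux.Qleaves A r T x).ncard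
      = ∑ x ∈ Rfin, (Stmt5Aux.Qleaves A r T x).ncard := by
    rw [hLfin, hSfin]
    exact Finset.sum_filter_add_sum_filter_not _ _ _
  have hcover : Lfin ⊆ leafFin.biUnion
      (fun w => Lfin.filter (fun x => Stmt5Aux.sec A T x = w)) := by
    intro x hx
    have hxR := hmemR x (Finset.mem_of_mem_filter x hx)
    have hod : outDeg T (Stmt5Aux.par T x) = 1 := (Finset.mem_filter.mp hx).2
    have hnd : ¬ Relation.ReflTransGen T x (Stmt5Aux.sec A T x) := fun h => hxR.2 ⟨hxR.1, h⟩
    have hleaf := Stmt5Aux.second_is_leaf A r T hT hmax hindeg hxR.1 hod hnd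
    refine Finset.mem_biUnion.mpr ⟨Stmt5Aux.sec A T x, ?_, ?_⟩
    · simp only [hleafFin, Finset.mem_filter, Finset.mem_univ, true_and]
      exact hleaf
    · simp [hx]
  have hLdisj : Set.PairwiseDisjoint (↑leafFin : Set V)
      (fun w => Lfin.filter (fun x => Stmt5Aux.sec A T x = w)) := by
    intro w1 _ w2 _ hne
    simp only [Function.onFun]
    rw [Finset.disjoint_left]
    intro x hx1 hx2
    simp only [Finset.mem_filter] at hx1 hx2
    exact hne (hx1.2 ▸ hx2.2 ▸ rfl)
  have hLsum : ∑ x ∈ Lfin, (Stmt5Aux.Qleaves A r T x).ncard ≤ leavesCount T * k := by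
    calc ∑ x ∈ Lfin, (Stmt5Aux.Qleaves A r T x).ncard
        ≤ ∑ x ∈ leafFin.biUnion (fun w => Lfin.filter (fun x => Stmt5Aux.sec A T x = w)),
            (Stmt5Aux.Qleaves A r T x).ncard :=
          Finset.sum_le_sum_of_subset hcover
      _ = ∑ w ∈ leafFin, ∑ x ∈ Lfin.filter (fun x => Stmt5Aux.sec A T x = w),
            (Stmt5Aux.Qleaves A r T x).ncard := Finset.sum_biUnion hLdisj
      _ ≤ ∑ _w ∈ leafFin, k := by
          refine Finset.sum_le_sum fun w hw => ?_
          have hwleaf : ∀ u, ¬ T w u := by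
            simp only [hleafFin, Finset.mem_filter, Finset.mem_univ, true_and] at hw
            exact hw
          refine Stmt5Aux.sum_qleaves_group A r T k hT horient hindeg hno
            (w := w) (Lfin.filter (fun x => Stmt5Aux.sec A T x = w)) ?_
          intro x hx
          simp only [Finset.mem_filter] at hx
          exact ⟨hmemR x (Finset.mem_of_mem_filter x hx.1), hx.2⟩
      _ = leafFin.card * k := by rw [Finset.sum_const, smul_eq_mul]
      _ = leavesCount T * k := by rw [hleafcard]
  -- final arithmetic
  have htotal : ∑ x ∈ Rfin, (Stmt5Aux.Qleaves A r T x).ncard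
      ≤ 2 * (leavesCount T - 1) * (k - 1) + leavesCount T * k := by omega
  obtain ⟨b, hb⟩ : ∃ b, k = b + 1 := ⟨k - 1, by omega⟩
  obtain ⟨a, ha⟩ : ∃ a, leavesCount T = a + 1 := ⟨leavesCount T - 1, by omega⟩
  have hab : a < b := by omega
  have hn4 : Fintype.card V ≤ 1 + k * (2 * (leavesCount T - 1) * (k - 1) + leavesCount T * k) := by
    rw [hnn]
    have hkk : Rfin.card + (k - 1) * ∑ x ∈ Rfin, (Stmt5Aux.Qleaves A r T x).ncard
        ≤ k * ∑ x ∈ Rfin, (Stmt5Aux.Qleaves A r T x).ncard := by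
      have hksub : (k - 1) * ∑ x ∈ Rfin, (Stmt5Aux.Qleaves A r T x).ncard
          + ∑ x ∈ Rfin, (Stmt5Aux.Qleaves A r T x).ncard
          = k * ∑ x ∈ Rfin, (Stmt5Aux.Qleaves A r T x).ncard := by
        have hk1 : k - 1 + 1 = k := by omega
        calc (k - 1) * ∑ x ∈ Rfin, (Stmt5Aux.Qleaves A r T x).ncard
            + ∑ x ∈ Rfin, (Stmt5Aux.Qleaves A r T x).ncard
            = (k - 1 + 1) * ∑ x ∈ Rfin, (Stmt5Aux.Qleaves A r T x).ncard := by ring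
          _ = k * ∑ x ∈ Rfin, (Stmt5Aux.Qleaves A r T x).ncard := by rw [hk1]
      omega
    have h5 : k * ∑ x ∈ Rfin, (Stmt5Aux.Qleaves A r T x).ncard
        ≤ k * (2 * (leavesCount T - 1) * (k - 1) + leavesCount T * k) :=
      Nat.mul_le_mul_left _ htotal
    omega
  have harith : 1 + k * (2 * (leavesCount T - 1) * (k - 1) + leavesCount T * k)
      ≤ 4 * k ^ 3 := by
    rw [hb, ha]
    have e1 : a + 1 - 1 = a := by omega
    have e2 : b + 1 - 1 = b := by omega
    rw [e1, e2]
    nlinarith [hab, sq_nonneg a, sq_nonneg b, sq_nonneg (a + b)]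
  omega
end

section
/- Every strongly connected oriented graph D on n vertices with minimum in-degree at least 2 has an out-branching with at least (n/4)^{1/3} - 1 leaves. -/
open Relation

namespace Stmt6

attribute [local instance 10] Classical.propDecidable

set_option maxHeartbeats 1000000
set_option linter.unusedSectionVars false

lemma ncard_filter {V : Type*} [Fintype V] (P : V → Prop) [DecidablePred P] :
    {v | P v}.ncard = (Finset.univ.filter P).card := by
  have h : {v | P v} = ↑(Finset.univ.filter P) := by ext v; simp
  rw [h, Set.ncard_coe_finset]

section Basics

variable {V : Type*} [Fintype V] [Nonempty V] {A : V → V → Prop} {r : V} {T : V → V → Prop}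

lemma ne_root_of_arc (hr : ∀ u, ¬ T u r) {u v : V} (h : T u v) : v ≠ r := by
  rintro rfl; exact hr u h

lemma parent_eq (hr : ∀ u, ¬ T u r) (hu : ∀ v, v ≠ r → ∃! u, T u v)
    {u u' v : V} (h : T u v) (h' : T u' v) : u = u' := by
  have hv := ne_root_of_arc hr h
  obtain ⟨w, -, hw⟩ := hu v hv
  rw [hw u h, hw u' h']

lemma noTG (hr : ∀ u, ¬ T u r) (hu : ∀ v, v ≠ r → ∃! u, T u v)
    (hre : ∀ v, Relation.ReflTransGen T r v) : ∀ v, ¬ TransGen T v v := by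
  have key : ∀ v, ReflTransGen T r v → ¬ TransGen T v v := by
    intro v hv
    induction hv with
    | refl =>
      intro hc
      obtain ⟨c, -, hcr⟩ := Relation.TransGen.tail'_iff.mp hc
      exact hr c hcr
    | @tail b c hb hbc ih =>
      intro hc
      obtain ⟨x, hx, hxc⟩ := Relation.TransGen.tail'_iff.mp hc
      have hxb : x = b := parent_eq hr hu hxc hbc
      subst hxb
      exact ih (Relation.TransGen.head' hbc hx)
  intro v; exact key v (hre v)

lemma rtg_antisymm (hr : ∀ u, ¬ T u r) (hu : ∀ v, v ≠ r → ∃! u, T u v)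
    (hre : ∀ v, Relation.ReflTransGen T r v) {a b : V}
    (h1 : ReflTransGen T a b) (h2 : ReflTransGen T b a) : a = b := by
  rcases Relation.reflTransGen_iff_eq_or_transGen.mp h1 with h | h1'
  · exact h.symm
  rcases Relation.reflTransGen_iff_eq_or_transGen.mp h2 with h | h2'
  · exact h
  exact absurd (h1'.trans h2') (noTG hr hu hre a)

noncomputable def par (T : V → V → Prop) (v : V) : V := Classical.epsilon (fun u => T u v)

lemma par_spec (hu : ∀ v, v ≠ r → ∃! u, T u v) {v : V} (hv : v ≠ r) : T (par T v) v :=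
  Classical.epsilon_spec (hu v hv).exists

lemma par_eq (hr : ∀ u, ¬ T u r) (hu : ∀ v, v ≠ r → ∃! u, T u v)
    {u v : V} (h : T u v) : par T v = u :=
  parent_eq hr hu (par_spec hu (ne_root_of_arc hr h)) h

noncomputable def dep (T : V → V → Prop) (v : V) : ℕ := {u | TransGen T u v}.ncard

lemma dep_succ (hr : ∀ u, ¬ T u r) (hu : ∀ v, v ≠ r → ∃! u, T u v)
    (hre : ∀ v, Relation.ReflTransGen T r v) {u v : V} (h : T u v) :
    dep T v = dep T u + 1 := by
  have hset : {x | TransGen T x v} = insert u {x | TransGen T x u} := by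
    ext x
    simp only [Set.mem_setOf_eq, Set.mem_insert_iff]
    constructor
    · intro hx
      obtain ⟨y, hy, hyv⟩ := Relation.TransGen.tail'_iff.mp hx
      have : y = u := parent_eq hr hu hyv h
      subst this
      rcases Relation.reflTransGen_iff_eq_or_transGen.mp hy with h' | h'
      · left; exact h'.symm
      · right; exact h'
    · rintro (rfl | hx)
      · exact Relation.TransGen.single h
      · exact hx.tail h
  rw [dep, dep, hset]
  exact Set.ncard_insert_of_notMem (noTG hr hu hre u) (Set.toFinite _)

lemma dep_mono (hr : ∀ u, ¬ T u r) (hu : ∀ v, v ≠ r → ∃! u, T u v)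
    (hre : ∀ v, Relation.ReflTransGen T r v) {a b : V} (h : ReflTransGen T a b) :
    dep T a ≤ dep T b := by
  induction h with
  | refl => exact le_refl _
  | @tail y z hy hyz ih =>
    have h2 := dep_succ hr hu hre hyz
    omega

lemma rtg_par (hr : ∀ u, ¬ T u r) (hu : ∀ v, v ≠ r → ∃! u, T u v)
    {x v : V} (h : ReflTransGen T x v) (hne : x ≠ v) : ReflTransGen T x (par T v) := by
  rcases Relation.ReflTransGen.cases_tail h with h' | ⟨c, hc, hcv⟩
  · exact absurd h'.symm hne
  · rw [par_eq hr hu hcv]; exact hc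

lemma rtg_comparable (hr : ∀ u, ¬ T u r) (hu : ∀ v, v ≠ r → ∃! u, T u v)
    {a b c : V} (hbc : ReflTransGen T b c) :
    ReflTransGen T a c → ReflTransGen T a b ∨ ReflTransGen T b a := by
  induction hbc with
  | refl => intro hac; left; exact hac
  | @tail y z hby hyz ih =>
    intro haz
    rcases Relation.ReflTransGen.cases_tail haz with h' | ⟨w, hw, hwz⟩
    · exact Or.inr (h' ▸ (hby.tail hyz))
    · have : w = y := parent_eq hr hu hwz hyz
      subst this; exact ih hw

lemma exists_leaf (hr : ∀ u, ¬ T u r) (hu : ∀ v, v ≠ r → ∃! u, T u v)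
    (hre : ∀ v, Relation.ReflTransGen T r v) : ∃ v : V, ∀ u, ¬ T v u := by
  obtain ⟨v, -, hv⟩ := Finset.exists_max_image (Finset.univ : Finset V) (dep T)
    ⟨Classical.arbitrary V, Finset.mem_univ _⟩
  refine ⟨v, fun u hvu => ?_⟩
  have h1 := dep_succ hr hu hre hvu
  have h2 := hv u (Finset.mem_univ u)
  omega

end Basics

section Count

variable {V : Type*} [Fintype V] [Nonempty V] {A : V → V → Prop} {r : V} {T : V → V → Prop}

/-- set of out-neighbours as a Finset -/
noncomputable def fout (T : V → V → Prop) (v : V) : Finset V :=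
  Finset.univ.filter (fun u => T v u)

lemma mem_fout {T : V → V → Prop} {v u : V} : u ∈ fout T v ↔ T v u := by
  simp [fout]

lemma leavesCount_eq : leavesCount T = (Finset.univ.filter (fun v : V => ∀ u, ¬ T v u)).card := by
  rw [leavesCount, ncard_filter]

lemma fout_zero_iff {v : V} : (fout T v).card = 0 ↔ ∀ u, ¬ T v u := by
  rw [Finset.card_eq_zero, Finset.eq_empty_iff_forall_notMem]
  simp [mem_fout]

lemma sum_fout (hr : ∀ u, ¬ T u r) (hu : ∀ v, v ≠ r → ∃! u, T u v) :
    ∑ v : V, (fout T v).card = Fintype.card V - 1 := by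
  have hbij : Finset.univ.biUnion (fout T) = Finset.univ.erase r := by
    ext z
    simp only [Finset.mem_biUnion, Finset.mem_erase, mem_fout, Finset.mem_univ, true_and,
      and_true]
    constructor
    · rintro ⟨v, hv⟩
      exact ne_root_of_arc hr hv
    · intro hz
      obtain ⟨w, hw, -⟩ := hu z hz
      exact ⟨w, hw⟩
  have hdisj : ∀ x ∈ (Finset.univ : Finset V), ∀ y ∈ (Finset.univ : Finset V), x ≠ y →
      Disjoint (fout T x) (fout T y) := by
    intro x _ y _ hxy
    rw [Finset.disjoint_left]
    intro z hzx hzy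
    exact hxy (parent_eq hr hu (mem_fout.mp hzx) (mem_fout.mp hzy))
  have := Finset.card_biUnion hdisj
  rw [hbij] at this
  rw [← this, Finset.card_erase_of_mem (Finset.mem_univ r), Finset.card_univ]

/-- vertices with at least 2 children -/
noncomputable def B2 (T : V → V → Prop) : Finset V :=
  Finset.univ.filter (fun v => 2 ≤ (fout T v).card)

/-- non-leaves -/
noncomputable def NL (T : V → V → Prop) : Finset V :=
  Finset.univ.filter (fun v => 1 ≤ (fout T v).card)

lemma NL_card : (NL T).card + leavesCount T = Fintype.card V := by
  rw [leavesCount_eq, NL]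
  have : (Finset.univ.filter (fun v : V => ∀ u, ¬ T v u)) =
      Finset.univ.filter (fun v : V => ¬ (1 ≤ (fout T v).card)) := by
    apply Finset.filter_congr
    intro v _
    constructor
    · intro h; simp only [not_le, Nat.lt_one_iff]; exact fout_zero_iff.mpr h
    · intro h; exact fout_zero_iff.mp (by omega)
  rw [this, Finset.card_filter_add_card_filter_not, Finset.card_univ]

lemma leaves_pos (hr : ∀ u, ¬ T u r) (hu : ∀ v, v ≠ r → ∃! u, T u v)
    (hre : ∀ v, Relation.ReflTransGen T r v) : 1 ≤ leavesCount T := by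
  obtain ⟨v, hv⟩ := exists_leaf hr hu hre
  rw [leavesCount_eq]
  refine Finset.card_pos.mpr ⟨v, ?_⟩
  simp only [Finset.mem_filter, Finset.mem_univ, true_and]
  exact hv

lemma B2_card_le (hr : ∀ u, ¬ T u r) (hu : ∀ v, v ≠ r → ∃! u, T u v)
    (hre : ∀ v, Relation.ReflTransGen T r v) :
    (B2 T).card + 1 ≤ leavesCount T := by
  have hsum := sum_fout (T := T) hr hu
  have hNL := NL_card (T := T)
  have hl := leaves_pos hr hu hre
  have hn : 1 ≤ Fintype.card V := Fintype.card_pos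
  have hpoint : ∀ v ∈ (Finset.univ : Finset V),
      (if 1 ≤ (fout T v).card then 1 else 0) + (if 2 ≤ (fout T v).card then 1 else 0)
        ≤ (fout T v).card := by
    intro v _
    split_ifs <;> omega
  have hle := Finset.sum_le_sum hpoint
  rw [Finset.sum_add_distrib] at hle
  rw [← Finset.card_filter, ← Finset.card_filter] at hle
  rw [hsum] at hle
  have : (NL T).card + (B2 T).card ≤ Fintype.card V - 1 := hle
  omega

lemma sum_B2_le (hr : ∀ u, ¬ T u r) (hu : ∀ v, v ≠ r → ∃! u, T u v)
    (hre : ∀ v, Relation.ReflTransGen T r v) :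
    (∑ v ∈ B2 T, (fout T v).card) + 2 ≤ 2 * leavesCount T := by
  have hsum := sum_fout (T := T) hr hu
  have hNL := NL_card (T := T)
  have hl := leaves_pos hr hu hre
  have hn : 1 ≤ Fintype.card V := Fintype.card_pos
  have hNLuniv : ∑ v ∈ NL T, (fout T v).card = ∑ v : V, (fout T v).card := by
    apply Finset.sum_subset (Finset.subset_univ _)
    intro v _ hv
    simp only [NL, Finset.mem_filter, Finset.mem_univ, true_and, not_le] at hv
    omega
  have hNLsum : (∑ v ∈ NL T, ((fout T v).card - 1)) + (NL T).card = Fintype.card V - 1 := by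
    have h2 : (∑ v ∈ NL T, ((fout T v).card - 1)) + (NL T).card
        = ∑ v ∈ NL T, (((fout T v).card - 1) + 1) := by
      rw [Finset.sum_add_distrib, Finset.sum_const, smul_eq_mul, mul_one]
    rw [h2]
    have h3 : ∀ v ∈ NL T, ((fout T v).card - 1) + 1 = (fout T v).card := by
      intro v hv
      simp only [NL, Finset.mem_filter, Finset.mem_univ, true_and] at hv
      omega
    rw [Finset.sum_congr rfl h3, hNLuniv, hsum]
  have hB2NL : B2 T ⊆ NL T := by
    intro v hv
    simp only [B2, NL, Finset.mem_filter, Finset.mem_univ, true_and] at *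
    omega
  have h4 : ∑ v ∈ B2 T, (fout T v).card ≤ ∑ v ∈ B2 T, 2 * ((fout T v).card - 1) := by
    apply Finset.sum_le_sum
    intro v hv
    simp only [B2, Finset.mem_filter, Finset.mem_univ, true_and] at hv
    omega
  have h5 : ∑ v ∈ B2 T, ((fout T v).card - 1) ≤ ∑ v ∈ NL T, ((fout T v).card - 1) :=
    Finset.sum_le_sum_of_subset hB2NL
  rw [← Finset.mul_sum] at h4
  omega

end Count

section TopFib

variable {V : Type*} [Fintype V] [Nonempty V] {A : V → V → Prop} {r : V} {T : V → V → Prop}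

noncomputable def ch (T : V → V → Prop) (v : V) : V := Classical.epsilon (fun u => T v u)

lemma ch_spec {v u : V} (h : T v u) : T v (ch T v) := Classical.epsilon_spec ⟨u, h⟩

lemma ch_eq {v u : V} (hle : (fout T v).card ≤ 1) (h : T v u) : ch T v = u :=
  Finset.card_le_one.mp hle (ch T v) (mem_fout.mpr (ch_spec h)) u (mem_fout.mpr h)

/-- condition for continuing upward (parent also has out-degree ≤ 1) -/
def contW (T : V → V → Prop) (r : V) (v : V) : Prop :=
  v ≠ r ∧ (fout T (par T v)).card ≤ 1

noncomputable def topAux (T : V → V → Prop) (r : V) : ℕ → V → V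
  | 0, v => v
  | (m+1), v => if contW T r v then topAux T r m (par T v) else v

noncomputable def topW (T : V → V → Prop) (r : V) (v : V) : V := topAux T r (dep T v) v

lemma dep_pos_of_contW (hr : ∀ u, ¬ T u r) (hu : ∀ v, v ≠ r → ∃! u, T u v)
    (hre : ∀ v, Relation.ReflTransGen T r v) {v : V} (h : contW T r v) : dep T v ≠ 0 := by
  have := dep_succ hr hu hre (par_spec hu h.1); omega

lemma top_fix {v : V} (h : ¬ contW T r v) : topW T r v = v := by
  rw [topW]
  cases hd : dep T v with
  | zero => rfl
  | succ m => simp only [topAux, if_neg h]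

lemma top_step (hr : ∀ u, ¬ T u r) (hu : ∀ v, v ≠ r → ∃! u, T u v)
    (hre : ∀ v, Relation.ReflTransGen T r v) {v : V} (h : contW T r v) :
    topW T r v = topW T r (par T v) := by
  have hdep : dep T v = dep T (par T v) + 1 := dep_succ hr hu hre (par_spec hu h.1)
  rw [topW, hdep]
  show (if contW T r v then topAux T r (dep T (par T v)) (par T v) else v) = _
  rw [if_pos h]
  rfl

lemma top_rtg (hr : ∀ u, ¬ T u r) (hu : ∀ v, v ≠ r → ∃! u, T u v)
    (hre : ∀ v, Relation.ReflTransGen T r v) :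
    ∀ v, ReflTransGen T (topW T r v) v := by
  suffices H : ∀ m (v : V), dep T v ≤ m → ReflTransGen T (topW T r v) v by
    intro v; exact H (dep T v) v le_rfl
  intro m
  induction m with
  | zero =>
    intro v hv
    have : ¬ contW T r v := fun h => dep_pos_of_contW hr hu hre h (by omega)
    rw [top_fix this]
  | succ m ih =>
    intro v hv
    by_cases h : contW T r v
    · rw [top_step hr hu hre h]
      have hp : dep T (par T v) ≤ m := by
        have := dep_succ hr hu hre (par_spec hu h.1); omega
      exact (ih _ hp).tail (par_spec hu h.1)
    · rw [top_fix h]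

lemma top_not_cont (hr : ∀ u, ¬ T u r) (hu : ∀ v, v ≠ r → ∃! u, T u v)
    (hre : ∀ v, Relation.ReflTransGen T r v) :
    ∀ v, ¬ contW T r (topW T r v) := by
  suffices H : ∀ m (v : V), dep T v ≤ m → ¬ contW T r (topW T r v) by
    intro v; exact H (dep T v) v le_rfl
  intro m
  induction m with
  | zero =>
    intro v hv
    have h : ¬ contW T r v := fun h => dep_pos_of_contW hr hu hre h (by omega)
    rw [top_fix h]; exact h
  | succ m ih =>
    intro v hv
    by_cases h : contW T r v
    · rw [top_step hr hu hre h]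
      exact ih _ (by have := dep_succ hr hu hre (par_spec hu h.1); omega)
    · rw [top_fix h]; exact h

noncomputable def segW (T : V → V → Prop) (r : V) (v : V) : ℕ :=
  dep T v - dep T (topW T r v)

lemma seg_fix {v : V} (h : ¬ contW T r v) : segW T r v = 0 := by
  rw [segW, top_fix h]; omega

lemma seg_step (hr : ∀ u, ¬ T u r) (hu : ∀ v, v ≠ r → ∃! u, T u v)
    (hre : ∀ v, Relation.ReflTransGen T r v) {v : V} (h : contW T r v) :
    segW T r v = segW T r (par T v) + 1 := by
  have hdep : dep T v = dep T (par T v) + 1 := dep_succ hr hu hre (par_spec hu h.1)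
  have hmono := dep_mono hr hu hre (top_rtg hr hu hre (par T v))
  rw [segW, segW, top_step hr hu hre h, hdep]
  omega

lemma seg_pos_cont {v : V} (h : segW T r v ≠ 0) : contW T r v := by
  by_contra hc
  exact h (seg_fix hc)

lemma chain_eq (hr : ∀ u, ¬ T u r) (hu : ∀ v, v ≠ r → ∃! u, T u v)
    (hre : ∀ v, Relation.ReflTransGen T r v) :
    ∀ v, v = (ch T)^[segW T r v] (topW T r v) := by
  suffices H : ∀ m (v : V), dep T v ≤ m → v = (ch T)^[segW T r v] (topW T r v) by
    intro v; exact H (dep T v) v le_rfl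
  intro m
  induction m with
  | zero =>
    intro v hv
    have h : ¬ contW T r v := fun h => dep_pos_of_contW hr hu hre h (by omega)
    rw [seg_fix h, top_fix h]
    rfl
  | succ m ih =>
    intro v hv
    by_cases h : contW T r v
    · have hp : dep T (par T v) ≤ m := by
        have := dep_succ hr hu hre (par_spec hu h.1); omega
      have hch : ch T (par T v) = v := ch_eq h.2 (par_spec hu h.1)
      rw [seg_step hr hu hre h, top_step hr hu hre h,
        Function.iterate_succ_apply']
      rw [← ih _ hp, hch]
    · rw [seg_fix h, top_fix h]
      rfl

/-- the tops of the maximal out-degree-≤1 chains -/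
noncomputable def topsF (T : V → V → Prop) (r : V) : Finset V :=
  Finset.univ.filter (fun v => (fout T v).card ≤ 1 ∧ ¬ contW T r v)

lemma top_mem_tops (hr : ∀ u, ¬ T u r) (hu : ∀ v, v ≠ r → ∃! u, T u v)
    (hre : ∀ v, Relation.ReflTransGen T r v) :
    ∀ v, (fout T v).card ≤ 1 → topW T r v ∈ topsF T r := by
  suffices H : ∀ m (v : V), dep T v ≤ m → (fout T v).card ≤ 1 → topW T r v ∈ topsF T r by
    intro v; exact H (dep T v) v le_rfl
  intro m
  induction m with
  | zero =>
    intro v hv hW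
    have h : ¬ contW T r v := fun h => dep_pos_of_contW hr hu hre h (by omega)
    rw [top_fix h]
    simp only [topsF, Finset.mem_filter, Finset.mem_univ, true_and]
    exact ⟨hW, h⟩
  | succ m ih =>
    intro v hv hW
    by_cases h : contW T r v
    · rw [top_step hr hu hre h]
      exact ih _ (by have := dep_succ hr hu hre (par_spec hu h.1); omega) h.2
    · rw [top_fix h]
      simp only [topsF, Finset.mem_filter, Finset.mem_univ, true_and]
      exact ⟨hW, h⟩

lemma topsF_card (hr : ∀ u, ¬ T u r) (hu : ∀ v, v ≠ r → ∃! u, T u v)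
    (hre : ∀ v, Relation.ReflTransGen T r v) :
    (topsF T r).card + 1 ≤ 2 * leavesCount T := by
  have hsub : (topsF T r).erase r ⊆ (B2 T).biUnion (fout T) := by
    intro v hv
    simp only [Finset.mem_erase, topsF, Finset.mem_filter, Finset.mem_univ, true_and] at hv
    obtain ⟨hvr, -, hnc⟩ := hv
    have hpar : ¬ ((fout T (par T v)).card ≤ 1) := by
      by_contra hc
      exact hnc ⟨hvr, hc⟩
    simp only [Finset.mem_biUnion, B2, Finset.mem_filter, Finset.mem_univ, true_and]
    exact ⟨par T v, by omega, mem_fout.mpr (par_spec hu hvr)⟩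
  have h1 : ((topsF T r).erase r).card ≤ ∑ v ∈ B2 T, (fout T v).card :=
    le_trans (Finset.card_le_card hsub) (Finset.card_biUnion_le)
  have h2 := sum_B2_le hr hu hre
  have h3 : (topsF T r).card ≤ ((topsF T r).erase r).card + 1 := by
    by_cases hrt : r ∈ topsF T r
    · rw [Finset.card_erase_of_mem hrt]; omega
    · rw [Finset.erase_eq_of_notMem hrt]; omega
  omega

noncomputable def fibW (T : V → V → Prop) (r : V) (t : V) : Finset V :=
  Finset.univ.filter (fun v => (fout T v).card ≤ 1 ∧ topW T r v = t)

lemma fib_partition (hr : ∀ u, ¬ T u r) (hu : ∀ v, v ≠ r → ∃! u, T u v)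
    (hre : ∀ v, Relation.ReflTransGen T r v) :
    (Finset.univ.filter (fun v : V => (fout T v).card ≤ 1)).card
      = ∑ t ∈ topsF T r, (fibW T r t).card := by
  have hcover : Finset.univ.filter (fun v : V => (fout T v).card ≤ 1)
      = (topsF T r).biUnion (fibW T r) := by
    ext v
    simp only [Finset.mem_filter, Finset.mem_univ, true_and, Finset.mem_biUnion, fibW]
    constructor
    · intro hv
      exact ⟨topW T r v, top_mem_tops hr hu hre v hv, hv, rfl⟩
    · rintro ⟨t, -, hv, -⟩
      exact hv
  rw [hcover]
  apply Finset.card_biUnion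
  intro x _ y _ hxy
  rw [Function.onFun, Finset.disjoint_left]
  intro z hzx hzy
  simp only [fibW, Finset.mem_filter, Finset.mem_univ, true_and] at hzx hzy
  exact hxy (hzx.2 ▸ hzy.2)

end TopFib


section Exchange

variable {V : Type*} [Fintype V] [Nonempty V] {A : V → V → Prop} {r : V} {T : V → V → Prop}

lemma exchange (hA : ∀ a b, T a b → A a b)
    (hr : ∀ u, ¬ T u r) (hu : ∀ v, v ≠ r → ∃! u, T u v)
    (hre : ∀ v, Relation.ReflTransGen T r v)
    (W : Set V) (hWne : W.Nonempty) (hWr : r ∉ W) (u : V)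
    (huA : ∀ w ∈ W, A u w) (husub : ∀ w ∈ W, ¬ ReflTransGen T w u) :
    IsOutBranching A r (fun a b => (T a b ∧ b ∉ W) ∨ (b ∈ W ∧ a = u)) ∧
    {x | ∀ y, ¬ ((T x y ∧ y ∉ W) ∨ (y ∈ W ∧ x = u))}
      = {x | ∀ y, T x y → y ∈ W} \ {u} := by
  have hvr0 : ∀ v : V, dep T v = 0 → v = r := by
    intro v hv
    by_contra hvr
    have := dep_succ hr hu hre (par_spec hu hvr)
    omega
  have p1 : ∀ m (v : V), dep T v ≤ m → (∀ w ∈ W, ¬ ReflTransGen T w v) →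
      ReflTransGen (fun a b => (T a b ∧ b ∉ W) ∨ (b ∈ W ∧ a = u)) r v := by
    intro m
    induction m with
    | zero =>
      intro v hv _
      rw [hvr0 v (by omega)]
    | succ m ih =>
      intro v hv hav
      by_cases hvr : v = r
      · rw [hvr]
      · have hpv : T (par T v) v := par_spec hu hvr
        have hpav : ∀ w ∈ W, ¬ ReflTransGen T w (par T v) := by
          intro w hw hc
          exact hav w hw (hc.tail hpv)
        have hdep : dep T (par T v) ≤ m := by
          have := dep_succ hr hu hre hpv; omega
        have hvnW : v ∉ W := fun hvW => hav v hvW ReflTransGen.refl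
        exact (ih _ hdep hpav).tail (Or.inl ⟨hpv, hvnW⟩)
  have p3 : ∀ m (v : V), dep T v ≤ m →
      ReflTransGen (fun a b => (T a b ∧ b ∉ W) ∨ (b ∈ W ∧ a = u)) r v := by
    intro m
    induction m with
    | zero =>
      intro v hv
      rw [hvr0 v (by omega)]
    | succ m ih =>
      intro v hv
      by_cases hvr : v = r
      · rw [hvr]
      · by_cases hvW : v ∈ W
        · exact (p1 (dep T u) u le_rfl husub).tail (Or.inr ⟨hvW, rfl⟩)
        · have hpv : T (par T v) v := par_spec hu hvr
          have hdep : dep T (par T v) ≤ m := by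
            have := dep_succ hr hu hre hpv; omega
          exact (ih _ hdep).tail (Or.inl ⟨hpv, hvW⟩)
  constructor
  · refine ⟨?_, ?_, ?_, ?_⟩
    · rintro a b (⟨h1, -⟩ | ⟨hbW, rfl⟩)
      · exact hA a b h1
      · exact huA b hbW
    · rintro u' (⟨h1, -⟩ | ⟨hrW, -⟩)
      · exact hr u' h1
      · exact hWr hrW
    · intro v hvr
      by_cases hvW : v ∈ W
      · refine ⟨u, Or.inr ⟨hvW, rfl⟩, ?_⟩
        rintro y (⟨-, hnW⟩ | ⟨-, rfl⟩)
        · exact absurd hvW hnW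
        · rfl
      · refine ⟨par T v, Or.inl ⟨par_spec hu hvr, hvW⟩, ?_⟩
        rintro y (⟨hy, -⟩ | ⟨hyW, -⟩)
        · exact (par_eq hr hu hy).symm
        · exact absurd hyW hvW
    · intro v
      exact p3 (dep T v) v le_rfl
  · ext x
    simp only [Set.mem_setOf_eq, Set.mem_diff, Set.mem_singleton_iff]
    constructor
    · intro hx
      refine ⟨fun y hxy => ?_, fun hxu => ?_⟩
      · by_contra hyW
        exact hx y (Or.inl ⟨hxy, hyW⟩)
      · obtain ⟨w, hw⟩ := hWne
        exact hx w (Or.inr ⟨hw, hxu⟩)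
    · rintro ⟨hx1, hx2⟩ y (⟨hxy, hyW⟩ | ⟨hyW, rfl⟩)
      · exact hyW (hx1 y hxy)
      · exact hx2 rfl

lemma single_exchange_leaf (hA : ∀ a b, T a b → A a b)
    (hr : ∀ u, ¬ T u r) (hu : ∀ v, v ≠ r → ∃! u, T u v)
    (hre : ∀ v, Relation.ReflTransGen T r v)
    (hmax : ∀ (T' : V → V → Prop), IsOutBranching A r T' → leavesCount T' ≤ leavesCount T)
    {v x : V} (hvr : v ≠ r) (hpar1 : (fout T (par T v)).card ≤ 1)
    (hxA : A x v) (hxpar : x ≠ par T v) (hxsub : ¬ ReflTransGen T v x) :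
    ∀ y, ¬ T x y := by
  by_contra hc
  push_neg at hc
  obtain ⟨y, hy⟩ := hc
  obtain ⟨hOB, hLv⟩ := exchange hA hr hu hre {v} ⟨v, rfl⟩
    (by simp only [Set.mem_singleton_iff]; exact fun h => hvr h.symm) x
    (by rintro w rfl; exact hxA) (by rintro w rfl; exact hxsub)
  have hcount := hmax _ hOB
  rw [leavesCount, hLv] at hcount
  have hsub2 : insert (par T v) {z : V | ∀ y, ¬ T z y}
      ⊆ {z | ∀ y, T z y → y ∈ ({v} : Set V)} \ {x} := by
    rintro z (rfl | hz)
    · refine ⟨fun y hy' => ?_, fun hzx => hxpar hzx.symm⟩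
      have := Finset.card_le_one.mp hpar1 y (mem_fout.mpr hy') v (mem_fout.mpr (par_spec hu hvr))
      simp [this]
    · refine ⟨fun y hy' => absurd hy' (hz y), fun hzx => ?_⟩
      subst hzx
      exact hz y hy
  have hpnl : par T v ∉ {z : V | ∀ y, ¬ T z y} := by
    intro hp
    exact hp v (par_spec hu hvr)
  have h1 : leavesCount T + 1 ≤ ({z | ∀ y, T z y → y ∈ ({v} : Set V)} \ {x}).ncard := by
    have := Set.ncard_le_ncard hsub2 (Set.toFinite _)
    rw [Set.ncard_insert_of_notMem hpnl (Set.toFinite _)] at this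
    rw [leavesCount]
    omega
  omega

lemma double_exchange (hA : ∀ a b, T a b → A a b)
    (hr : ∀ u, ¬ T u r) (hu : ∀ v, v ≠ r → ∃! u, T u v)
    (hre : ∀ v, Relation.ReflTransGen T r v)
    (hmax : ∀ (T' : V → V → Prop), IsOutBranching A r T' → leavesCount T' ≤ leavesCount T)
    {v₁ v₂ x : V} (hne : v₁ ≠ v₂) (h1r : v₁ ≠ r) (h2r : v₂ ≠ r)
    (hp1 : (fout T (par T v₁)).card ≤ 1) (hp2 : (fout T (par T v₂)).card ≤ 1)
    (hxA1 : A x v₁) (hxA2 : A x v₂) (hs1 : ¬ ReflTransGen T v₁ x) (hs2 : ¬ ReflTransGen T v₂ x)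
    (hxleaf : ∀ y, ¬ T x y) : False := by
  obtain ⟨hOB, hLv⟩ := exchange hA hr hu hre {v₁, v₂} ⟨v₁, Or.inl rfl⟩
    (by rintro (rfl | rfl) <;> [exact h1r rfl; exact h2r rfl]) x
    (by rintro w (rfl | rfl) <;> [exact hxA1; exact hxA2])
    (by rintro w (rfl | rfl) <;> [exact hs1; exact hs2])
  have hcount := hmax _ hOB
  rw [leavesCount, hLv] at hcount
  have hxLv : x ∈ {z : V | ∀ y, ¬ T z y} := hxleaf
  have hpar12 : par T v₁ ≠ par T v₂ := by
    intro hpp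
    apply hne
    exact Finset.card_le_one.mp hp1 v₁ (mem_fout.mpr (par_spec hu h1r)) v₂
      (mem_fout.mpr (by rw [hpp]; exact par_spec hu h2r))
  have hp1x : par T v₁ ≠ x := by
    rintro rfl
    exact hxleaf v₁ (par_spec hu h1r)
  have hp2x : par T v₂ ≠ x := by
    rintro rfl
    exact hxleaf v₂ (par_spec hu h2r)
  have hp1nl : par T v₁ ∉ insert (par T v₂) ({z : V | ∀ y, ¬ T z y} \ {x}) := by
    rintro (h | ⟨h, -⟩)
    · exact hpar12 h
    · exact h v₁ (par_spec hu h1r)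
  have hp2nl : par T v₂ ∉ {z : V | ∀ y, ¬ T z y} \ {x} := by
    rintro ⟨h, -⟩
    exact h v₂ (par_spec hu h2r)
  have hsub2 : insert (par T v₁) (insert (par T v₂) ({z : V | ∀ y, ¬ T z y} \ {x}))
      ⊆ {z | ∀ y, T z y → y ∈ ({v₁, v₂} : Set V)} \ {x} := by
    rintro z (rfl | rfl | ⟨hz, hzx⟩)
    · refine ⟨fun y hy' => ?_, hp1x⟩
      have := Finset.card_le_one.mp hp1 y (mem_fout.mpr hy') v₁ (mem_fout.mpr (par_spec hu h1r))
      exact Or.inl this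
    · refine ⟨fun y hy' => ?_, hp2x⟩
      have := Finset.card_le_one.mp hp2 y (mem_fout.mpr hy') v₂ (mem_fout.mpr (par_spec hu h2r))
      exact Or.inr this
    · exact ⟨fun y hy' => absurd hy' (hz y), hzx⟩
  have hl1 : 1 ≤ leavesCount T := leaves_pos hr hu hre
  have hd : ({z : V | ∀ y, ¬ T z y} \ {x}).ncard = leavesCount T - 1 := by
    rw [leavesCount]
    exact Set.ncard_diff_singleton_of_mem hxLv
  have h1 := Set.ncard_le_ncard hsub2 (Set.toFinite _)
  rw [Set.ncard_insert_of_notMem hp1nl (Set.toFinite _),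
    Set.ncard_insert_of_notMem hp2nl (Set.toFinite _), hd] at h1
  omega

/-- a second in-neighbour, different from the tree parent -/
noncomputable def u2 (A T : V → V → Prop) (v : V) : V :=
  Classical.epsilon (fun w => A w v ∧ w ≠ par T v)

lemma u2_spec (hindeg : ∀ v : V, 2 ≤ {u : V | A u v}.ncard) (v : V) :
    A (u2 A T v) v ∧ u2 A T v ≠ par T v := by
  apply Classical.epsilon_spec (p := fun w => A w v ∧ w ≠ par T v)
  have h2 : 1 < {u : V | A u v}.ncard := by have := hindeg v; omega
  obtain ⟨b, hb, hbne⟩ := Set.exists_ne_of_one_lt_ncard h2 (par T v)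
  exact ⟨b, hb, hbne⟩

/-- "bad" vertices: whose second in-neighbour is not in their subtree -/
def BADV (A T : V → V → Prop) (r : V) : Set V :=
  {v | v ≠ r ∧ (fout T (par T v)).card ≤ 1 ∧ ¬ ReflTransGen T v (u2 A T v)}

lemma BADV_card (hA : ∀ a b, T a b → A a b)
    (hr : ∀ u, ¬ T u r) (hu : ∀ v, v ≠ r → ∃! u, T u v)
    (hre : ∀ v, Relation.ReflTransGen T r v)
    (hindeg : ∀ v : V, 2 ≤ {u : V | A u v}.ncard)
    (hmax : ∀ (T' : V → V → Prop), IsOutBranching A r T' → leavesCount T' ≤ leavesCount T) :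
    (BADV A T r).ncard ≤ leavesCount T := by
  have hleaf : ∀ v ∈ BADV A T r, ∀ y, ¬ T (u2 A T v) y := by
    intro v hv
    obtain ⟨hvr, hp1, hsub⟩ := hv
    exact single_exchange_leaf hA hr hu hre hmax hvr hp1 (u2_spec hindeg v).1
      (u2_spec hindeg v).2 hsub
  have hinj : Set.InjOn (u2 A T) (BADV A T r) := by
    intro v₁ h1 v₂ h2 heq
    by_contra hne
    obtain ⟨h1r, hp1, hs1⟩ := h1
    obtain ⟨h2r, hp2, hs2⟩ := h2
    exact double_exchange hA hr hu hre hmax hne h1r h2r hp1 hp2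
      (heq ▸ (u2_spec hindeg v₁).1) ((u2_spec hindeg v₂).1) (heq ▸ hs1) hs2
      (heq ▸ hleaf v₁ ⟨h1r, hp1, hs1⟩)
  calc (BADV A T r).ncard = (u2 A T '' BADV A T r).ncard :=
        (Set.ncard_image_of_injOn hinj).symm
    _ ≤ {z : V | ∀ y, ¬ T z y}.ncard := by
        apply Set.ncard_le_ncard _ (Set.toFinite _)
        rintro z ⟨v, hv, rfl⟩
        exact hleaf v hv
    _ = leavesCount T := rfl

end Exchange

section BuildNT

variable {V : Type*} [Fintype V] [Nonempty V] {A : V → V → Prop} {r : V} {T : V → V → Prop}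

lemma dep_le_card (x : V) : dep T x ≤ Fintype.card V := by
  rw [dep]
  calc {u | TransGen T u x}.ncard ≤ (Set.univ : Set V).ncard :=
        Set.ncard_le_ncard (Set.subset_univ _) (Set.toFinite _)
    _ = Fintype.card V := by rw [Set.ncard_univ]; exact Nat.card_eq_fintype_card

lemma buildNT (hA : ∀ a b, T a b → A a b)
    (hr : ∀ u, ¬ T u r) (hu : ∀ v, v ≠ r → ∃! u, T u v)
    (hre : ∀ v, Relation.ReflTransGen T r v)
    (q : ℕ) (hq : 2 ≤ q) (hv : ℕ → V) (g : ℕ → V)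
    (hvr : ∀ s, s < q → hv s ≠ r)
    (hmono : ∀ s s', s ≤ s' → s' < q → ReflTransGen T (hv s) (hv s'))
    (hinj : ∀ s s', s < q → s' < q → hv s = hv s' → s = s')
    (hgA : ∀ s, s + 1 < q → A (g s) (hv s))
    (hgsub : ∀ s, s + 1 < q → ReflTransGen T (hv (s+1)) (g s))
    (C : Set V)
    (hC : ∀ c ∈ C, ReflTransGen T (hv 0) c ∧ (∀ y, T c y → ∃ s, s < q ∧ y = hv s) ∧
      (∀ s, s + 1 < q → g s ≠ c)) :
    ∃ (S₀ : Set V) (ρ : V) (NT : V → V → Prop),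
      IsOutTree A S₀ ρ NT ∧ C.ncard ≤ treeLeaves S₀ NT := by
  set S₀ : Set V := {x | ReflTransGen T (hv 0) x} with hS₀
  set Hs : Set V := {w | ∃ s, s < q ∧ w = hv s} with hHs
  set ρ : V := hv (q-1) with hρ
  set NT : V → V → Prop := fun a b => a ∈ S₀ ∧ b ∈ S₀ ∧ b ≠ ρ ∧
      ((T a b ∧ b ∉ Hs) ∨ (∃ s, s + 1 < q ∧ b = hv s ∧ a = g s)) with hNT
  have hq1 : q - 1 < q := by omega
  have F0 : ∀ s, s < q → hv s ∈ S₀ := fun s hs => hmono 0 s (by omega) hs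
  have Fρ : ρ ∈ Hs := ⟨q - 1, hq1, rfl⟩
  have F1 : r ∉ S₀ := by
    intro hrS
    rcases Relation.ReflTransGen.cases_tail hrS with h | ⟨c, -, hc⟩
    · exact hvr 0 (by omega) h.symm
    · exact hr c hc
  have F2 : ∀ s, s + 1 < q → g s ∈ S₀ := fun s hs =>
    (hmono 0 (s+1) (by omega) hs).trans (hgsub s hs)
  have Fne : ∀ x ∈ S₀, x ≠ r := fun x hx hxr => F1 (hxr ▸ hx)
  have F3 : ∀ x ∈ S₀, x ≠ hv 0 → par T x ∈ S₀ ∧ T (par T x) x := by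
    intro x hx hx0
    exact ⟨rtg_par hr hu hx (fun h => hx0 h.symm), par_spec hu (Fne x hx)⟩
  set φ : V → ℕ := fun x => Nat.findGreatest (fun s => ReflTransGen T (hv s) x) (q - 1) with hφ
  have Fφ1 : ∀ x ∈ S₀, ReflTransGen T (hv (φ x)) x := by
    intro x hx
    have hx' : ReflTransGen T (hv 0) x := hx
    exact Nat.findGreatest_spec (P := fun s => ReflTransGen T (hv s) x) (Nat.zero_le _) hx'
  have Fφ2 : ∀ x, φ x ≤ q - 1 := fun x => Nat.findGreatest_le _
  have Fφ3 : ∀ x s, s ≤ q - 1 → ReflTransGen T (hv s) x → s ≤ φ x := by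
    intro x s hs hsx
    exact Nat.le_findGreatest hs hsx
  have Fφ4 : ∀ s, s < q → φ (hv s) = s := by
    intro s hs
    have h1 : s ≤ φ (hv s) := Fφ3 _ s (by omega) ReflTransGen.refl
    have h2 : φ (hv s) ≤ s := by
      by_contra hgt
      push_neg at hgt
      have ht : ReflTransGen T (hv (φ (hv s))) (hv s) := Fφ1 _ (F0 s hs)
      have hts : ReflTransGen T (hv s) (hv (φ (hv s))) :=
        hmono s (φ (hv s)) (by omega) (by have := Fφ2 (hv s); omega)
      have := rtg_antisymm hr hu hre ht hts
      have := hinj (φ (hv s)) s (by have := Fφ2 (hv s); omega) hs this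
      omega
    omega
  have Fφ5 : ∀ x ∈ S₀, x ∉ Hs → φ (par T x) = φ x := by
    intro x hx hxH
    have hx0 : x ≠ hv 0 := fun h => hxH ⟨0, by omega, h⟩
    obtain ⟨hpS, hpT⟩ := F3 x hx hx0
    have h1 : φ x ≤ φ (par T x) := by
      apply Fφ3 _ _ (Fφ2 x)
      apply rtg_par hr hu (Fφ1 x hx)
      intro h
      exact hxH ⟨φ x, by have := Fφ2 x; omega, h.symm⟩
    have h2 : φ (par T x) ≤ φ x := by
      apply Fφ3 _ _ (Fφ2 (par T x))
      exact (Fφ1 _ hpS).tail hpT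
    omega
  set Cc : ℕ := Fintype.card V with hCc
  set M : V → ℕ := fun x => (q - 1 - φ x) * (Cc + 1) + dep T x with hM
  have Hreach : ∀ m (x : V), x ∈ S₀ → M x ≤ m → ReflTransGen NT ρ x := by
    intro m
    induction m with
    | zero =>
      intro x hx hMx
      have hd0 : dep T x = 0 := by
        have : M x = (q - 1 - φ x) * (Cc + 1) + dep T x := rfl
        omega
      exfalso
      have hxr : x ≠ r := Fne x hx
      have := dep_succ hr hu hre (par_spec hu hxr)
      omega
    | succ m ih =>
      intro x hx hMx
      by_cases hxρ : x = ρ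
      · rw [hxρ]
      by_cases hxH : x ∈ Hs
      · obtain ⟨s, hs, rfl⟩ := hxH
        have hsq : s + 1 < q := by
          rcases Nat.lt_or_ge (s+1) q with h | h
          · exact h
          · exfalso; apply hxρ; rw [hρ]; congr 1; omega
        have harc : NT (g s) (hv s) := by
          refine ⟨F2 s hsq, F0 s hs, hxρ, Or.inr ⟨s, hsq, rfl, rfl⟩⟩
        have hφg : s + 1 ≤ φ (g s) := Fφ3 _ _ (by omega) (hgsub s hsq)
        have hφx : φ (hv s) = s := Fφ4 s hs
        have hMlt : M (g s) ≤ m := by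
          have hdg : dep T (g s) ≤ Cc := dep_le_card _
          have e1 : M (g s) = (q - 1 - φ (g s)) * (Cc + 1) + dep T (g s) := rfl
          have e2 : M (hv s) = (q - 1 - φ (hv s)) * (Cc + 1) + dep T (hv s) := rfl
          have h3 : q - 1 - φ (g s) + 1 ≤ q - 1 - φ (hv s) := by omega
          have h4 : (q - 1 - φ (g s)) * (Cc + 1) + (Cc + 1) ≤ (q - 1 - φ (hv s)) * (Cc + 1) := by
            calc (q - 1 - φ (g s)) * (Cc + 1) + (Cc + 1)
                = (q - 1 - φ (g s) + 1) * (Cc + 1) := by ring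
              _ ≤ (q - 1 - φ (hv s)) * (Cc + 1) := Nat.mul_le_mul_right _ h3
          omega
        exact (ih (g s) (F2 s hsq) hMlt).tail harc
      · have hx0 : x ≠ hv 0 := fun h => hxH ⟨0, by omega, h⟩
        obtain ⟨hpS, hpT⟩ := F3 x hx hx0
        have harc : NT (par T x) x := ⟨hpS, hx, hxρ, Or.inl ⟨hpT, hxH⟩⟩
        have hφ5 := Fφ5 x hx hxH
        have hMlt : M (par T x) ≤ m := by
          have e1 : M (par T x) = (q - 1 - φ (par T x)) * (Cc + 1) + dep T (par T x) := rfl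
          have e2 : M x = (q - 1 - φ x) * (Cc + 1) + dep T x := rfl
          have hd := dep_succ hr hu hre hpT
          rw [hφ5] at e1
          omega
        exact (ih _ hpS hMlt).tail harc
  refine ⟨S₀, ρ, NT, ⟨F0 _ hq1, ?_, ?_, ?_, ?_⟩, ?_⟩
  · rintro a b ⟨haS, hbS, -, (⟨hT, -⟩ | ⟨s, hs, rfl, rfl⟩)⟩
    · exact ⟨hA a b hT, haS, hbS⟩
    · exact ⟨hgA s hs, haS, hbS⟩
  · rintro a ⟨-, -, hne, -⟩
    exact hne rfl
  · intro v hvS hvρ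
    by_cases hvH : v ∈ Hs
    · obtain ⟨s, hs, rfl⟩ := hvH
      have hsq : s + 1 < q := by
        rcases Nat.lt_or_ge (s+1) q with h | h
        · exact h
        · exfalso; apply hvρ; rw [hρ]; congr 1; omega
      refine ⟨g s, ⟨F2 s hsq, hvS, hvρ, Or.inr ⟨s, hsq, rfl, rfl⟩⟩, ?_⟩
      rintro y ⟨-, -, -, (⟨-, hnH⟩ | ⟨s', hs', heq, rfl⟩)⟩
      · exact absurd ⟨s, hs, rfl⟩ hnH
      · rw [hinj s s' hs (by omega) heq]
    · have hx0 : v ≠ hv 0 := fun h => hvH ⟨0, by omega, h⟩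
      obtain ⟨hpS, hpT⟩ := F3 v hvS hx0
      refine ⟨par T v, ⟨hpS, hvS, hvρ, Or.inl ⟨hpT, hvH⟩⟩, ?_⟩
      rintro y ⟨-, -, -, (⟨hTy, -⟩ | ⟨s', hs', rfl, rfl⟩)⟩
      · exact (par_eq hr hu hTy).symm
      · exact absurd ⟨s', by omega, rfl⟩ hvH
  · intro v hvS
    exact Hreach (M v) v hvS le_rfl
  · apply Set.ncard_le_ncard _ (Set.toFinite _)
    intro c hc
    obtain ⟨hc1, hc2, hc3⟩ := hC c hc
    refine ⟨hc1, ?_⟩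
    rintro y ⟨-, -, -, (⟨hTy, hnH⟩ | ⟨s, hs, -, heq⟩)⟩
    · obtain ⟨s, hs, rfl⟩ := hc2 y hTy
      exact hnH ⟨s, hs, rfl⟩
    · exact hc3 s hs heq.symm

end BuildNT

section Orbits

variable {G : Finset ℕ} {d : ℕ → ℕ} {K : ℕ}

/-- the `d`-orbit of a position, ending at the first position outside `G` -/
noncomputable def orbSet (G : Finset ℕ) (d : ℕ → ℕ) (K : ℕ)
    (hd : ∀ i ∈ G, i < d i ∧ d i ≤ K) (i : ℕ) : Finset ℕ :=
  if h : i ∈ G then insert i (orbSet G d K hd (d i)) else {i}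
termination_by K + 1 - i
decreasing_by
  have := hd i h; omega

noncomputable def orbRoot (G : Finset ℕ) (d : ℕ → ℕ) (K : ℕ)
    (hd : ∀ i ∈ G, i < d i ∧ d i ≤ K) (i : ℕ) : ℕ :=
  if h : i ∈ G then orbRoot G d K hd (d i) else i
termination_by K + 1 - i
decreasing_by
  have := hd i h; omega

noncomputable def orbLen (G : Finset ℕ) (d : ℕ → ℕ) (K : ℕ)
    (hd : ∀ i ∈ G, i < d i ∧ d i ≤ K) (i : ℕ) : ℕ :=
  if h : i ∈ G then orbLen G d K hd (d i) + 1 else 0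
termination_by K + 1 - i
decreasing_by
  have := hd i h; omega

variable (hd : ∀ i ∈ G, i < d i ∧ d i ≤ K)

include hd

lemma orb_self (i : ℕ) : i ∈ orbSet G d K hd i := by
  by_cases h : i ∈ G
  · rw [orbSet, dif_pos h]; exact Finset.mem_insert_self _ _
  · rw [orbSet, dif_neg h]; exact Finset.mem_singleton_self _

/-- master induction for orbit facts -/
lemma orb_induct (P : ℕ → Prop)
    (step : ∀ i, (i ∈ G → P (d i)) → P i) : ∀ i, P i := by
  suffices H : ∀ n i, K + 1 - i ≤ n → P i by
    intro i; exact H (K + 1 - i) i le_rfl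
  intro n
  induction n with
  | zero =>
    intro i hi
    apply step
    intro hiG
    exfalso
    have := hd i hiG
    omega
  | succ n ih =>
    intro i hi
    apply step
    intro hiG
    apply ih
    have := hd i hiG
    omega

lemma orb_ge : ∀ i, ∀ a ∈ orbSet G d K hd i, i ≤ a := by
  apply orb_induct hd (P := fun i => ∀ a ∈ orbSet G d K hd i, i ≤ a)
  intro i ih a ha
  by_cases hiG : i ∈ G
  · rw [orbSet, dif_pos hiG] at ha
    rcases Finset.mem_insert.mp ha with rfl | ha
    · exact le_rfl
    · have h1 := ih hiG a ha
      have := hd i hiG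
      omega
  · rw [orbSet, dif_neg hiG] at ha
    rw [Finset.mem_singleton.mp ha]

lemma orb_closed : ∀ i, ∀ a ∈ orbSet G d K hd i, a ∈ G → d a ∈ orbSet G d K hd i := by
  apply orb_induct hd (P := fun i => ∀ a ∈ orbSet G d K hd i, a ∈ G → d a ∈ orbSet G d K hd i)
  intro i ih a ha haG
  by_cases hiG : i ∈ G
  · rw [orbSet, dif_pos hiG] at ha ⊢
    rcases Finset.mem_insert.mp ha with rfl | ha
    · exact Finset.mem_insert_of_mem (orb_self hd _)
    · exact Finset.mem_insert_of_mem (ih hiG a ha haG)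
  · rw [orbSet, dif_neg hiG] at ha
    rw [Finset.mem_singleton.mp ha] at haG
    exact absurd haG hiG

lemma orbRoot_notG : ∀ i, orbRoot G d K hd i ∉ G := by
  apply orb_induct hd (P := fun i => orbRoot G d K hd i ∉ G)
  intro i ih
  by_cases hiG : i ∈ G
  · rw [orbRoot, dif_pos hiG]; exact ih hiG
  · rw [orbRoot, dif_neg hiG]; exact hiG

lemma orbRoot_ge : ∀ i, i ≤ orbRoot G d K hd i := by
  apply orb_induct hd (P := fun i => i ≤ orbRoot G d K hd i)
  intro i ih
  by_cases hiG : i ∈ G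
  · rw [orbRoot, dif_pos hiG]
    have h1 := ih hiG
    have := hd i hiG
    omega
  · rw [orbRoot, dif_neg hiG]

lemma orbRoot_le : ∀ i, i ≤ K → orbRoot G d K hd i ≤ K := by
  apply orb_induct hd (P := fun i => i ≤ K → orbRoot G d K hd i ≤ K)
  intro i ih hi
  by_cases hiG : i ∈ G
  · rw [orbRoot, dif_pos hiG]; exact ih hiG (hd i hiG).2
  · rw [orbRoot, dif_neg hiG]; exact hi

lemma orbRoot_mem : ∀ i, orbRoot G d K hd i ∈ orbSet G d K hd i := by
  apply orb_induct hd (P := fun i => orbRoot G d K hd i ∈ orbSet G d K hd i)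
  intro i ih
  by_cases hiG : i ∈ G
  · rw [orbRoot, dif_pos hiG, orbSet, dif_pos hiG]
    exact Finset.mem_insert_of_mem (ih hiG)
  · rw [orbRoot, dif_neg hiG, orbSet, dif_neg hiG]
    exact Finset.mem_singleton_self _

lemma orb_le_root : ∀ i, ∀ a ∈ orbSet G d K hd i, a ≤ orbRoot G d K hd i := by
  apply orb_induct hd (P := fun i => ∀ a ∈ orbSet G d K hd i, a ≤ orbRoot G d K hd i)
  intro i ih a ha
  by_cases hiG : i ∈ G
  · rw [orbSet, dif_pos hiG] at ha
    rw [orbRoot, dif_pos hiG]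
    rcases Finset.mem_insert.mp ha with rfl | ha
    · calc a ≤ d a := le_of_lt (hd a hiG).1
        _ ≤ orbRoot G d K hd (d a) := orbRoot_ge hd _
    · exact ih hiG a ha
  · rw [orbSet, dif_neg hiG] at ha
    rw [orbRoot, dif_neg hiG, Finset.mem_singleton.mp ha]

lemma orb_memG : ∀ i, ∀ a ∈ orbSet G d K hd i, a ≠ orbRoot G d K hd i → a ∈ G := by
  apply orb_induct hd (P := fun i => ∀ a ∈ orbSet G d K hd i, a ≠ orbRoot G d K hd i → a ∈ G)
  intro i ih a ha hane
  by_cases hiG : i ∈ G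
  · rw [orbSet, dif_pos hiG] at ha
    rw [orbRoot, dif_pos hiG] at hane
    rcases Finset.mem_insert.mp ha with rfl | ha
    · exact hiG
    · exact ih hiG a ha hane
  · rw [orbSet, dif_neg hiG] at ha
    rw [orbRoot, dif_neg hiG] at hane
    exact absurd (Finset.mem_singleton.mp ha) hane

lemma orbRoot_eq_of_mem : ∀ i, ∀ a ∈ orbSet G d K hd i,
    orbRoot G d K hd a = orbRoot G d K hd i := by
  apply orb_induct hd (P := fun i => ∀ a ∈ orbSet G d K hd i,
    orbRoot G d K hd a = orbRoot G d K hd i)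
  intro i ih a ha
  by_cases hiG : i ∈ G
  · rw [orbSet, dif_pos hiG] at ha
    rcases Finset.mem_insert.mp ha with rfl | ha
    · rfl
    · rw [ih hiG a ha]
      conv_rhs => rw [orbRoot, dif_pos hiG]
  · rw [orbSet, dif_neg hiG] at ha
    rw [Finset.mem_singleton.mp ha]

lemma orb_card : ∀ i, (orbSet G d K hd i).card = orbLen G d K hd i + 1 := by
  apply orb_induct hd (P := fun i => (orbSet G d K hd i).card = orbLen G d K hd i + 1)
  intro i ih
  by_cases hiG : i ∈ G
  · rw [orbSet, dif_pos hiG, orbLen, dif_pos hiG]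
    rw [Finset.card_insert_of_notMem, ih hiG]
    intro hc
    have h1 := orb_ge hd _ i hc
    have := hd i hiG
    omega
  · rw [orbSet, dif_neg hiG, orbLen, dif_neg hiG]
    rfl

lemma orbLen_lt : ∀ i, ∀ a ∈ orbSet G d K hd i, a ≠ i →
    orbLen G d K hd a < orbLen G d K hd i := by
  apply orb_induct hd
    (P := fun i => ∀ a ∈ orbSet G d K hd i, a ≠ i → orbLen G d K hd a < orbLen G d K hd i)
  intro i ih a ha hne
  by_cases hiG : i ∈ G
  · rw [orbSet, dif_pos hiG] at ha
    conv_rhs => rw [orbLen, dif_pos hiG]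
    rcases Finset.mem_insert.mp ha with rfl | ha
    · exact absurd rfl hne
    · by_cases hadi : a = d i
      · subst hadi; omega
      · have := ih hiG a ha hadi
        omega
  · rw [orbSet, dif_neg hiG] at ha
    exact absurd (Finset.mem_singleton.mp ha) hne

lemma orbLen_inj : ∀ i, ∀ a ∈ orbSet G d K hd i, ∀ b ∈ orbSet G d K hd i,
    orbLen G d K hd a = orbLen G d K hd b → a = b := by
  apply orb_induct hd (P := fun i => ∀ a ∈ orbSet G d K hd i, ∀ b ∈ orbSet G d K hd i,
    orbLen G d K hd a = orbLen G d K hd b → a = b)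
  intro i ih a ha b hb heq
  by_cases hiG : i ∈ G
  · rw [orbSet, dif_pos hiG] at ha hb
    have hlen : orbLen G d K hd i = orbLen G d K hd (d i) + 1 := by
      rw [orbLen, dif_pos hiG]
    rcases Finset.mem_insert.mp ha with rfl | ha' <;> rcases Finset.mem_insert.mp hb with rfl | hb'
    · rfl
    · exfalso
      rw [hlen] at heq
      by_cases hbd : b = d a
      · rw [hbd] at heq
        omega
      · have h2 := orbLen_lt hd (d a) b hb' hbd
        omega
    · exfalso
      rw [hlen] at heq
      by_cases had : a = d b
      · rw [had] at heq
        omega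
      · have h2 := orbLen_lt hd (d b) a ha' had
        omega
    · exact ih hiG a ha' b hb' heq
  · rw [orbSet, dif_neg hiG] at ha hb
    rw [Finset.mem_singleton.mp ha, Finset.mem_singleton.mp hb]

lemma orb_consec : ∀ i, ∀ a, a ∈ orbSet G d K hd i → a + 1 ∈ orbSet G d K hd i →
    a ∈ G ∧ d a = a + 1 := by
  apply orb_induct hd (P := fun i => ∀ a, a ∈ orbSet G d K hd i → a + 1 ∈ orbSet G d K hd i →
    a ∈ G ∧ d a = a + 1)
  intro i ih a ha ha1
  by_cases hiG : i ∈ G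
  · rw [orbSet, dif_pos hiG] at ha ha1
    rcases Finset.mem_insert.mp ha with rfl | ha'
    · rcases Finset.mem_insert.mp ha1 with h1 | ha1'
      · omega
      · have h2 := orb_ge hd _ _ ha1'
        have h3 := (hd a hiG).1
        exact ⟨hiG, by omega⟩
    · rcases Finset.mem_insert.mp ha1 with h1 | ha1'
      · exfalso
        have h2 := orb_ge hd _ _ ha'
        have h3 := (hd i hiG).1
        omega
      · exact ih hiG a ha' ha1'
  · rw [orbSet, dif_neg hiG] at ha ha1
    have e1 := Finset.mem_singleton.mp ha
    have e2 := Finset.mem_singleton.mp ha1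
    exfalso
    omega

end Orbits

section Extract

variable {V : Type*} [Fintype V] [Nonempty V] {A : V → V → Prop} {r : V} {T : V → V → Prop}

lemma extract_bound (hA : ∀ a b, T a b → A a b)
    (hr : ∀ u, ¬ T u r) (hu : ∀ v, v ≠ r → ∃! u, T u v)
    (hre : ∀ v, Relation.ReflTransGen T r v)
    (hindeg : ∀ v : V, 2 ≤ {u : V | A u v}.ncard)
    (hcap : ∀ (S : Set V) (ρ : V) (NT : V → V → Prop), IsOutTree A S ρ NT →
      treeLeaves S NT ≤ leavesCount T)
    (p : ℕ → V) (K : ℕ)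
    (hpW : ∀ j, j ≤ K → (fout T (p j)).card ≤ 1)
    (hparc : ∀ j, j < K → T (p j) (p (j+1)))
    (preach : ∀ i j, i ≤ j → j ≤ K → ReflTransGen T (p i) (p j))
    (pinj : ∀ i j, i ≤ K → j ≤ K → p i = p j → i = j)
    (G : Finset ℕ) (d : ℕ → ℕ)
    (hd1 : ∀ i ∈ G, ReflTransGen T (p (d i)) (u2 A T (p i)))
    (hd2 : ∀ i ∈ G, i < d i)
    (hdK : ∀ i, d i ≤ K)
    (hd6 : ∀ i ∈ G, ∀ x, x ≤ K → u2 A T (p i) = p x → x = d i)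
    (S : Finset ℕ) (hSne : S.Nonempty)
    (hSsub : ∀ a ∈ S, 1 ≤ a ∧ a ≤ K)
    (hSclosed : ∀ a ∈ S, a ≠ S.max' hSne → a ∈ G ∧ d a ∈ S)
    (CC : Finset ℕ)
    (hCC : ∀ a ∈ CC, a ∈ S ∧ a ≠ S.min' hSne ∧ ∀ b ∈ S.erase (S.max' hSne), d b ≠ a - 1) :
    CC.card ≤ leavesCount T := by
  rcases Nat.lt_or_ge S.card 2 with hq2 | hq2
  · have hcard1 : S.card ≤ 1 := by omega
    have hemp : CC = ∅ := by
      rw [Finset.eq_empty_iff_forall_notMem]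
      intro a ha
      obtain ⟨h0, h1, -⟩ := hCC a ha
      exact h1 (Finset.card_le_one.mp hcard1 a h0 _ (Finset.min'_mem S hSne))
    rw [hemp]
    simp
  · set q := S.card with hq
    have hqrfl : S.card = q := rfl
    set e := S.orderIsoOfFin hqrfl with he
    set en : ℕ → ℕ := fun s => if h : s < q then (e ⟨s, h⟩ : ℕ) else 0 with hen
    have he1 : ∀ s, s < q → en s ∈ S := by
      intro s hs
      simp only [hen, dif_pos hs]
      exact (e ⟨s, hs⟩).2
    have hmonoEn : ∀ s s', s ≤ s' → s' < q → en s ≤ en s' := by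
      intro s s' hss hs'
      have hs : s < q := by omega
      simp only [hen, dif_pos hs, dif_pos hs']
      have h1 : (⟨s, hs⟩ : Fin q) ≤ ⟨s', hs'⟩ := hss
      have h2 := e.monotone h1
      exact h2
    have hstrictEn : ∀ s s', s < s' → s' < q → en s < en s' := by
      intro s s' hss hs'
      have hs : s < q := by omega
      simp only [hen, dif_pos hs, dif_pos hs']
      have h1 : (⟨s, hs⟩ : Fin q) < ⟨s', hs'⟩ := hss
      have h2 := e.strictMono h1
      exact h2
    have henInj : ∀ s s', s < q → s' < q → en s = en s' → s = s' := by
      intro s s' hs hs' heq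
      by_contra hne
      rcases Nat.lt_or_ge s s' with h | h
      · have := hstrictEn s s' h hs'; omega
      · have hlt : s' < s := by omega
        have := hstrictEn s' s hlt hs; omega
    have he5 : ∀ a ∈ S, ∃ s, s < q ∧ en s = a := by
      intro a ha
      obtain ⟨t, ht⟩ : ∃ t : Fin q, e t = ⟨a, ha⟩ := ⟨e.symm ⟨a, ha⟩, e.apply_symm_apply _⟩
      refine ⟨t.1, t.2, ?_⟩
      simp only [hen, dif_pos t.2, Fin.eta, ht]
    have he3min : en 0 = S.min' hSne := by
      apply le_antisymm
      · obtain ⟨s, hs, hes⟩ := he5 _ (S.min'_mem hSne)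
        calc en 0 ≤ en s := hmonoEn 0 s (Nat.zero_le _) hs
          _ = _ := hes
      · exact S.min'_le _ (he1 0 (by omega))
    have he3max : en (q-1) = S.max' hSne := by
      apply le_antisymm
      · exact S.le_max' _ (he1 (q-1) (by omega))
      · obtain ⟨s, hs, hes⟩ := he5 _ (S.max'_mem hSne)
        calc S.max' hSne = en s := hes.symm
          _ ≤ en (q-1) := hmonoEn s (q-1) (by omega) (by omega)
    have he4 : ∀ s, s + 1 < q → ∀ x ∈ S, en s < x → en (s+1) ≤ x := by
      intro s hs x hx hlt
      obtain ⟨t, ht, rfl⟩ := he5 x hx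
      have hst : s < t := by
        by_contra hc
        push_neg at hc
        have := hmonoEn t s hc (by omega)
        omega
      exact hmonoEn (s+1) t (by omega) ht
    have henne : ∀ s, s < q - 1 → en s ≠ S.max' hSne := by
      intro s hs heq
      rw [← he3max] at heq
      have := henInj s (q-1) (by omega) (by omega) heq
      omega
    have hbounds : ∀ s, s < q → 1 ≤ en s ∧ en s ≤ K := fun s hs => hSsub _ (he1 s hs)
    have harc' : ∀ s, s < q → T (p (en s - 1)) (p (en s)) := by
      intro s hs
      obtain ⟨h1, h2⟩ := hbounds s hs
      have := hparc (en s - 1) (by omega)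
      rwa [show en s - 1 + 1 = en s from by omega] at this
    have hKey := buildNT hA hr hu hre q hq2 (fun s => p (en s)) (fun s => u2 A T (p (en s)))
      (fun s hs => ne_root_of_arc hr (harc' s hs))
      (fun s s' hss hs' => preach (en s) (en s') (hmonoEn s s' hss hs') (hbounds s' hs').2)
      (fun s s' hs hs' heq => henInj s s' hs hs'
        (pinj _ _ (hbounds s hs).2 (hbounds s' hs').2 heq))
      (fun s _ => (u2_spec hindeg (p (en s))).1)
      (C := (↑(CC.image (fun a => p (a - 1))) : Set V))
      ?_ ?_
    · obtain ⟨S₀, ρ, NT, hOT, hCn⟩ := hKey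
      have hfin := hcap S₀ ρ NT hOT
      have hcC : ((↑(CC.image (fun a => p (a - 1))) : Set V)).ncard = CC.card := by
        rw [Set.ncard_coe_finset]
        apply Finset.card_image_of_injOn
        intro a ha b hb heq
        have h1 := hSsub a (hCC a ha).1
        have h2 := hSsub b (hCC b hb).1
        have := pinj (a-1) (b-1) (by omega) (by omega) heq
        omega
      rw [hcC] at hCn
      omega
    · -- hgsub
      intro s hs
      have haS : en s ∈ S := he1 s (by omega)
      obtain ⟨haG, hdaS⟩ := hSclosed _ haS (henne s (by omega))
      have h1 : en (s+1) ≤ d (en s) := he4 s hs _ hdaS (hd2 _ haG)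
      exact (preach (en (s+1)) (d (en s)) h1 (hdK _)).trans (hd1 _ haG)
    · -- candidate set conditions
      intro c hc
      obtain ⟨a, haf, rfl⟩ := Finset.mem_image.mp (Finset.mem_coe.mp hc)
      obtain ⟨haS, hamin, hnd⟩ := hCC a haf
      obtain ⟨ha1, haK⟩ := hSsub a haS
      have hminlt : S.min' hSne < a := by
        have h1 := S.min'_le a haS
        omega
      refine ⟨?_, ?_, ?_⟩
      · have hgoal : ReflTransGen T (p (en 0)) (p (a - 1)) := by
          rw [he3min]
          exact preach _ _ (by omega) (by omega)
        exact hgoal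
      · intro y hy
        have hy2 : y = p a := by
          have harcA : T (p (a-1)) (p a) := by
            have := hparc (a - 1) (by omega)
            rwa [show a - 1 + 1 = a from by omega] at this
          exact Finset.card_le_one.mp (hpW (a-1) (by omega)) y (mem_fout.mpr hy)
            (p a) (mem_fout.mpr harcA)
        obtain ⟨s, hs, hes⟩ := he5 a haS
        have hgoal : y = p (en s) := by rw [hy2, hes]
        exact ⟨s, hs, hgoal⟩
      · intro s hs heq
        have haS' : en s ∈ S := he1 s (by omega)
        obtain ⟨haG, -⟩ := hSclosed _ haS' (henne s (by omega))
        have := hd6 _ haG (a-1) (by omega) heq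
        exact hnd (en s) (Finset.mem_erase.mpr ⟨henne s (by omega), haS'⟩) this.symm

end Extract

section PathBound

variable {V : Type*} [Fintype V] [Nonempty V] {A : V → V → Prop} {r : V} {T : V → V → Prop}

lemma path_bound (hA : ∀ a b, T a b → A a b)
    (hr : ∀ u, ¬ T u r) (hu : ∀ v, v ≠ r → ∃! u, T u v)
    (hre : ∀ v, Relation.ReflTransGen T r v)
    (horient : ∀ u v : V, A u v → ¬ A v u)
    (hindeg : ∀ v : V, 2 ≤ {u : V | A u v}.ncard)
    (hcap : ∀ (S : Set V) (ρ : V) (NT : V → V → Prop), IsOutTree A S ρ NT →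
      treeLeaves S NT ≤ leavesCount T)
    (p : ℕ → V) (K : ℕ)
    (hpW : ∀ j, j ≤ K → (fout T (p j)).card ≤ 1)
    (hparc : ∀ j, j < K → T (p j) (p (j+1))) :
    K + 1 ≤ (((Finset.Icc 1 K).filter (fun i => p i ∈ BADV A T r)).card + 1)
      * ((leavesCount T + 1)^2 + 1) + 1 := by
  have preach : ∀ i j, i ≤ j → j ≤ K → ReflTransGen T (p i) (p j) := by
    have H : ∀ dd i, i + dd ≤ K → ReflTransGen T (p i) (p (i + dd)) := by
      intro dd
      induction dd with
      | zero => intro i _; exact ReflTransGen.refl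
      | succ n ih =>
        intro i hi
        exact (ih i (by omega)).tail (hparc (i + n) (by omega))
    intro i j hij hj
    have := H (j - i) i (by omega)
    rwa [show i + (j - i) = j from by omega] at this
  have ptg : ∀ i j, i < j → j ≤ K → TransGen T (p i) (p j) := by
    intro i j hij hj
    exact Relation.TransGen.head' (hparc i (by omega)) (preach (i+1) j (by omega) hj)
  have pinj : ∀ i j, i ≤ K → j ≤ K → p i = p j → i = j := by
    intro i j hi hj heq
    by_contra hne
    rcases Nat.lt_or_ge i j with h | h
    · have h2 := ptg i j h hj
      rw [heq] at h2
      exact noTG hr hu hre _ h2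
    · have hji : j < i := by omega
      have h2 := ptg j i hji hi
      rw [heq] at h2
      exact noTG hr hu hre _ h2
  have posle : ∀ i j, i ≤ K → j ≤ K → ReflTransGen T (p i) (p j) → i ≤ j := by
    intro i j hi hj hrtg
    by_contra hlt
    push_neg at hlt
    have h2 := ptg j i hlt hi
    rcases Relation.reflTransGen_iff_eq_or_transGen.mp hrtg with heq | htg
    · have := pinj j i hj hi heq
      omega
    · exact noTG hr hu hre _ (htg.trans h2)
  have hstep : ∀ i, i < K → ∀ x, ReflTransGen T (p i) x → x ≠ p i →
      ReflTransGen T (p (i+1)) x := by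
    intro i hi x hx hne
    rcases Relation.ReflTransGen.cases_head hx with h | ⟨c, hc, hcx⟩
    · exact absurd h.symm hne
    · have hcp : c = p (i+1) :=
        Finset.card_le_one.mp (hpW i (by omega)) c (mem_fout.mpr hc)
          (p (i+1)) (mem_fout.mpr (hparc i hi))
      rwa [hcp] at hcx
  set u2v : ℕ → V := fun i => u2 A T (p i) with hu2v
  set G : Finset ℕ := (Finset.Icc 1 (K-1)).filter (fun i => ReflTransGen T (p i) (u2v i))
    with hG
  set d : ℕ → ℕ := fun i => Nat.findGreatest (fun j => ReflTransGen T (p j) (u2v i)) K with hdd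
  have hGmem : ∀ i ∈ G, 1 ≤ i ∧ i ≤ K - 1 ∧ ReflTransGen T (p i) (u2v i) := by
    intro i hi
    rw [hG, Finset.mem_filter, Finset.mem_Icc] at hi
    exact ⟨hi.1.1, hi.1.2, hi.2⟩
  have hKge2 : ∀ i ∈ G, 2 ≤ K := by
    intro i hi
    have := hGmem i hi
    omega
  have hd1 : ∀ i ∈ G, ReflTransGen T (p (d i)) (u2v i) := by
    intro i hi
    obtain ⟨h1, h2, h3⟩ := hGmem i hi
    exact Nat.findGreatest_spec (P := fun j => ReflTransGen T (p j) (u2v i)) (m := i)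
      (by omega) h3
  have hdK : ∀ i, d i ≤ K := fun i => Nat.findGreatest_le K
  have hu2A : ∀ i, A (u2v i) (p i) := fun i => (u2_spec hindeg (p i)).1
  have hu2ne : ∀ j, u2v j ≠ p j := by
    intro j hequ
    have hAxx := hu2A j
    rw [hequ] at hAxx
    exact horient _ _ hAxx hAxx
  have hu2nesucc : ∀ i, i < K → u2v i ≠ p (i+1) := by
    intro i hi hequ
    have h1 := hu2A i
    rw [hequ] at h1
    exact horient _ _ (hA _ _ (hparc i hi)) h1
  have hd2 : ∀ i ∈ G, i < d i := by
    intro i hi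
    obtain ⟨h1, h2, h3⟩ := hGmem i hi
    have h4 : ReflTransGen T (p (i+1)) (u2v i) := hstep i (by omega) _ h3 (hu2ne i)
    have h5 : i + 1 ≤ d i := Nat.le_findGreatest (show i + 1 ≤ K from by omega) h4
    omega
  have hd : ∀ i ∈ G, i < d i ∧ d i ≤ K := fun i hi => ⟨hd2 i hi, hdK i⟩
  have hd3 : ∀ i ∈ G, i + 2 ≤ K → i + 2 ≤ d i := by
    intro i hi h2K
    obtain ⟨h1, h2, h3⟩ := hGmem i hi
    have h4 : ReflTransGen T (p (i+1)) (u2v i) := hstep i (by omega) _ h3 (hu2ne i)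
    have h5 : ReflTransGen T (p (i+2)) (u2v i) :=
      hstep (i+1) (by omega) _ h4 (hu2nesucc i (by omega))
    exact Nat.le_findGreatest (P := fun j => ReflTransGen T (p j) (u2v i)) h2K h5
  have hd6 : ∀ i ∈ G, ∀ x, x ≤ K → u2v i = p x → x = d i := by
    intro i hi x hx hequ
    have h1 : ReflTransGen T (p x) (u2v i) := by rw [hequ]
    have h2 : x ≤ d i := Nat.le_findGreatest (P := fun j => ReflTransGen T (p j) (u2v i)) hx h1
    have h3 : ReflTransGen T (p (d i)) (p x) := by rw [← hequ]; exact hd1 i hi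
    have h4 : d i ≤ x := posle _ _ (hdK i) hx h3
    omega
  -- chain cap : every orbit is short
  have hchain : ∀ b ∈ G, orbLen G d K hd b ≤ leavesCount T + 1 := by
    intro b hb
    have hSne : (orbSet G d K hd b).Nonempty := ⟨b, orb_self hd b⟩
    have hmax' : (orbSet G d K hd b).max' hSne = orbRoot G d K hd b := by
      apply le_antisymm
      · exact Finset.max'_le _ _ _ (orb_le_root hd b)
      · exact Finset.le_max' _ _ (orbRoot_mem hd b)
    have hSsub : ∀ a ∈ orbSet G d K hd b, 1 ≤ a ∧ a ≤ K := by
      intro a ha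
      have h1 := orb_ge hd b a ha
      have h2 := orb_le_root hd b a ha
      have h3 := orbRoot_le hd b (by have := hGmem b hb; omega)
      have h4 := hGmem b hb
      omega
    have hclosed : ∀ a ∈ orbSet G d K hd b, a ≠ (orbSet G d K hd b).max' hSne →
        a ∈ G ∧ d a ∈ orbSet G d K hd b := by
      intro a ha hne
      rw [hmax'] at hne
      have haG := orb_memG hd b a ha hne
      exact ⟨haG, orb_closed hd b a ha haG⟩
    have hCCsub : ((orbSet G d K hd b).erase ((orbSet G d K hd b).min' hSne)).erase K ⊆
        orbSet G d K hd b := fun a ha =>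
      Finset.mem_of_mem_erase (Finset.mem_of_mem_erase ha)
    have hext := extract_bound hA hr hu hre hindeg hcap p K hpW hparc preach pinj G d
      hd1 hd2 hdK hd6 (orbSet G d K hd b) hSne hSsub hclosed
      (((orbSet G d K hd b).erase ((orbSet G d K hd b).min' hSne)).erase K) ?_
    · have h1 : (orbSet G d K hd b).card ≤ leavesCount T + 2 := by
        have e1 : ∀ (s : Finset ℕ) (a : ℕ), s.card - 1 ≤ (s.erase a).card := by
          intro s a
          by_cases h : a ∈ s
          · rw [Finset.card_erase_of_mem h]
          · rw [Finset.erase_eq_of_notMem h]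
            omega
        have e2 := e1 (orbSet G d K hd b) ((orbSet G d K hd b).min' hSne)
        have e3 := e1 ((orbSet G d K hd b).erase ((orbSet G d K hd b).min' hSne)) K
        omega
      have h2 := orb_card hd b
      omega
    · intro a ha
      obtain ⟨haK, ha2⟩ := Finset.mem_erase.mp ha
      obtain ⟨hamin, haS⟩ := Finset.mem_erase.mp ha2
      refine ⟨haS, hamin, ?_⟩
      intro bb hbb hdbb
      obtain ⟨hbbne, hbbS⟩ := Finset.mem_erase.mp hbb
      rw [hmax'] at hbbne
      have hbbG := orb_memG hd b bb hbbS hbbne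
      have h5 : d bb ∈ orbSet G d K hd b := orb_closed hd b bb hbbS hbbG
      rw [hdbb] at h5
      have h6 : 1 ≤ a := (hSsub a haS).1
      have h7 : a - 1 + 1 ∈ orbSet G d K hd b := by
        rwa [show a - 1 + 1 = a from by omega]
      obtain ⟨hG1, hG2⟩ := orb_consec hd b (a-1) h5 h7
      have h8 := hGmem (a-1) hG1
      have h9 := hd3 (a-1) hG1
      have h10 : a ≤ K := (hSsub a haS).2
      omega
  set DL : Finset ℕ := G.filter (fun a => ∀ b ∈ G, d b ≠ a) with hDL
  set RT : Finset ℕ := G.image (fun i => orbRoot G d K hd i) with hRT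
  -- tree cap
  have htree : ∀ ρ ∈ RT, (DL.filter (fun a => orbRoot G d K hd a = ρ)).card ≤ leavesCount T + 1 := by
    intro ρ hρ
    obtain ⟨b, hbG, hbroot⟩ := Finset.mem_image.mp hρ
    subst hbroot
    set S : Finset ℕ :=
      insert (orbRoot G d K hd b) (G.filter (fun i => orbRoot G d K hd i = orbRoot G d K hd b))
      with hSdef
    have hSne : S.Nonempty := ⟨_, Finset.mem_insert_self _ _⟩
    have hmemS : ∀ a ∈ S, a = orbRoot G d K hd b ∨
        (a ∈ G ∧ orbRoot G d K hd a = orbRoot G d K hd b) := by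
      intro a ha
      rcases Finset.mem_insert.mp ha with h | h
      · exact Or.inl h
      · exact Or.inr (Finset.mem_filter.mp h)
    have hle : ∀ a ∈ S, a ≤ orbRoot G d K hd b := by
      intro a ha
      rcases hmemS a ha with rfl | ⟨haG, hroot⟩
      · exact le_rfl
      · calc a ≤ orbRoot G d K hd a := orbRoot_ge hd a
          _ = _ := hroot
    have hmax' : S.max' hSne = orbRoot G d K hd b :=
      le_antisymm (Finset.max'_le _ _ _ hle) (Finset.le_max' _ _ (Finset.mem_insert_self _ _))
    have hrootK : orbRoot G d K hd b ≤ K := orbRoot_le hd b (by have := hGmem b hbG; omega)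
    have hSsub : ∀ a ∈ S, 1 ≤ a ∧ a ≤ K := by
      intro a ha
      rcases hmemS a ha with rfl | ⟨haG, -⟩
      · have h1 := orbRoot_ge hd b
        have h2 := hGmem b hbG
        omega
      · have := hGmem a haG
        have := hle a ha
        omega
    have hclosed : ∀ a ∈ S, a ≠ S.max' hSne → a ∈ G ∧ d a ∈ S := by
      intro a ha hne
      rw [hmax'] at hne
      rcases hmemS a ha with rfl | ⟨haG, hroot⟩
      · exact absurd rfl hne
      refine ⟨haG, ?_⟩
      by_cases hdG : d a ∈ G
      · apply Finset.mem_insert_of_mem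
        rw [Finset.mem_filter]
        refine ⟨hdG, ?_⟩
        rw [← hroot]
        conv_rhs => rw [orbRoot, dif_pos haG]
      · apply Finset.mem_insert.mpr
        left
        rw [← hroot]
        conv_rhs => rw [orbRoot, dif_pos haG, orbRoot, dif_neg hdG]
    set img : Finset ℕ := (S.erase (S.max' hSne)).image d with himgdef
    have himgS : img ⊆ S := by
      intro x hx
      obtain ⟨bb, hbb, rfl⟩ := Finset.mem_image.mp hx
      obtain ⟨h1, h2⟩ := Finset.mem_erase.mp hbb
      exact (hclosed bb h2 h1).2
    have hext := extract_bound hA hr hu hre hindeg hcap p K hpW hparc preach pinj G d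
      hd1 hd2 hdK hd6 S hSne hSsub hclosed
      ((S.erase (S.min' hSne)) \ (img.image (fun x => x + 1))) ?_
    · -- counting
      have c2 : S.card - 1 - img.card ≤
          ((S.erase (S.min' hSne)) \ (img.image (fun x => x + 1))).card := by
        have e1 : (S.erase (S.min' hSne)).card = S.card - 1 :=
          Finset.card_erase_of_mem (S.min'_mem hSne)
        have e2 := Finset.le_card_sdiff (img.image (fun x => x + 1)) (S.erase (S.min' hSne))
        have e3 : (img.image (fun x => x + 1)).card ≤ img.card := Finset.card_image_le
        omega
      have hDLsub : DL.filter (fun a => orbRoot G d K hd a = orbRoot G d K hd b) ⊆ S \ img := by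
        intro a ha
        obtain ⟨haDL, haroot⟩ := Finset.mem_filter.mp ha
        obtain ⟨haG, hand⟩ := Finset.mem_filter.mp haDL
        rw [Finset.mem_sdiff]
        constructor
        · exact Finset.mem_insert_of_mem (Finset.mem_filter.mpr ⟨haG, haroot⟩)
        · intro hc
          obtain ⟨bb, hbb, hdbb⟩ := Finset.mem_image.mp hc
          obtain ⟨h1, h2⟩ := Finset.mem_erase.mp hbb
          exact hand bb (hclosed bb h2 h1).1 hdbb
      have c3 : (DL.filter (fun a => orbRoot G d K hd a = orbRoot G d K hd b)).card
          ≤ S.card - img.card := by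
        have := Finset.card_le_card hDLsub
        rwa [Finset.card_sdiff_of_subset himgS] at this
      have c4 : img.card ≤ S.card := Finset.card_le_card himgS
      omega
    · intro a ha
      obtain ⟨ha1, ha2⟩ := Finset.mem_sdiff.mp ha
      obtain ⟨hamin, haS⟩ := Finset.mem_erase.mp ha1
      refine ⟨haS, hamin, ?_⟩
      intro bb hbb hdbb
      apply ha2
      rw [Finset.mem_image]
      refine ⟨a - 1, ?_, ?_⟩
      · rw [himgdef, Finset.mem_image]
        exact ⟨bb, hbb, hdbb⟩
      · have : 1 ≤ a := (hSsub a haS).1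
        omega
  -- bad vertices along the path
  have hbadmem : ∀ i, 1 ≤ i → i ≤ K → ¬ ReflTransGen T (p i) (u2v i) → p i ∈ BADV A T r := by
    intro i h1 h2 h3
    have harc : T (p (i - 1)) (p i) := by
      have := hparc (i - 1) (by omega)
      rwa [show i - 1 + 1 = i from by omega] at this
    have hner : p i ≠ r := ne_root_of_arc hr harc
    have hpar : par T (p i) = p (i - 1) := par_eq hr hu harc
    refine ⟨hner, ?_, ?_⟩
    · rw [hpar]
      exact hpW (i - 1) (by omega)
    · exact h3
  set B : Finset ℕ := (Finset.Icc 1 K).filter (fun i => p i ∈ BADV A T r) with hB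
  have hRTsub : RT ⊆ B ∪ {K} := by
    intro ρ hρ
    obtain ⟨b, hbG, hbroot⟩ := Finset.mem_image.mp hρ
    have hρG : ρ ∉ G := hbroot ▸ orbRoot_notG hd b
    have hb1 := hGmem b hbG
    have hρ1 : 1 ≤ ρ := by
      have := orbRoot_ge hd b
      omega
    have hρK : ρ ≤ K := hbroot ▸ orbRoot_le hd b (by omega)
    rw [Finset.mem_union]
    by_cases hρKeq : ρ = K
    · right
      simp [hρKeq]
    · left
      rw [hB, Finset.mem_filter, Finset.mem_Icc]
      refine ⟨⟨hρ1, hρK⟩, ?_⟩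
      apply hbadmem ρ hρ1 hρK
      intro hgood
      apply hρG
      rw [hG, Finset.mem_filter, Finset.mem_Icc]
      exact ⟨⟨hρ1, by omega⟩, hgood⟩
  have hRTcard : RT.card ≤ B.card + 1 := by
    calc RT.card ≤ (B ∪ {K}).card := Finset.card_le_card hRTsub
      _ ≤ B.card + ({K} : Finset ℕ).card := Finset.card_union_le _ _
      _ = B.card + 1 := by rw [Finset.card_singleton]
  have hDLcard : DL.card ≤ RT.card * (leavesCount T + 1) := by
    have hDLun : DL ⊆ RT.biUnion (fun ρ => DL.filter (fun a => orbRoot G d K hd a = ρ)) := by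
      intro a ha
      rw [Finset.mem_biUnion]
      have haG : a ∈ G := (Finset.mem_filter.mp ha).1
      exact ⟨orbRoot G d K hd a, Finset.mem_image_of_mem _ haG,
        Finset.mem_filter.mpr ⟨ha, rfl⟩⟩
    calc DL.card ≤ _ := Finset.card_le_card hDLun
      _ ≤ ∑ ρ ∈ RT, (DL.filter (fun a => orbRoot G d K hd a = ρ)).card :=
        Finset.card_biUnion_le
      _ ≤ ∑ _ρ ∈ RT, (leavesCount T + 1) := Finset.sum_le_sum htree
      _ = RT.card * (leavesCount T + 1) := by rw [Finset.sum_const, smul_eq_mul]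
  have hwit : ∀ i ∈ G, ∃ gg, gg ∈ DL ∧ i ∈ orbSet G d K hd gg := by
    intro i hi
    induction i using Nat.strong_induction_on with
    | _ i ih =>
      by_cases hiDL : i ∈ DL
      · exact ⟨i, hiDL, orb_self hd i⟩
      · rw [hDL, Finset.mem_filter] at hiDL
        push_neg at hiDL
        obtain ⟨bb, hbbG, hdbb⟩ := hiDL hi
        have hlt : bb < i := by
          have h1 := hd2 bb hbbG
          omega
        obtain ⟨gg, hgg, hbborb⟩ := ih bb hlt hbbG
        refine ⟨gg, hgg, ?_⟩
        rw [← hdbb]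
        exact orb_closed hd gg bb hbborb hbbG
  have hGcard : G.card ≤ DL.card * (leavesCount T + 1) := by
    have hmap : ∀ i ∈ G,
        (if h : i ∈ G then ((Classical.choose (hwit i h), orbLen G d K hd i) : ℕ × ℕ)
          else (0,0)) ∈ DL ×ˢ Finset.Icc 1 (leavesCount T + 1) := by
      intro i hi
      rw [dif_pos hi, Finset.mem_product]
      obtain ⟨hgg1, hgg2⟩ := Classical.choose_spec (hwit i hi)
      constructor
      · exact hgg1
      · rw [Finset.mem_Icc]
        constructor
        · have hcard := orb_card hd i
          have hne2 : i ≠ orbRoot G d K hd i := by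
            intro heq
            have h9 := orbRoot_notG hd i
            rw [← heq] at h9
            exact h9 hi
          have h2 : ({i, orbRoot G d K hd i} : Finset ℕ) ⊆ orbSet G d K hd i := by
            intro x hx
            rcases Finset.mem_insert.mp hx with h9 | hx
            · rw [h9]
              exact orb_self hd i
            · rw [Finset.mem_singleton.mp hx]
              exact orbRoot_mem hd i
          have h3 : ({i, orbRoot G d K hd i} : Finset ℕ).card = 2 := by
            rw [Finset.card_insert_of_notMem (by simpa using hne2), Finset.card_singleton]
          have h4 := Finset.card_le_card h2
          omega
        · exact hchain i hi
    have hinj2 : Set.InjOn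
        (fun i => if h : i ∈ G then ((Classical.choose (hwit i h), orbLen G d K hd i) : ℕ × ℕ)
          else (0,0)) ↑G := by
      intro i hi j hj heq
      rw [Finset.mem_coe] at hi hj
      simp only [dif_pos hi, dif_pos hj, Prod.mk.injEq] at heq
      obtain ⟨heq1, heq2⟩ := heq
      obtain ⟨hgg1, hgg2⟩ := Classical.choose_spec (hwit i hi)
      obtain ⟨hgg1', hgg2'⟩ := Classical.choose_spec (hwit j hj)
      rw [heq1] at hgg2
      exact orbLen_inj hd _ i hgg2 j hgg2' heq2
    have := Finset.card_le_card_of_injOn _ hmap hinj2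
    calc G.card ≤ (DL ×ˢ Finset.Icc 1 (leavesCount T + 1)).card := this
      _ = DL.card * (Finset.Icc 1 (leavesCount T + 1)).card := Finset.card_product _ _
      _ = DL.card * (leavesCount T + 1) := by rw [Nat.card_Icc, Nat.add_sub_cancel]
  -- cover
  have hcover : Finset.Icc 1 K ⊆ (G ∪ B) ∪ {K} := by
    intro i hi
    rw [Finset.mem_Icc] at hi
    simp only [Finset.mem_union, Finset.mem_singleton]
    by_cases hiK : i = K
    · right; exact hiK
    left
    by_cases hgood : ReflTransGen T (p i) (u2v i)
    · left
      rw [hG, Finset.mem_filter, Finset.mem_Icc]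
      exact ⟨⟨hi.1, by omega⟩, hgood⟩
    · right
      rw [hB, Finset.mem_filter, Finset.mem_Icc]
      exact ⟨⟨hi.1, hi.2⟩, hbadmem i hi.1 hi.2 hgood⟩
  have hKcard : K ≤ G.card + B.card + 1 := by
    have h1 : (Finset.Icc 1 K).card = K := by
      rw [Nat.card_Icc]
      omega
    calc K = (Finset.Icc 1 K).card := h1.symm
      _ ≤ ((G ∪ B) ∪ {K}).card := Finset.card_le_card hcover
      _ ≤ (G ∪ B).card + ({K} : Finset ℕ).card := Finset.card_union_le _ _
      _ ≤ G.card + B.card + 1 := by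
          have := Finset.card_union_le G B
          rw [Finset.card_singleton]
          omega
  -- assemble
  have hfin1 : G.card ≤ (B.card + 1) * ((leavesCount T + 1) * (leavesCount T + 1)) := by
    calc G.card ≤ DL.card * (leavesCount T + 1) := hGcard
      _ ≤ (RT.card * (leavesCount T + 1)) * (leavesCount T + 1) := Nat.mul_le_mul_right _ hDLcard
      _ ≤ ((B.card + 1) * (leavesCount T + 1)) * (leavesCount T + 1) :=
        Nat.mul_le_mul_right _ (Nat.mul_le_mul_right _ hRTcard)
      _ = (B.card + 1) * ((leavesCount T + 1) * (leavesCount T + 1)) := by ring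
  have hexp : (B.card + 1) * ((leavesCount T + 1)^2 + 1) + 1
      = (B.card + 1) * ((leavesCount T + 1) * (leavesCount T + 1)) + B.card + 2 := by
    ring
  rw [hexp]
  omega

end PathBound

section Extend

variable {V : Type*} [Fintype V] [Nonempty V] {A : V → V → Prop}

lemma crossing (hsc : ∀ u v : V, Relation.ReflTransGen A u v) (S : Set V) (s0 : V)
    (hs0 : s0 ∈ S) (y : V) (hy : y ∉ S) : ∃ x ∈ S, ∃ y', y' ∉ S ∧ A x y' := by
  have key : ∀ v, ReflTransGen A s0 v → v ∈ S ∨ ∃ x ∈ S, ∃ y', y' ∉ S ∧ A x y' := by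
    intro v hv
    induction hv with
    | refl => exact Or.inl hs0
    | @tail b c hb hbc ih =>
      rcases ih with hbS | hex
      · by_cases hcS : c ∈ S
        · exact Or.inl hcS
        · exact Or.inr ⟨b, hbS, c, hcS, hbc⟩
      · exact Or.inr hex
  rcases key y (hsc s0 y) with h | h
  · exact absurd h hy
  · exact h

lemma outTree_univ {r₀ : V} {T₀ : V → V → Prop} (hOT : IsOutTree A Set.univ r₀ T₀) :
    ∃ (r' : V) (T' : V → V → Prop), IsOutBranching A r' T' ∧
      treeLeaves Set.univ T₀ ≤ leavesCount T' := by
  obtain ⟨hrS, harc, hroot, huniq, hreach⟩ := hOT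
  refine ⟨r₀, T₀, ⟨fun a b h => (harc a b h).1, hroot,
    fun v hv => huniq v (Set.mem_univ v) hv, fun v => hreach v (Set.mem_univ v)⟩, ?_⟩
  rw [treeLeaves, leavesCount]
  apply Set.ncard_le_ncard _ (Set.toFinite _)
  rintro v ⟨-, hv⟩
  exact hv

lemma extend_aux (hsc : ∀ u v : V, Relation.ReflTransGen A u v) :
    ∀ (n : ℕ) (S : Set V) (r₀ : V) (T₀ : V → V → Prop),
    (Set.univ \ S).ncard ≤ n → IsOutTree A S r₀ T₀ →
    ∃ (r' : V) (T' : V → V → Prop), IsOutBranching A r' T' ∧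
      treeLeaves S T₀ ≤ leavesCount T' := by
  intro n
  induction n with
  | zero =>
    intro S r₀ T₀ hcard hOT
    have hS : S = Set.univ := by
      have h0 : (Set.univ \ S).ncard = 0 := by omega
      have h1 : (Set.univ \ S) = ∅ := (Set.ncard_eq_zero (Set.toFinite _)).mp h0
      have h2 : Set.univ ⊆ S := Set.diff_eq_empty.mp h1
      exact Set.eq_univ_of_univ_subset h2
    subst hS
    exact outTree_univ hOT
  | succ n ih =>
    intro S r₀ T₀ hcard hOT
    by_cases hSuniv : S = Set.univ
    · subst hSuniv
      exact outTree_univ hOT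
    · have hyex : ∃ y, y ∉ S := by
        by_contra hc
        push_neg at hc
        exact hSuniv (Set.eq_univ_of_forall hc)
      obtain ⟨y, hy⟩ := hyex
      obtain ⟨hrS, harc, hroot, huniq, hreach⟩ := hOT
      obtain ⟨x, hxS, y', hy'S, hxy⟩ := crossing hsc S r₀ hrS y hy
      have hOT₁ : IsOutTree A (insert y' S) r₀ (fun a b => T₀ a b ∨ (a = x ∧ b = y')) := by
        refine ⟨Set.mem_insert_of_mem _ hrS, ?_, ?_, ?_, ?_⟩
        · rintro a b (h | ⟨rfl, rfl⟩)
          · exact ⟨(harc a b h).1, Set.mem_insert_of_mem _ (harc a b h).2.1,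
              Set.mem_insert_of_mem _ (harc a b h).2.2⟩
          · exact ⟨hxy, Set.mem_insert_of_mem _ hxS, Set.mem_insert _ _⟩
        · rintro u (h | ⟨rfl, heq⟩)
          · exact hroot u h
          · rw [← heq] at hy'S
            exact hy'S hrS
        · intro v hv hvr
          rcases Set.mem_insert_iff.mp hv with rfl | hvS
          · refine ⟨x, Or.inr ⟨rfl, rfl⟩, ?_⟩
            rintro u (h | ⟨rfl, -⟩)
            · exact absurd (harc u v h).2.2 hy'S
            · rfl
          · obtain ⟨u, hu, hun⟩ := huniq v hvS hvr
            refine ⟨u, Or.inl hu, ?_⟩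
            rintro u' (h | ⟨rfl, heq⟩)
            · exact hun u' h
            · rw [heq] at hvS
              exact absurd hvS hy'S
        · intro v hv
          rcases Set.mem_insert_iff.mp hv with rfl | hvS
          · exact (Relation.ReflTransGen.mono (fun a b h => Or.inl h) _ _ (hreach x hxS)).tail (Or.inr ⟨rfl, rfl⟩)
          · exact Relation.ReflTransGen.mono (fun a b h => Or.inl h) _ _ (hreach v hvS)
      have hleaves : treeLeaves S T₀ ≤
          treeLeaves (insert y' S) (fun a b => T₀ a b ∨ (a = x ∧ b = y')) := by
        rw [treeLeaves, treeLeaves]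
        have hsub : (({v | v ∈ S ∧ ∀ u, ¬ T₀ v u}) \ {x}) ∪ {y'}
            ⊆ {v | v ∈ insert y' S ∧ ∀ u, ¬ (T₀ v u ∨ (v = x ∧ u = y'))} := by
          rintro v (⟨⟨hvS, hvl⟩, hvx⟩ | hv)
          · refine ⟨Set.mem_insert_of_mem _ hvS, ?_⟩
            rintro u (h | ⟨rfl, rfl⟩)
            · exact hvl u h
            · exact hvx rfl
          · rw [Set.mem_singleton_iff.mp hv]
            refine ⟨Set.mem_insert _ _, ?_⟩
            rintro u (h | ⟨h1, h2⟩)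
            · exact hy'S (harc _ _ h).2.1
            · exact hy'S (h1 ▸ hxS)
        have h1 : y' ∉ ({v | v ∈ S ∧ ∀ u, ¬ T₀ v u} \ {x}) := fun hc => hy'S hc.1.1
        have h2 : (({v | v ∈ S ∧ ∀ u, ¬ T₀ v u} \ {x}) ∪ {y'}).ncard
            = ({v | v ∈ S ∧ ∀ u, ¬ T₀ v u} \ {x}).ncard + 1 := by
          rw [Set.union_singleton, Set.ncard_insert_of_notMem h1 (Set.toFinite _)]
        have h3 : {v | v ∈ S ∧ ∀ u, ¬ T₀ v u}.ncard
            ≤ ({v | v ∈ S ∧ ∀ u, ¬ T₀ v u} \ {x}).ncard + 1 := by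
          by_cases hx : x ∈ {v | v ∈ S ∧ ∀ u, ¬ T₀ v u}
          · rw [Set.ncard_diff_singleton_of_mem hx]
            have : 0 < {v | v ∈ S ∧ ∀ u, ¬ T₀ v u}.ncard :=
              (Set.ncard_pos (Set.toFinite _)).mpr ⟨x, hx⟩
            omega
          · rw [Set.diff_singleton_eq_self hx]
            omega
        have h4 := Set.ncard_le_ncard hsub (Set.toFinite _)
        omega
      have hcard' : (Set.univ \ insert y' S).ncard ≤ n := by
        have heq : (Set.univ \ insert y' S) = (Set.univ \ S) \ {y'} := by
          ext z
          simp only [Set.mem_diff, Set.mem_univ, true_and, Set.mem_insert_iff,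
            Set.mem_singleton_iff]
          tauto
        have hy'mem : y' ∈ Set.univ \ S := ⟨trivial, hy'S⟩
        rw [heq, Set.ncard_diff_singleton_of_mem hy'mem]
        have h5 : 0 < (Set.univ \ S).ncard :=
          (Set.ncard_pos (Set.toFinite _)).mpr ⟨y', hy'mem⟩
        omega
      obtain ⟨r', T', hOB, hle⟩ := ih (insert y' S) r₀ _ hcard' hOT₁
      exact ⟨r', T', hOB, le_trans hleaves hle⟩

lemma extend_final (hsc : ∀ u v : V, Relation.ReflTransGen A u v)
    (S : Set V) (r₀ : V) (T₀ : V → V → Prop) (hOT : IsOutTree A S r₀ T₀) :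
    ∃ (r' : V) (T' : V → V → Prop), IsOutBranching A r' T' ∧
      treeLeaves S T₀ ≤ leavesCount T' :=
  extend_aux hsc (Set.univ \ S).ncard S r₀ T₀ le_rfl hOT

end Extend

section FiberPath

variable {V : Type*} [Fintype V] [Nonempty V] {A : V → V → Prop} {r : V} {T : V → V → Prop}

lemma fiber_path (hr : ∀ u, ¬ T u r) (hu : ∀ v, v ≠ r → ∃! u, T u v)
    (hre : ∀ v, Relation.ReflTransGen T r v) (t : V) (ht : t ∈ topsF T r) :
    ∃ (K : ℕ) (p : ℕ → V),
      (fibW T r t).card ≤ K + 1 ∧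
      (∀ j, j ≤ K → (fout T (p j)).card ≤ 1) ∧
      (∀ j, j < K → T (p j) (p (j+1))) ∧
      (∀ j, j ≤ K → p j ∈ fibW T r t) ∧
      (∀ j, j ≤ K → segW T r (p j) = j) := by
  have htW : (fout T t).card ≤ 1 ∧ ¬ contW T r t := by
    simpa [topsF] using ht
  have htfib : t ∈ fibW T r t := by
    simp only [fibW, Finset.mem_filter, Finset.mem_univ, true_and]
    exact ⟨htW.1, top_fix htW.2⟩
  obtain ⟨v, hvfib, hvmax⟩ := Finset.exists_max_image (fibW T r t) (segW T r) ⟨t, htfib⟩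
  set K := segW T r v with hK
  have hchain : ∀ i, i ≤ K → segW T r ((par T)^[i] v) = K - i ∧
      ((par T)^[i] v) ∈ fibW T r t := by
    intro i
    induction i with
    | zero =>
      intro _
      constructor
      · simp [hK]
      · simpa using hvfib
    | succ n ihn =>
      intro hin
      obtain ⟨hseg, hfib⟩ := ihn (by omega)
      have hsegpos : segW T r ((par T)^[n] v) ≠ 0 := by omega
      have hcont : contW T r ((par T)^[n] v) := seg_pos_cont hsegpos
      have hstep := seg_step hr hu hre hcont
      have htop := top_step hr hu hre hcont
      have hfib2 : ((par T)^[n] v) ∈ fibW T r t := hfib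
      simp only [fibW, Finset.mem_filter, Finset.mem_univ, true_and] at hfib2
      have hfib' : par T ((par T)^[n] v) ∈ fibW T r t := by
        simp only [fibW, Finset.mem_filter, Finset.mem_univ, true_and]
        exact ⟨hcont.2, by rw [← htop]; exact hfib2.2⟩
      constructor
      · rw [Function.iterate_succ_apply']
        omega
      · rw [Function.iterate_succ_apply']
        exact hfib'
  have hchEq : ∀ i, i ≤ K → (par T)^[i] v = (ch T)^[K - i] t := by
    intro i hi
    obtain ⟨hseg, hfib⟩ := hchain i hi
    have := chain_eq hr hu hre ((par T)^[i] v)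
    rw [hseg] at this
    simp only [fibW, Finset.mem_filter, Finset.mem_univ, true_and] at hfib
    rw [hfib.2] at this
    exact this
  refine ⟨K, fun j => (par T)^[K - j] v, ?_, ?_, ?_, ?_, ?_⟩
  · -- card bound
    have hsub : fibW T r t ⊆ (Finset.range (K+1)).image (fun j => (par T)^[K - j] v) := by
      intro w hw
      have hw2 := hw
      simp only [fibW, Finset.mem_filter, Finset.mem_univ, true_and] at hw2
      have hwc := chain_eq hr hu hre w
      rw [hw2.2] at hwc
      have hwK : segW T r w ≤ K := hvmax w hw
      rw [Finset.mem_image]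
      refine ⟨segW T r w, Finset.mem_range.mpr (by omega), ?_⟩
      rw [hchEq (K - segW T r w) (by omega), show K - (K - segW T r w) = segW T r w from by
        omega]
      exact hwc.symm
    calc (fibW T r t).card ≤ _ := Finset.card_le_card hsub
      _ ≤ (Finset.range (K+1)).card := Finset.card_image_le
      _ = K + 1 := Finset.card_range _
  · intro j hj
    have := (hchain (K - j) (by omega)).2
    simp only [fibW, Finset.mem_filter, Finset.mem_univ, true_and] at this
    exact this.1
  · intro j hj
    have h1 : K - j = (K - (j+1)) + 1 := by omega
    have hseg := (hchain (K - (j+1)) (by omega)).1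
    have hsegpos : segW T r ((par T)^[K - (j+1)] v) ≠ 0 := by omega
    have hcont : contW T r ((par T)^[K - (j+1)] v) := seg_pos_cont hsegpos
    have harc : T (par T ((par T)^[K - (j+1)] v)) ((par T)^[K - (j+1)] v) :=
      par_spec hu hcont.1
    have h2 : (par T)^[K - j] v = par T ((par T)^[K - (j+1)] v) := by
      rw [h1, Function.iterate_succ_apply']
    show T ((par T)^[K - j] v) ((par T)^[K - (j+1)] v)
    rw [h2]
    exact harc
  · intro j hj
    exact (hchain (K - j) (by omega)).2
  · intro j hj
    have h9 := (hchain (K - j) (by omega)).1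
    show segW T r ((par T)^[K - j] v) = j
    rw [h9]
    omega

end FiberPath
end Stmt6

open Stmt6

/-- Every strongly connected oriented graph on `n` vertices with minimum in-degree at least 2
has an out-branching with at least `(n/4)^(1/3) - 1` leaves. -/
theorem stmt_6 {V : Type*} [Fintype V] [Nonempty V] (A : V → V → Prop)
    (horient : ∀ u v : V, A u v → ¬ A v u)
    (hindeg : ∀ v : V, 2 ≤ {u : V | A u v}.ncard)
    (hsc : ∀ u v : V, Relation.ReflTransGen A u v) :
    ∃ (r : V) (T : V → V → Prop), IsOutBranching A r T ∧
      ((Fintype.card V : ℝ) / 4) ^ ((1 : ℝ) / 3) - 1 ≤ (leavesCount T : ℝ) := by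
  classical
  have hex : ∃ (r' : V) (T' : V → V → Prop), IsOutBranching A r' T' := by
    have hOT0 : IsOutTree A {Classical.arbitrary V} (Classical.arbitrary V)
        (fun _ _ => False) := by
      refine ⟨rfl, ?_, ?_, ?_, ?_⟩
      · intro u v h; exact h.elim
      · intro u h; exact h
      · intro v hv hne; exact absurd (Set.mem_singleton_iff.mp hv) hne
      · intro v hv; rw [Set.mem_singleton_iff.mp hv]
    obtain ⟨r', T', hOB, -⟩ := extend_final hsc _ _ _ hOT0
    exact ⟨r', T', hOB⟩
  set LS : Set ℕ :=
    {m | ∃ (r : V) (T : V → V → Prop), IsOutBranching A r T ∧ leavesCount T = m} with hLS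
  have hLSne : LS.Nonempty := by
    obtain ⟨r', T', h⟩ := hex
    exact ⟨leavesCount T', r', T', h, rfl⟩
  have hbdd : BddAbove LS := by
    refine ⟨Fintype.card V, ?_⟩
    rintro m ⟨r', T', -, rfl⟩
    rw [leavesCount]
    calc {v : V | ∀ u, ¬ T' v u}.ncard ≤ (Set.univ : Set V).ncard :=
          Set.ncard_le_ncard (Set.subset_univ _) (Set.toFinite _)
      _ = Fintype.card V := by rw [Set.ncard_univ]; exact Nat.card_eq_fintype_card
  obtain ⟨r, T, hOB, hlc⟩ := Nat.sSup_mem hLSne hbdd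
  refine ⟨r, T, hOB, ?_⟩
  obtain ⟨hA, hr, hu, hre⟩ := hOB
  have hmaxT : ∀ (T' : V → V → Prop), IsOutBranching A r T' →
      leavesCount T' ≤ leavesCount T := by
    intro T' h
    calc leavesCount T' ≤ sSup LS := le_csSup hbdd ⟨r, T', h, rfl⟩
      _ = leavesCount T := hlc.symm
  have hcap : ∀ (S : Set V) (ρ : V) (NT : V → V → Prop), IsOutTree A S ρ NT →
      treeLeaves S NT ≤ leavesCount T := by
    intro S ρ NT hOT
    obtain ⟨r', T', hOB', hle⟩ := extend_final hsc S ρ NT hOT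
    calc treeLeaves S NT ≤ leavesCount T' := hle
      _ ≤ sSup LS := le_csSup hbdd ⟨r', T', hOB', rfl⟩
      _ = leavesCount T := hlc.symm
  by_contra hcon
  push_neg at hcon
  have hl1 : 1 ≤ leavesCount T := leaves_pos hr hu hre
  have hlcard : 4 * (leavesCount T + 1)^3 < Fintype.card V := by
    have h1 : (leavesCount T : ℝ) + 1 < ((Fintype.card V : ℝ)/4) ^ ((1:ℝ)/3) := by
      linarith [hcon]
    have hnn : (0:ℝ) ≤ (Fintype.card V : ℝ)/4 := by positivity
    have h2 : ((leavesCount T : ℝ) + 1)^(3:ℕ)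
        < (((Fintype.card V : ℝ)/4) ^ ((1:ℝ)/3))^(3:ℕ) := by
      apply pow_lt_pow_left₀ h1 (by positivity)
      norm_num
    have h3 : (((Fintype.card V : ℝ)/4) ^ ((1:ℝ)/3))^(3:ℕ) = (Fintype.card V : ℝ)/4 := by
      rw [← Real.rpow_natCast (((Fintype.card V : ℝ)/4) ^ ((1:ℝ)/3)) 3,
        ← Real.rpow_mul hnn]
      norm_num
    rw [h3] at h2
    have h5 : ((4 * (leavesCount T + 1) ^ 3 : ℕ) : ℝ) < ((Fintype.card V : ℕ) : ℝ) := by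
      push_cast
      linarith
    exact_mod_cast h5
  have hpertop : ∀ t ∈ topsF T r, (fibW T r t).card ≤
      (((Finset.univ.filter (fun v : V => v ∈ BADV A T r)) ∩ fibW T r t).card + 1)
        * ((leavesCount T + 1)^2 + 1) + 1 := by
    intro t ht
    obtain ⟨K, p, hc1, hc2, hc3, hc4, hc5⟩ := fiber_path hr hu hre t ht
    have hquant := path_bound hA hr hu hre horient hindeg hcap p K hc2 hc3
    have hBle : ((Finset.Icc 1 K).filter (fun i => p i ∈ BADV A T r)).card ≤
        ((Finset.univ.filter (fun v : V => v ∈ BADV A T r)) ∩ fibW T r t).card := by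
      apply Finset.card_le_card_of_injOn p
      · intro i hi
        rw [Finset.mem_coe, Finset.mem_filter, Finset.mem_Icc] at hi
        rw [Finset.mem_coe, Finset.mem_inter, Finset.mem_filter]
        exact ⟨⟨Finset.mem_univ _, hi.2⟩, hc4 i (by omega)⟩
      · intro i hi j hj heq
        rw [Finset.mem_coe, Finset.mem_filter, Finset.mem_Icc] at hi hj
        have e1 := hc5 i (by omega)
        have e2 := hc5 j (by omega)
        rw [← e1, heq, e2]
    calc (fibW T r t).card ≤ K + 1 := hc1
      _ ≤ (((Finset.Icc 1 K).filter (fun i => p i ∈ BADV A T r)).card + 1)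
          * ((leavesCount T + 1)^2 + 1) + 1 := hquant
      _ ≤ _ := by
          apply Nat.add_le_add_right
          apply Nat.mul_le_mul_right
          omega
  have hsum : (Finset.univ.filter (fun v : V => (fout T v).card ≤ 1)).card ≤
      (Finset.univ.filter (fun v : V => v ∈ BADV A T r)).card * ((leavesCount T + 1)^2 + 1)
        + (topsF T r).card * (((leavesCount T + 1)^2 + 1) + 1) := by
    rw [fib_partition hr hu hre]
    have step1 : ∑ t ∈ topsF T r, (fibW T r t).card ≤
        ∑ t ∈ topsF T r,
          ((((Finset.univ.filter (fun v : V => v ∈ BADV A T r)) ∩ fibW T r t).card + 1)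
            * ((leavesCount T + 1)^2 + 1) + 1) := Finset.sum_le_sum hpertop
    have step2 : ∑ t ∈ topsF T r,
        ((((Finset.univ.filter (fun v : V => v ∈ BADV A T r)) ∩ fibW T r t).card + 1)
          * ((leavesCount T + 1)^2 + 1) + 1)
        = (∑ t ∈ topsF T r,
            ((Finset.univ.filter (fun v : V => v ∈ BADV A T r)) ∩ fibW T r t).card)
              * ((leavesCount T + 1)^2 + 1)
          + (topsF T r).card * (((leavesCount T + 1)^2 + 1) + 1) := by
      have e : ∀ t ∈ topsF T r,
          (((Finset.univ.filter (fun v : V => v ∈ BADV A T r)) ∩ fibW T r t).card + 1)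
            * ((leavesCount T + 1)^2 + 1) + 1
          = ((Finset.univ.filter (fun v : V => v ∈ BADV A T r)) ∩ fibW T r t).card
              * ((leavesCount T + 1)^2 + 1) + (((leavesCount T + 1)^2 + 1) + 1) := by
        intro t _
        ring
      rw [Finset.sum_congr rfl e, Finset.sum_add_distrib, ← Finset.sum_mul,
        Finset.sum_const, smul_eq_mul]
    have step3 : ∑ t ∈ topsF T r,
        ((Finset.univ.filter (fun v : V => v ∈ BADV A T r)) ∩ fibW T r t).card ≤
        (Finset.univ.filter (fun v : V => v ∈ BADV A T r)).card := by
      have hdisj : ∀ x ∈ topsF T r, ∀ y ∈ topsF T r, x ≠ y →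
          Disjoint ((Finset.univ.filter (fun v : V => v ∈ BADV A T r)) ∩ fibW T r x)
            ((Finset.univ.filter (fun v : V => v ∈ BADV A T r)) ∩ fibW T r y) := by
        intro x _ y _ hxy
        rw [Finset.disjoint_left]
        intro z hzx hzy
        rw [Finset.mem_inter] at hzx hzy
        have h1 := hzx.2
        have h2 := hzy.2
        simp only [fibW, Finset.mem_filter, Finset.mem_univ, true_and] at h1 h2
        exact hxy (h1.2 ▸ h2.2)
      rw [← Finset.card_biUnion hdisj]
      apply Finset.card_le_card
      intro z hz
      rw [Finset.mem_biUnion] at hz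
      obtain ⟨t, -, hzt⟩ := hz
      exact (Finset.mem_inter.mp hzt).1
    calc ∑ t ∈ topsF T r, (fibW T r t).card ≤ _ := step1
      _ = _ := step2
      _ ≤ _ := by
          apply Nat.add_le_add_right
          exact Nat.mul_le_mul_right _ step3
  have hcompl : Fintype.card V ≤
      (Finset.univ.filter (fun v : V => (fout T v).card ≤ 1)).card + leavesCount T := by
    have h1 := Finset.card_filter_add_card_filter_not
      (s := (Finset.univ : Finset V)) (p := fun v => (fout T v).card ≤ 1)
    have h2 : Finset.univ.filter (fun v : V => ¬ ((fout T v).card ≤ 1)) = B2 T := by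
      unfold B2
      apply Finset.filter_congr
      intro v _
      constructor
      · intro h
        omega
      · intro h
        omega
    have h3 := B2_card_le hr hu hre
    rw [h2] at h1
    rw [Finset.card_univ] at h1
    omega
  have hBAD : (Finset.univ.filter (fun v : V => v ∈ BADV A T r)).card ≤ leavesCount T := by
    have h1 : {v : V | v ∈ BADV A T r}.ncard =
        (Finset.univ.filter (fun v : V => v ∈ BADV A T r)).card := ncard_filter _
    have h2 : {v : V | v ∈ BADV A T r} = BADV A T r := Set.setOf_mem_eq
    rw [h2] at h1
    rw [← h1]
    exact BADV_card hA hr hu hre hindeg hmaxT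
  have htops := topsF_card hr hu hre
  -- final arithmetic
  set n := Fintype.card V with hn
  set l := leavesCount T with hldef
  set W := (Finset.univ.filter (fun v : V => (fout T v).card ≤ 1)).card with hW
  set BC := (Finset.univ.filter (fun v : V => v ∈ BADV A T r)).card with hBC
  set P := (topsF T r).card with hP
  have k1 : W ≤ l * ((l + 1)^2 + 1) + P * (((l + 1)^2 + 1) + 1) := by
    calc W ≤ BC * ((l + 1)^2 + 1) + P * (((l + 1)^2 + 1) + 1) := hsum
      _ ≤ l * ((l + 1)^2 + 1) + P * (((l + 1)^2 + 1) + 1) := by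
          apply Nat.add_le_add_right
          exact Nat.mul_le_mul_right _ hBAD
  have k2 : P * (((l + 1)^2 + 1) + 1) + (((l + 1)^2 + 1) + 1)
      ≤ 2 * l * (((l + 1)^2 + 1) + 1) := by
    have : P + 1 ≤ 2 * l := htops
    calc P * (((l + 1)^2 + 1) + 1) + (((l + 1)^2 + 1) + 1)
        = (P + 1) * (((l + 1)^2 + 1) + 1) := by ring
      _ ≤ 2 * l * (((l + 1)^2 + 1) + 1) := Nat.mul_le_mul_right _ this
  have k3 : 4 * (l + 1)^3 < n := hlcard
  have k4 : n ≤ W + l := hcompl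
  nlinarith [k1, k2, k3, k4, hl1, sq_nonneg l, sq_nonneg (l+1)]
end

section
/- For any finite undirected graph G, the vertex separation number of G equals the pathwidth of G. -/
open Relation

lemma vs_to_pw {V : Type*} [Fintype V] (G : SimpleGraph V) (k : ℕ)
    (h : vsLE G k) : pwLE G k := by
  classical
  obtain ⟨σ, hσ⟩ := h
  set X : Fin (Fintype.card V) → Finset V := fun j => insert (σ j)
    ((Finset.univ.filter (fun i : Fin (Fintype.card V) => i < j ∧ ∃ i', j ≤ i' ∧ G.Adj (σ i) (σ i'))).image σ)
    with hX
  have hmem : ∀ (v : V) (j : Fin (Fintype.card V)), v ∈ X j ↔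
      σ.symm v = j ∨ (σ.symm v < j ∧ ∃ i', j ≤ i' ∧ G.Adj v (σ i')) := by
    intro v j
    simp only [hX, Finset.mem_insert, Finset.mem_image, Finset.mem_filter, Finset.mem_univ,
      true_and]
    constructor
    · rintro (rfl | ⟨i, ⟨h1, i', h2, h3⟩, rfl⟩)
      · left; simp
      · right; simpa using ⟨h1, i', h2, h3⟩
    · rintro (h1 | ⟨h1, i', h2, h3⟩)
      · left; rw [← h1]; simp
      · right; exact ⟨σ.symm v, ⟨h1, i', h2, by simpa using h3⟩, by simp⟩
  refine ⟨Fintype.card V, X, ?_, ?_, ?_, ?_⟩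
  · intro v
    exact ⟨σ.symm v, by rw [hmem]; left; rfl⟩
  · intro u v huv
    have hne : σ.symm u ≠ σ.symm v := fun h => huv.ne (by simpa using congrArg σ h)
    rcases lt_or_gt_of_ne hne with hlt | hlt
    · refine ⟨σ.symm v, ?_, ?_⟩
      · rw [hmem]; right; exact ⟨hlt, σ.symm v, le_refl _, by simpa using huv⟩
      · rw [hmem]; left; rfl
    · refine ⟨σ.symm u, ?_, ?_⟩
      · rw [hmem]; left; rfl
      · rw [hmem]; right; exact ⟨hlt, σ.symm u, le_refl _, by simpa using huv.symm⟩
  · intro i j l hij hjl v hvi hvl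
    rw [hmem] at hvi hvl ⊢
    rcases hvi with h1 | ⟨h1, _⟩
    · -- σ.symm v = i ≤ j
      by_cases hvj : σ.symm v = j
      · exact Or.inl hvj
      · have hlt : σ.symm v < j := lt_of_le_of_ne (h1 ▸ hij) hvj
        rcases hvl with h2 | ⟨h2, i', h3, h4⟩
        · exact absurd (h2 ▸ hjl) (not_le_of_gt hlt)
        · exact Or.inr ⟨hlt, i', le_trans hjl h3, h4⟩
    · by_cases hvj : σ.symm v = j
      · exact Or.inl hvj
      · have hlt : σ.symm v < j := lt_of_le_of_ne (le_of_lt (lt_of_lt_of_le h1 hij)) hvj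
        rcases hvl with h2 | ⟨h2, i', h3, h4⟩
        · exact absurd (h2 ▸ hjl) (not_le_of_gt hlt)
        · exact Or.inr ⟨hlt, i', le_trans hjl h3, h4⟩
  · intro j
    refine le_trans (Finset.card_insert_le _ _) ?_
    have hle : ((Finset.univ.filter (fun i : Fin (Fintype.card V) => i < j ∧ ∃ i', j ≤ i' ∧
        G.Adj (σ i) (σ i'))).image σ).card ≤ k := by
      refine le_trans (Finset.card_image_le) ?_
      by_cases hj0 : j.val = 0
      · have : (Finset.univ.filter (fun i : Fin (Fintype.card V) => i < j ∧ ∃ i', j ≤ i' ∧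
            G.Adj (σ i) (σ i'))) = ∅ := by
          ext i; simp only [Finset.mem_filter, Finset.mem_univ, true_and, Finset.notMem_empty,
            iff_false, not_and]
          intro hi; exact absurd (Fin.lt_def.mp hi) (by omega)
        simp [this]
      · set j' : Fin (Fintype.card V) := ⟨j.val - 1, by omega⟩ with hj'
        have heq : ((Finset.univ.filter (fun i : Fin (Fintype.card V) => i < j ∧ ∃ i', j ≤ i' ∧
            G.Adj (σ i) (σ i'))) : Finset (Fin (Fintype.card V))).card
            = {i : Fin (Fintype.card V) | i ≤ j' ∧ ∃ i', j' < i' ∧ G.Adj (σ i) (σ i')}.ncard := by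
          rw [← Set.ncard_coe_finset]
          congr 1
          ext i
          simp only [Finset.coe_filter, Finset.mem_univ, true_and, Set.mem_setOf_eq]
          constructor
          · rintro ⟨h1, i', h2, h3⟩
            have ha := Fin.lt_def.mp h1
            have hb := Fin.le_def.mp h2
            exact ⟨Fin.le_def.mpr (show i.val ≤ j.val - 1 by omega),
              i', Fin.lt_def.mpr (show j.val - 1 < i'.val by omega), h3⟩
          · rintro ⟨h1, i', h2, h3⟩
            have ha : i.val ≤ j.val - 1 := Fin.le_def.mp h1
            have hb : j.val - 1 < i'.val := Fin.lt_def.mp h2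
            exact ⟨Fin.lt_def.mpr (by omega),
              i', Fin.le_def.mpr (by omega), h3⟩
        rw [heq]
        exact hσ j'
    omega

lemma pw_to_vs {V : Type*} [Fintype V] (G : SimpleGraph V) (k : ℕ)
    (h : pwLE G k) : vsLE G k := by
  classical
  obtain ⟨s, X, hcov, hedge, hint, hcard⟩ := h
  set e := Fintype.equivFin V with he
  have hfex : ∀ v : V, (Finset.univ.filter (fun i => v ∈ X i)).Nonempty := by
    intro v; obtain ⟨i, hi⟩ := hcov v; exact ⟨i, by simp [hi]⟩
  set f : V → Fin s := fun v => (Finset.univ.filter (fun i => v ∈ X i)).min' (hfex v) with hf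
  have hfmem : ∀ v, v ∈ X (f v) := by
    intro v
    have := Finset.min'_mem _ (hfex v)
    simpa [hf] using this
  have hfmin : ∀ (v : V) (i : Fin s), v ∈ X i → f v ≤ i := by
    intro v i hi
    exact Finset.min'_le _ _ (by simp [hi])
  set g : Fin (Fintype.card V) → Fin s := fun i => f (e.symm i) with hg
  set π := Tuple.sort g with hπ
  set σ : Fin (Fintype.card V) ≃ V := π.trans e.symm with hσd
  have hmono : Monotone (fun i => f (σ i)) := Tuple.monotone_sort g
  refine ⟨σ, fun j => ?_⟩
  by_cases hnext : ∃ i' : Fin (Fintype.card V), j < i'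
  · obtain ⟨i0, hi0⟩ := hnext
    have hj1 : j.val + 1 < Fintype.card V := lt_of_le_of_lt (Fin.lt_def.mp hi0) i0.isLt
    set j₁ : Fin (Fintype.card V) := ⟨j.val + 1, hj1⟩ with hj₁
    have hj₁v : (j₁ : ℕ) = j.val + 1 := rfl
    set t := f (σ j₁) with ht
    set S := {i : Fin (Fintype.card V) | i ≤ j ∧ ∃ i', j < i' ∧ G.Adj (σ i) (σ i')} with hS
    have hsub : σ '' S ⊆ ((X t).erase (σ j₁) : Finset V) := by
      rintro _ ⟨i, ⟨hij, i', hji', hadj⟩, rfl⟩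
      have hne : σ i ≠ σ j₁ := by
        intro hcon
        have hc : i = j₁ := σ.injective hcon
        have h1 := Fin.le_def.mp hij
        rw [hc] at h1
        omega
      have hfi : f (σ i) ≤ t := hmono (le_trans hij (Fin.le_def.mpr (by omega)))
      have hi'ge : j₁ ≤ i' := Fin.le_def.mpr (by have := Fin.lt_def.mp hji'; omega)
      have hfi' : t ≤ f (σ i') := hmono hi'ge
      obtain ⟨m, hum, hvm⟩ := hedge _ _ hadj
      have htm : t ≤ m := le_trans hfi' (hfmin _ _ hvm)
      have : σ i ∈ X t := hint (f (σ i)) t m hfi htm (σ i) (hfmem _) hum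
      simp [Finset.mem_erase, hne, this]
    have hcard' : ((X t).erase (σ j₁)).card ≤ k := by
      have h1 : ((X t).erase (σ j₁)).card = (X t).card - 1 :=
        Finset.card_erase_of_mem (hfmem (σ j₁))
      have h2 := hcard t
      have h3 : 1 ≤ (X t).card := Finset.card_pos.mpr ⟨σ j₁, hfmem (σ j₁)⟩
      omega
    calc S.ncard = (σ '' S).ncard := (Set.ncard_image_of_injective S σ.injective).symm
      _ ≤ (((X t).erase (σ j₁) : Finset V) : Set V).ncard :=
          Set.ncard_le_ncard hsub (Finset.finite_toSet _)
      _ = ((X t).erase (σ j₁)).card := Set.ncard_coe_finset _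
      _ ≤ k := hcard'
  · have : {i : Fin (Fintype.card V) | i ≤ j ∧ ∃ i', j < i' ∧ G.Adj (σ i) (σ i')} = ∅ := by
      ext i
      simp only [Set.mem_setOf_eq, Set.mem_empty_iff_false, iff_false, not_and]
      rintro _ ⟨i', hi', _⟩
      exact hnext ⟨i', hi'⟩
    simp [this]


/-- For any finite graph, the vertex separation number equals the pathwidth. -/
theorem stmt_9 {V : Type*} [Fintype V] (G : SimpleGraph V) :
    sInf {k : ℕ | vsLE G k} = sInf {k : ℕ | pwLE G k} := by
  congr 1
  ext k
  exact ⟨vs_to_pw G k, pw_to_vs G k⟩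
end
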